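/- arXiv:2411.19183 — 8 statements merged into one kernel-verified Lean document; each statement's English description precedes it below -/
import Mathlib

section
/- Let P be a rational polygon in ℝ² and H = {v : u·v ≥ h} a half-space with u a primitive integral dual vector and h ∈ ℤ. If P contains a lattice point in the interior of H and also contains a lattice segment of lattice length 1 in the boundary hyperplane {v : u·v = h}, then P contains a lattice point on the hyperplane {v : u·v = h+1}. -/
open Set

/-- The lattice ℤ² inside ℝ². -/
def latt : Set (ℝ × ℝ) := {p | ∃ m n : ℤ, p = ((m : ℝ), (n : ℝ))}

/-- Kernel of a primitive dual vector: an integer vector orthogonal to a coprime pair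
`(u1, u2)` is an integer multiple of `(-u2, u1)`. -/
lemma ker_prim (u1 u2 w1 w2 : ℤ) (hu : IsCoprime u1 u2)
    (hw : u1 * w1 + u2 * w2 = 0) : ∃ t : ℤ, w1 = -t * u2 ∧ w2 = t * u1 := by
  obtain ⟨x, y, hxy⟩ := hu
  refine ⟨x * w2 - y * w1, ?_, ?_⟩
  · linear_combination -w1 * hxy + x * hw
  · linear_combination -w2 * hxy + y * hw

/-- if a rational polygon `P` contains a lattice point strictly inside the
half-space `u·x ≥ h` and a lattice segment of lattice length 1 on the hyperplane `u·x = h`,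
then it contains a lattice point on the hyperplane `u·x = h+1`. -/
theorem stmt_1 (P : Set (ℝ × ℝ))
    (hP : ∃ V : Finset (ℝ × ℝ),
      (∀ p ∈ V, ∃ q₁ q₂ : ℚ, p = ((q₁ : ℝ), (q₂ : ℝ))) ∧ P = convexHull ℝ (V : Set (ℝ × ℝ)))
    (h2d : (interior P).Nonempty)
    (u : ℤ × ℤ) (hu : IsCoprime u.1 u.2) (h : ℤ)
    (hint : ∃ z : ℤ × ℤ, ((z.1 : ℝ), (z.2 : ℝ)) ∈ P ∧ h < u.1 * z.1 + u.2 * z.2)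
    (hseg : ∃ a b : ℤ × ℤ, a ≠ b ∧
      u.1 * a.1 + u.2 * a.2 = h ∧ u.1 * b.1 + u.2 * b.2 = h ∧
      segment ℝ ((a.1 : ℝ), (a.2 : ℝ)) ((b.1 : ℝ), (b.2 : ℝ)) ⊆ P ∧
      (∀ c : ℤ × ℤ,
        ((c.1 : ℝ), (c.2 : ℝ)) ∈ segment ℝ ((a.1 : ℝ), (a.2 : ℝ)) ((b.1 : ℝ), (b.2 : ℝ)) →
        c = a ∨ c = b)) :
    ∃ c : ℤ × ℤ, ((c.1 : ℝ), (c.2 : ℝ)) ∈ P ∧ u.1 * c.1 + u.2 * c.2 = h + 1 := by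
  obtain ⟨V, -, hPV⟩ := hP
  have hconv : Convex ℝ P := hPV ▸ convex_convexHull ℝ _
  obtain ⟨z, hzP, hz⟩ := hint
  obtain ⟨a, b, hab, hua, hub, hsub, honly⟩ := hseg
  have haP : ((a.1 : ℝ), (a.2 : ℝ)) ∈ P := hsub (left_mem_segment ℝ _ _)
  have hbP : ((b.1 : ℝ), (b.2 : ℝ)) ∈ P := hsub (right_mem_segment ℝ _ _)
  -- the direction of the segment is orthogonal to u
  have hd : u.1 * (b.1 - a.1) + u.2 * (b.2 - a.2) = 0 := by linarith
  obtain ⟨t, ht1, ht2⟩ := ker_prim u.1 u.2 _ _ hu hd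
  -- lattice length one forces t = ±1
  have htt : t * t = 1 := by
    rcases lt_trichotomy t 0 with htn | ht0 | htp
    · by_contra hne
      have ht2' : t ≤ -2 := by
        rcases eq_or_lt_of_le (show t ≤ -1 by omega) with he | hl
        · exact absurd (by nlinarith : t * t = 1) hne
        · omega
      have htR : (t : ℝ) ≤ -2 := by exact_mod_cast ht2'
      have htR0 : (t : ℝ) ≠ 0 := by exact_mod_cast (by omega : t ≠ 0)
      have hmem : (((a.1 + u.2 : ℤ) : ℝ), ((a.2 - u.1 : ℤ) : ℝ)) ∈
          segment ℝ ((a.1 : ℝ), (a.2 : ℝ)) ((b.1 : ℝ), (b.2 : ℝ)) := by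
        rw [segment_eq_image']
        have htinv : (t : ℝ) * (t : ℝ)⁻¹ = 1 := mul_inv_cancel₀ htR0
        have hineg : (t : ℝ)⁻¹ < 0 := inv_lt_zero.mpr (by linarith)
        refine ⟨-(t : ℝ)⁻¹, ⟨by linarith, ?_⟩, ?_⟩
        · nlinarith [mul_nonneg (by linarith : (0:ℝ) ≤ -((t:ℝ) + 2))
            (by linarith : (0:ℝ) ≤ -(t:ℝ)⁻¹)]
        · have e1 : ((b.1 : ℝ) - a.1) = -(t : ℝ) * u.2 := by exact_mod_cast ht1
          have e2 : ((b.2 : ℝ) - a.2) = (t : ℝ) * u.1 := by exact_mod_cast ht2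
          simp only [Prod.ext_iff, Prod.fst_add, Prod.snd_add, Prod.smul_fst, Prod.smul_snd,
            Prod.fst_sub, Prod.snd_sub, smul_eq_mul]
          constructor
          · push_cast
            linear_combination (-(t:ℝ)⁻¹) * e1 + (u.2 : ℝ) * htinv
          · push_cast
            linear_combination (-(t:ℝ)⁻¹) * e2 - (u.1 : ℝ) * htinv
      rcases honly (a.1 + u.2, a.2 - u.1) hmem with hc | hc
      · have h1 : a.1 + u.2 = a.1 := congrArg Prod.fst hc
        have h2 : a.2 - u.1 = a.2 := congrArg Prod.snd hc
        have e1 : u.1 = 0 := by omega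
        have e2 : u.2 = 0 := by omega
        exact not_isCoprime_zero_zero (by simpa [e1, e2] using hu)
      · have h1 : a.1 + u.2 = b.1 := congrArg Prod.fst hc
        have h2 : a.2 - u.1 = b.2 := congrArg Prod.snd hc
        have e2' : u.2 * (1 + t) = 0 := by linear_combination h1 + ht1
        have e1' : u.1 * (1 + t) = 0 := by linear_combination -h2 - ht2
        have e1 : u.1 = 0 := (mul_eq_zero.mp e1').resolve_right (by omega)
        have e2 : u.2 = 0 := (mul_eq_zero.mp e2').resolve_right (by omega)
        exact not_isCoprime_zero_zero (by simpa [e1, e2] using hu)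
    · exfalso
      subst ht0
      simp only [neg_zero, zero_mul] at ht1 ht2
      exact hab (Prod.ext (by omega) (by omega)).symm
    · by_contra hne
      have ht2' : 2 ≤ t := by
        rcases eq_or_lt_of_le (show 1 ≤ t by omega) with he | hl
        · exact absurd (by nlinarith : t * t = 1) hne
        · omega
      have htR : (2 : ℝ) ≤ (t : ℝ) := by exact_mod_cast ht2'
      have htR0 : (t : ℝ) ≠ 0 := by exact_mod_cast (by omega : t ≠ 0)
      have hmem : (((a.1 - u.2 : ℤ) : ℝ), ((a.2 + u.1 : ℤ) : ℝ)) ∈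
          segment ℝ ((a.1 : ℝ), (a.2 : ℝ)) ((b.1 : ℝ), (b.2 : ℝ)) := by
        rw [segment_eq_image']
        have htinv : (t : ℝ) * (t : ℝ)⁻¹ = 1 := mul_inv_cancel₀ htR0
        have hipos : 0 ≤ (t : ℝ)⁻¹ := inv_nonneg.mpr (by linarith)
        refine ⟨(t : ℝ)⁻¹, ⟨hipos, ?_⟩, ?_⟩
        · nlinarith [mul_nonneg (by linarith : (0:ℝ) ≤ (t:ℝ) - 1) hipos]
        · have e1 : ((b.1 : ℝ) - a.1) = -(t : ℝ) * u.2 := by exact_mod_cast ht1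
          have e2 : ((b.2 : ℝ) - a.2) = (t : ℝ) * u.1 := by exact_mod_cast ht2
          simp only [Prod.ext_iff, Prod.fst_add, Prod.snd_add, Prod.smul_fst, Prod.smul_snd,
            Prod.fst_sub, Prod.snd_sub, smul_eq_mul]
          constructor
          · push_cast
            linear_combination ((t:ℝ)⁻¹) * e1 - (u.2 : ℝ) * htinv
          · push_cast
            linear_combination ((t:ℝ)⁻¹) * e2 + (u.1 : ℝ) * htinv
      rcases honly (a.1 - u.2, a.2 + u.1) hmem with hc | hc
      · have h1 : a.1 - u.2 = a.1 := congrArg Prod.fst hc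
        have h2 : a.2 + u.1 = a.2 := congrArg Prod.snd hc
        have e1 : u.1 = 0 := by omega
        have e2 : u.2 = 0 := by omega
        exact not_isCoprime_zero_zero (by simpa [e1, e2] using hu)
      · have h1 : a.1 - u.2 = b.1 := congrArg Prod.fst hc
        have h2 : a.2 + u.1 = b.2 := congrArg Prod.snd hc
        have e2' : u.2 * (1 - t) = 0 := by linear_combination -h1 - ht1
        have e1' : u.1 * (1 - t) = 0 := by linear_combination h2 + ht2
        have e1 : u.1 = 0 := (mul_eq_zero.mp e1').resolve_right (by omega)
        have e2 : u.2 = 0 := (mul_eq_zero.mp e2').resolve_right (by omega)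
        exact not_isCoprime_zero_zero (by simpa [e1, e2] using hu)
  -- Bezout coefficients
  obtain ⟨x, y, hxy⟩ := id hu
  -- the height of z above the hyperplane
  set m : ℤ := u.1 * z.1 + u.2 * z.2 - h with hm_def
  have hm : 1 ≤ m := by omega
  -- decompose z - a in the lattice basis ((b-a), (x,y))
  have hw0 : u.1 * (z.1 - a.1 - m * x) + u.2 * (z.2 - a.2 - m * y) = 0 := by
    linear_combination -hua - m * hxy - hm_def
  obtain ⟨s, hs1, hs2⟩ := ker_prim u.1 u.2 _ _ hu hw0
  set S : ℤ := s * t with hS_def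
  have hz1 : z.1 - a.1 = m * x + S * (b.1 - a.1) := by
    linear_combination hs1 - (b.1 - a.1) * hS_def - (s * t) * ht1 + (s * u.2) * htt
  have hz2 : z.2 - a.2 = m * y + S * (b.2 - a.2) := by
    linear_combination hs2 - (b.2 - a.2) * hS_def - (s * t) * ht2 - (s * u.1) * htt
  -- the integer k with S ≤ k*m ≤ S + m - 1
  set k : ℤ := (S + m - 1) / m with hk_def
  have hdm := Int.mul_ediv_add_emod (S + m - 1) m
  have hr0 : 0 ≤ (S + m - 1) % m := Int.emod_nonneg _ (by omega)
  have hr1 : (S + m - 1) % m < m := Int.emod_lt_of_pos _ (by omega)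
  have hk1 : S ≤ k * m := by nlinarith [hdm, hr0, hr1]
  have hk2 : k * m ≤ S + m - 1 := by nlinarith [hdm, hr0, hr1]
  -- the lattice point at height h + 1
  refine ⟨(a.1 + k * (b.1 - a.1) + x, a.2 + k * (b.2 - a.2) + y), ?_, ?_⟩
  swap
  · show u.1 * (a.1 + k * (b.1 - a.1) + x) + u.2 * (a.2 + k * (b.2 - a.2) + y) = h + 1
    linear_combination hua + k * hd + hxy
  -- membership in P via a convex combination of a, b, z
  show (((a.1 + k * (b.1 - a.1) + x : ℤ) : ℝ), ((a.2 + k * (b.2 - a.2) + y : ℤ) : ℝ)) ∈ P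
  have hmR : (0 : ℝ) < (m : ℝ) := by exact_mod_cast hm
  set w0 : ℝ := ((m - 1 - k * m + S : ℤ) : ℝ) / (m : ℝ) with hw0_def
  set w1 : ℝ := ((k * m - S : ℤ) : ℝ) / (m : ℝ) with hw1_def
  set w2 : ℝ := 1 / (m : ℝ) with hw2_def
  have hw0n : 0 ≤ w0 :=
    div_nonneg (by exact_mod_cast (by omega : (0:ℤ) ≤ m - 1 - k * m + S)) hmR.le
  have hw1n : 0 ≤ w1 := div_nonneg (by exact_mod_cast (by omega : (0:ℤ) ≤ k * m - S)) hmR.le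
  have hw2n : 0 ≤ w2 := by positivity
  have hnum : ((m - 1 - k * m + S : ℤ) : ℝ) + ((k * m - S : ℤ) : ℝ) + 1 = (m : ℝ) := by
    push_cast; ring
  have hwsum : w0 + w1 + w2 = 1 := by
    rw [hw0_def, hw1_def, hw2_def, ← add_div, ← add_div, hnum,
      div_self hmR.ne']
  have key : (((a.1 + k * (b.1 - a.1) + x : ℤ) : ℝ), ((a.2 + k * (b.2 - a.2) + y : ℤ) : ℝ))
      = w0 • ((a.1 : ℝ), (a.2 : ℝ)) + w1 • ((b.1 : ℝ), (b.2 : ℝ)) + w2 • ((z.1 : ℝ), (z.2 : ℝ)) := by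
    have e1 : (z.1 : ℝ) - a.1 = (m : ℝ) * x + (S : ℝ) * ((b.1 : ℝ) - a.1) := by exact_mod_cast hz1
    have e2 : (z.2 : ℝ) - a.2 = (m : ℝ) * y + (S : ℝ) * ((b.2 : ℝ) - a.2) := by exact_mod_cast hz2
    rw [hw0_def, hw1_def, hw2_def]
    simp only [Prod.ext_iff, Prod.fst_add, Prod.snd_add, Prod.smul_fst, Prod.smul_snd,
      smul_eq_mul]
    constructor
    · push_cast; field_simp; linear_combination -e1
    · push_cast; field_simp; linear_combination -e2
  rw [key]
  have hmem := hconv.sum_mem (t := (Finset.univ : Finset (Fin 3))) (w := ![w0, w1, w2])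
    (z := ![((a.1 : ℝ), (a.2 : ℝ)), ((b.1 : ℝ), (b.2 : ℝ)), ((z.1 : ℝ), (z.2 : ℝ))])
    (by intro i _; fin_cases i <;> assumption)
    (by simp only [Fin.sum_univ_three, Matrix.cons_val_zero, Matrix.cons_val_one,
      Matrix.head_cons, Matrix.cons_val_two, Matrix.tail_cons]; exact hwsum)
    (by intro i _; fin_cases i <;> assumption)
  simpa [Fin.sum_univ_three] using hmem
end

section
/- Let P be a denominator 2 polygon with at least one interior lattice point. Then the number of interior lattice points of 2P satisfies i(2P) ≥ b(P) + 2·i(P) − 1, where b(P) and i(P) are the numbers of boundary and interior lattice points of P. -/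
open Set Pointwise

/-- Number of lattice points on the boundary of `Q`. -/
noncomputable def bcount (Q : Set (ℝ × ℝ)) : ℕ := (frontier Q ∩ latt).ncard

/-- Number of lattice points in the interior of `Q`. -/
noncomputable def icount (Q : Set (ℝ × ℝ)) : ℕ := (interior Q ∩ latt).ncard

/-- A denominator 2 polygon: a two-dimensional polytope all of whose vertices become
lattice points after dilation by 2. -/
def IsDen2 (P : Set (ℝ × ℝ)) : Prop :=
  (∃ V : Finset (ℝ × ℝ), (∀ v ∈ V, (2 : ℝ) • v ∈ latt) ∧
    P = convexHull ℝ (V : Set (ℝ × ℝ))) ∧ (interior P).Nonempty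

/-- A bounded set contains only finitely many lattice points. -/
lemma finite_inter_latt {S : Set (ℝ × ℝ)} (hS : Bornology.IsBounded S) :
    (S ∩ latt).Finite := by
  obtain ⟨C, hC⟩ := hS.exists_norm_le
  apply Set.Finite.subset (Set.Finite.image (f := fun p : ℤ × ℤ => ((p.1 : ℝ), (p.2 : ℝ)))
    (Set.finite_Icc (-⌈C⌉, -⌈C⌉) (⌈C⌉, ⌈C⌉)))
  rintro x ⟨hxS, m, n, rfl⟩
  have hn := hC _ hxS
  rw [Prod.norm_def] at hn
  simp only [Real.norm_eq_abs, sup_le_iff, abs_le] at hn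
  refine ⟨(m, n), ?_, rfl⟩
  simp only [Set.mem_Icc, Prod.mk_le_mk]
  constructor <;> constructor
  · have : (-⌈C⌉ : ℝ) ≤ (m : ℝ) := le_trans (neg_le_neg (Int.le_ceil C)) hn.1.1
    exact_mod_cast this
  · have : (-⌈C⌉ : ℝ) ≤ (n : ℝ) := le_trans (neg_le_neg (Int.le_ceil C)) hn.2.1
    exact_mod_cast this
  · exact_mod_cast le_trans hn.1.2 (Int.le_ceil C)
  · exact_mod_cast le_trans hn.2.2 (Int.le_ceil C)

/-- The lattice is closed under addition. -/
lemma latt_add : ∀ x ∈ latt, ∀ y ∈ latt, x + y ∈ latt := by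
  rintro x ⟨m, n, rfl⟩ y ⟨m', n', rfl⟩
  exact ⟨m + m', n + n', by push_cast; rfl⟩

/-- a denominator 2 polygon with an interior lattice point satisfies
`i(2P) ≥ b(P) + 2·i(P) − 1`. -/
theorem stmt_6 (P : Set (ℝ × ℝ)) (hP : IsDen2 P)
    (hi : (interior P ∩ latt).Nonempty) :
    (bcount P : ℤ) + 2 * (icount P : ℤ) - 1 ≤ (icount ((2 : ℝ) • P) : ℤ) := by
  obtain ⟨⟨V, hV, hPV⟩, -⟩ := hP
  have hPcomp : IsCompact P := hPV ▸ V.finite_toSet.isCompact_convexHull ℝ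
  have hPconv : Convex ℝ P := hPV ▸ convex_convexHull ℝ _
  have hPclosed : IsClosed P := hPcomp.isClosed
  have h2P : (2 : ℝ) • P = P + P := by
    rw [show (2:ℝ) = 1 + 1 by norm_num, hPconv.add_smul zero_le_one zero_le_one, one_smul]
  set A := P ∩ latt with hA
  set B := interior P ∩ latt with hB
  have hAfin : A.Finite := finite_inter_latt hPcomp.isBounded
  have hBfin : B.Finite := hAfin.subset (inter_subset_inter_left _ interior_subset)
  have hTfin : (interior ((2:ℝ) • P) ∩ latt).Finite :=
    finite_inter_latt (((hPcomp.smul (2:ℝ)).isBounded).subset interior_subset)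
  -- the sumset `A + B` lands in the interior lattice points of `2 • P`
  have hsub : A + B ⊆ interior ((2:ℝ) • P) ∩ latt := by
    rintro z hz
    obtain ⟨x, hx, y, hy, rfl⟩ := Set.mem_add.1 hz
    refine ⟨?_, latt_add _ hx.2 _ hy.2⟩
    rw [h2P]
    have hopen : IsOpen (P + interior P) := isOpen_interior.add_left
    exact interior_maximal (Set.add_subset_add_left interior_subset) hopen
      (Set.add_mem_add hx.1 hy.1)
  -- decomposition of A into boundary and interior lattice points
  have hfr : frontier P = P \ interior P := hPclosed.frontier_eq
  have hApart : A = (frontier P ∩ latt) ∪ B := by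
    rw [hfr, hA, hB, ← Set.union_inter_distrib_right, Set.diff_union_of_subset interior_subset]
  have hdisj : Disjoint (frontier P ∩ latt) B := by
    apply Set.disjoint_of_subset (Set.inter_subset_left) (Set.inter_subset_left)
    rw [hfr]
    exact disjoint_sdiff_left
  have hcardA : A.ncard = bcount P + icount P := by
    rw [hApart, Set.ncard_union_eq hdisj (hAfin.subset (hApart ▸ Set.subset_union_left))
      hBfin]
    rfl
  -- Cauchy–Davenport sumset inequality in the torsion-free group ℝ × ℝ
  set sA := hAfin.toFinset with hsA
  set sB := hBfin.toFinset with hsB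
  have hcoe : ((sA + sB : Finset (ℝ×ℝ)) : Set (ℝ×ℝ)) = A + B := by
    rw [Finset.coe_add, hAfin.coe_toFinset, hBfin.coe_toFinset]
  have hcd : sA.card + sB.card - 1 ≤ (sA + sB).card :=
    cauchy_davenport_of_isAddTorsionFree
      (hAfin.toFinset_nonempty.2 (hi.mono (Set.inter_subset_inter_left _ interior_subset)))
      (hBfin.toFinset_nonempty.2 hi)
  have hBpos : 1 ≤ sB.card := Finset.card_pos.2 (hBfin.toFinset_nonempty.2 hi)
  have hle : (sA + sB).card ≤ icount ((2:ℝ) • P) := by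
    have := Set.ncard_le_ncard (hcoe ▸ hsub) hTfin
    rwa [Set.ncard_coe_finset] at this
  have hAc : sA.card = bcount P + icount P := by
    rw [← Set.ncard_eq_toFinset_card A hAfin, hcardA]
  have hBc : sB.card = icount P :=
    (Set.ncard_eq_toFinset_card B hBfin).symm
  omega
end

section
/- Let P be an infinitely growable denominator 2 polygon, i.e. P is affinely unimodularly equivalent to a subset of the strip [0,1] × ℝ. Then P has no interior lattice points, and if additionally 2P has at least one interior lattice point and P has at least one boundary lattice point, then b(2P) ≤ 2·b(P) + 4. -/
open Set Pointwise

/-- An affine unimodular map of the plane: an integral affine map whose linear part is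
in GL₂(ℤ). -/
def Unimod (f : ℝ × ℝ → ℝ × ℝ) : Prop :=
  ∃ a b c d e g : ℤ, (a * d - b * c = 1 ∨ a * d - b * c = -1) ∧
    ∀ p : ℝ × ℝ,
      f p = ((a : ℝ) * p.1 + (b : ℝ) * p.2 + (e : ℝ),
             (c : ℝ) * p.1 + (d : ℝ) * p.2 + (g : ℝ))

lemma latt_mem (m n : ℤ) : ((m:ℝ),(n:ℝ)) ∈ latt := ⟨m, n, rfl⟩

lemma unimod_latt {f : ℝ × ℝ → ℝ × ℝ} (hf : Unimod f) : ∀ p ∈ latt, f p ∈ latt := by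
  obtain ⟨a,b,c,d,e,g,_,hfp⟩ := hf
  rintro p ⟨m,n,rfl⟩
  refine ⟨a*m+b*n+e, c*m+d*n+g, ?_⟩
  rw [hfp]
  simp only [Prod.mk.injEq]
  push_cast
  constructor <;> ring

lemma unimod_inv {f : ℝ × ℝ → ℝ × ℝ} (hf : Unimod f) :
    ∃ f' : ℝ × ℝ → ℝ × ℝ, Unimod f' ∧ (∀ p, f' (f p) = p) ∧ (∀ p, f (f' p) = p) := by
  obtain ⟨a,b,c,d,e,g,hdet,hfp⟩ := hf
  have hδ2 : ((a:ℝ)*d - b*c) * ((a:ℝ)*d - b*c) = 1 := by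
    rcases hdet with h | h <;>
      · have h' : ((a:ℝ)*d - b*c) = ((a*d - b*c : ℤ) : ℝ) := by push_cast; ring
        rw [h'] ; rw [h]; norm_num
  refine ⟨fun p => ((((a*d-b*c)*d : ℤ):ℝ) * p.1 + ((-(a*d-b*c)*b : ℤ):ℝ) * p.2 + (((a*d-b*c)*(b*g-d*e) : ℤ):ℝ),
      ((-(a*d-b*c)*c : ℤ):ℝ) * p.1 + (((a*d-b*c)*a : ℤ):ℝ) * p.2 + (((a*d-b*c)*(c*e-a*g) : ℤ):ℝ)),
    ⟨(a*d-b*c)*d, -(a*d-b*c)*b, -(a*d-b*c)*c, (a*d-b*c)*a, (a*d-b*c)*(b*g-d*e), (a*d-b*c)*(c*e-a*g), ?_, fun p => rfl⟩, ?_, ?_⟩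
  · rcases hdet with h | h
    · left; linear_combination ((a*d-b*c)^2 + (a*d-b*c) + 1) * h
    · right; linear_combination ((a*d-b*c)^2 - (a*d-b*c) + 1) * h
  · intro p
    rw [hfp]
    ext
    · push_cast
      linear_combination p.1 * hδ2
    · push_cast
      linear_combination p.2 * hδ2
  · intro p
    rw [hfp]
    ext
    · push_cast
      linear_combination (p.1 - (e:ℝ)) * hδ2
    · push_cast
      linear_combination (p.2 - (g:ℝ)) * hδ2

lemma unimod_continuous {f : ℝ × ℝ → ℝ × ℝ} (hf : Unimod f) : Continuous f := by
  obtain ⟨a,b,c,d,e,g,_,hfp⟩ := hf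
  have : f = fun p : ℝ × ℝ => ((a : ℝ) * p.1 + (b : ℝ) * p.2 + (e : ℝ),
             (c : ℝ) * p.1 + (d : ℝ) * p.2 + (g : ℝ)) := funext hfp
  rw [this]; fun_prop

lemma unimod_homeo {f : ℝ × ℝ → ℝ × ℝ} (hf : Unimod f) : ∃ F : (ℝ×ℝ) ≃ₜ (ℝ×ℝ), ⇑F = f := by
  obtain ⟨f', hf', hl, hr⟩ := unimod_inv hf
  exact ⟨⟨⟨f, f', fun p => hl p, fun p => hr p⟩, unimod_continuous hf, unimod_continuous hf'⟩, rfl⟩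

lemma unimod_image_latt {f : ℝ × ℝ → ℝ × ℝ} (hf : Unimod f) : f '' latt = latt := by
  obtain ⟨f', hf', hl, hr⟩ := unimod_inv hf
  apply subset_antisymm
  · rintro _ ⟨p, hp, rfl⟩; exact unimod_latt hf p hp
  · intro p hp; exact ⟨f' p, unimod_latt hf' p hp, hr p⟩

lemma unimod_injective {f : ℝ × ℝ → ℝ × ℝ} (hf : Unimod f) : Function.Injective f := by
  obtain ⟨F, hF⟩ := unimod_homeo hf
  rw [← hF]; exact F.injective

lemma unimod_interior_image {f : ℝ × ℝ → ℝ × ℝ} (hf : Unimod f) (S : Set (ℝ×ℝ)) :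
    interior (f '' S) = f '' interior S := by
  obtain ⟨F, hF⟩ := unimod_homeo hf
  rw [← hF, F.image_interior]

lemma unimod_frontier_image {f : ℝ × ℝ → ℝ × ℝ} (hf : Unimod f) (S : Set (ℝ×ℝ)) :
    frontier (f '' S) = f '' frontier S := by
  obtain ⟨F, hF⟩ := unimod_homeo hf
  rw [← hF, F.image_frontier]

lemma unimod_bcount {f : ℝ × ℝ → ℝ × ℝ} (hf : Unimod f) (S : Set (ℝ×ℝ)) :
    bcount (f '' S) = bcount S := by
  have hinj := unimod_injective hf
  rw [bcount, unimod_frontier_image hf, ← unimod_image_latt hf,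
    ← Set.image_inter hinj, Set.ncard_image_of_injective _ hinj, bcount]

lemma unimod_smul2 {f : ℝ × ℝ → ℝ × ℝ} (hf : Unimod f) :
    ∃ g' : ℝ × ℝ → ℝ × ℝ, Unimod g' ∧
      ∀ S : Set (ℝ×ℝ), (2:ℝ) • (f '' S) = g' '' ((2:ℝ) • S) := by
  obtain ⟨a,b,c,d,e,g,hdet,hfp⟩ := hf
  refine ⟨fun p => ((a : ℝ) * p.1 + (b : ℝ) * p.2 + ((2*e : ℤ) : ℝ),
             (c : ℝ) * p.1 + (d : ℝ) * p.2 + ((2*g : ℤ) : ℝ)),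
    ⟨a, b, c, d, 2*e, 2*g, hdet, fun p => rfl⟩, ?_⟩
  intro S
  have hkey : ∀ p : ℝ × ℝ, (2:ℝ) • f p =
      ((a : ℝ) * ((2:ℝ) • p).1 + (b : ℝ) * ((2:ℝ) • p).2 + ((2*e : ℤ) : ℝ),
       (c : ℝ) * ((2:ℝ) • p).1 + (d : ℝ) * ((2:ℝ) • p).2 + ((2*g : ℤ) : ℝ)) := by
    intro p
    rw [hfp]
    simp only [Prod.smul_mk, Prod.smul_fst, Prod.smul_snd, smul_eq_mul, Prod.mk.injEq]
    push_cast
    constructor <;> ring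
  ext q
  simp only [Set.mem_smul_set, Set.mem_image]
  constructor
  · rintro ⟨y, ⟨p, hp, rfl⟩, rfl⟩
    exact ⟨(2:ℝ) • p, ⟨p, hp, rfl⟩, (hkey p).symm⟩
  · rintro ⟨y, ⟨p, hp, rfl⟩, rfl⟩
    exact ⟨f p, ⟨p, hp, rfl⟩, hkey p⟩

lemma unimod_affine {f : ℝ × ℝ → ℝ × ℝ} (hf : Unimod f) :
    ∃ A : (ℝ×ℝ) →ᵃ[ℝ] (ℝ×ℝ), ⇑A = f := by
  obtain ⟨a,b,c,d,e,g,_,hfp⟩ := hf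
  refine ⟨{ toFun := f
            linear :=
            { toFun := fun p => ((a : ℝ) * p.1 + (b : ℝ) * p.2, (c : ℝ) * p.1 + (d : ℝ) * p.2)
              map_add' := by
                intro p q
                simp only [Prod.fst_add, Prod.snd_add, Prod.mk_add_mk, Prod.mk.injEq]
                constructor <;> ring
              map_smul' := by
                intro r p
                simp only [Prod.smul_fst, Prod.smul_snd, smul_eq_mul, Prod.smul_mk,
                  RingHom.id_apply, Prod.mk.injEq]
                constructor <;> ring }
            map_vadd' := by
              intro p v
              simp only [vadd_eq_add, LinearMap.coe_mk, AddHom.coe_mk, hfp,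
                Prod.fst_add, Prod.snd_add, Prod.mk_add_mk, Prod.mk.injEq]
              constructor <;> ring }, rfl⟩

lemma unimod_image_convexHull {f : ℝ × ℝ → ℝ × ℝ} (hf : Unimod f) (s : Set (ℝ×ℝ)) :
    f '' (convexHull ℝ s) = convexHull ℝ (f '' s) := by
  obtain ⟨A, hA⟩ := unimod_affine hf
  rw [← hA, AffineMap.image_convexHull]

lemma finite_latt_inter {S : Set (ℝ×ℝ)} (hS : Bornology.IsBounded S) : (S ∩ latt).Finite := by
  obtain ⟨r, hr⟩ := hS.subset_closedBall (0 : ℝ×ℝ)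
  set N : ℤ := ⌈r⌉
  apply Set.Finite.subset
    (Set.Finite.image (fun z : ℤ×ℤ => ((z.1:ℝ),(z.2:ℝ)))
      ((Finset.Icc (-N) N ×ˢ Finset.Icc (-N) N).finite_toSet))
  rintro p ⟨hpS, m, n, rfl⟩
  have hball := hr hpS
  rw [Metric.mem_closedBall, dist_zero_right] at hball
  have h1 : |(m:ℝ)| ≤ r := by
    calc |(m:ℝ)| = ‖((m:ℝ),(n:ℝ)).1‖ := by simp [Real.norm_eq_abs]
    _ ≤ ‖((m:ℝ),(n:ℝ))‖ := norm_fst_le _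
    _ ≤ r := hball
  have h2 : |(n:ℝ)| ≤ r := by
    calc |(n:ℝ)| = ‖((m:ℝ),(n:ℝ)).2‖ := by simp [Real.norm_eq_abs]
    _ ≤ ‖((m:ℝ),(n:ℝ))‖ := norm_snd_le _
    _ ≤ r := hball
  have hrN : r ≤ (N:ℝ) := Int.le_ceil r
  rw [abs_le] at h1 h2
  refine ⟨(m,n), ?_, rfl⟩
  simp only [Finset.coe_product, Set.mem_prod, Finset.mem_coe, Finset.mem_Icc]
  have e1 : -N ≤ m := by exact_mod_cast (by push_cast; linarith : (-(N:ℝ)) ≤ (m:ℝ))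
  have e2 : m ≤ N := by exact_mod_cast (by linarith : ((m:ℝ)) ≤ (N:ℝ))
  have e3 : -N ≤ n := by exact_mod_cast (by push_cast; linarith : (-(N:ℝ)) ≤ (n:ℝ))
  have e4 : n ≤ N := by exact_mod_cast (by linarith : ((n:ℝ)) ≤ (N:ℝ))
  exact ⟨⟨e1, e2⟩, e3, e4⟩

lemma mem_two_smul (S : Set (ℝ×ℝ)) (p : ℝ×ℝ) :
    p ∈ (2:ℝ) • S ↔ (p.1/2, p.2/2) ∈ S := by
  rw [Set.mem_smul_set]
  constructor
  · rintro ⟨z, hz, rfl⟩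
    have : ((((2:ℝ) • z).1)/2, (((2:ℝ) • z).2)/2) = z := by
      simp only [Prod.smul_fst, Prod.smul_snd, smul_eq_mul]
      ext <;> simp <;> ring
    rw [this]; exact hz
  · intro h
    refine ⟨(p.1/2, p.2/2), h, ?_⟩
    simp only [Prod.smul_mk, smul_eq_mul]
    ext <;> simp <;> ring

lemma face_lemma (V : Finset (ℝ×ℝ)) (ℓ : (ℝ×ℝ) →ₗ[ℝ] ℝ) (t : ℝ)
    (hVle : ∀ v ∈ V, ℓ v ≤ t) {p : ℝ×ℝ}
    (hp : p ∈ convexHull ℝ (V : Set (ℝ×ℝ))) (hpt : ℓ p = t) :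
    p ∈ convexHull ℝ ((V.filter (fun v => ℓ v = t)) : Set (ℝ×ℝ)) := by
  obtain ⟨w, hw0, hw1, hwp⟩ := Finset.mem_convexHull'.mp hp
  have hsum : ∑ v ∈ V, w v * (t - ℓ v) = 0 := by
    have : ∑ v ∈ V, w v * (t - ℓ v) = t * (∑ v ∈ V, w v) - ℓ (∑ v ∈ V, w v • v) := by
      rw [map_sum, Finset.mul_sum, ← Finset.sum_sub_distrib]
      refine Finset.sum_congr rfl fun v _ => ?_
      rw [map_smul, smul_eq_mul]; ring
    rw [this, hw1, hwp, hpt]; ring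
  have hz : ∀ v ∈ V, w v * (t - ℓ v) = 0 := by
    rw [← Finset.sum_eq_zero_iff_of_nonneg
      (fun i hi => mul_nonneg (hw0 i hi) (by linarith [hVle i hi]))]
    exact hsum
  have hker : ∀ v ∈ V, w v ≠ 0 → ℓ v = t := by
    intro v hv hwv
    have := hz v hv
    rcases mul_eq_zero.mp this with h | h
    · exact absurd h hwv
    · linarith
  rw [Finset.mem_convexHull']
  refine ⟨w, fun y hy => hw0 y (Finset.mem_filter.mp hy).1, ?_, ?_⟩
  · rw [Finset.sum_filter_of_ne (fun v hv hne => hker v hv hne)]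
    exact hw1
  · rw [Finset.sum_filter_of_ne (fun v hv hne => hker v hv (by
      intro h; rw [h, zero_smul] at hne; exact hne rfl))]
    exact hwp

lemma sec_convex {Q : Set (ℝ×ℝ)} (hQ : Convex ℝ Q) (t₀ : ℝ) :
    Convex ℝ {y : ℝ | (t₀, y) ∈ Q} := by
  intro y₁ h₁ y₂ h₂ α β hα hβ hs
  have h := hQ h₁ h₂ hα hβ hs
  have ht : α * t₀ + β * t₀ = t₀ := by rw [← add_mul, hs, one_mul]
  have he : α • ((t₀:ℝ), y₁) + β • (t₀, y₂) = (t₀, α • y₁ + β • y₂) := by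
    simp only [Prod.smul_mk, Prod.mk_add_mk, smul_eq_mul, ht]
  rw [he] at h
  exact h

/-- Description of sections of a half-integral polygon at an extreme line `x = t₀`. -/
lemma side_lemma (V : Finset (ℝ×ℝ)) (hV : ∀ v ∈ V, (2:ℝ) • v ∈ latt)
    (ℓ : (ℝ×ℝ) →ₗ[ℝ] ℝ) (c t₀ : ℝ) (hline : ∀ p : ℝ×ℝ, ℓ p = c ↔ p.1 = t₀)
    (hVle : ∀ v ∈ V, ℓ v ≤ c) :
    {y : ℝ | (t₀, y) ∈ convexHull ℝ (V : Set (ℝ×ℝ))} = ∅ ∨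
    ∃ p q : ℤ, p ≤ q ∧
      {y : ℝ | (t₀, y) ∈ convexHull ℝ (V : Set (ℝ×ℝ))} = Icc ((p:ℝ)/2) ((q:ℝ)/2) := by
  classical
  set W := V.filter (fun v => ℓ v = c) with hW
  by_cases hWne : W.Nonempty
  case neg =>
    left
    rw [Set.eq_empty_iff_forall_notMem]
    intro y hy
    have := face_lemma V ℓ c hVle hy ((hline (t₀, y)).mpr rfl)
    rw [← hW, Finset.not_nonempty_iff_eq_empty.mp hWne] at this
    simp at this
  case pos =>
    right
    have hWyne : (W.image Prod.snd).Nonempty := hWne.image _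
    obtain ⟨va, hvaW, hva2⟩ := Finset.mem_image.mp ((W.image Prod.snd).min'_mem hWyne)
    obtain ⟨vb, hvbW, hvb2⟩ := Finset.mem_image.mp ((W.image Prod.snd).max'_mem hWyne)
    set a := (W.image Prod.snd).min' hWyne with ha
    set b := (W.image Prod.snd).max' hWyne with hb
    have hva2' : va.2 = a := hva2
    have hvb2' : vb.2 = b := hvb2
    have hva1 : va.1 = t₀ := (hline va).mp (Finset.mem_filter.mp hvaW).2
    have hvb1 : vb.1 = t₀ := (hline vb).mp (Finset.mem_filter.mp hvbW).2
    have hvaV : va ∈ V := (Finset.mem_filter.mp hvaW).1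
    have hvbV : vb ∈ V := (Finset.mem_filter.mp hvbW).1
    obtain ⟨ma, na, hna⟩ := hV va hvaV
    obtain ⟨mb, nb, hnb⟩ := hV vb hvbV
    have h2a : 2 * a = (na : ℝ) := by
      have := congrArg Prod.snd hna
      simp only [Prod.smul_snd, smul_eq_mul] at this
      rw [← hva2']; exact this
    have h2b : 2 * b = (nb : ℝ) := by
      have := congrArg Prod.snd hnb
      simp only [Prod.smul_snd, smul_eq_mul] at this
      rw [← hvb2']; exact this
    have hab : a ≤ b := Finset.min'_le _ _ (Finset.max'_mem _ hWyne)
    refine ⟨na, nb, ?_, ?_⟩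
    · have : (na:ℝ) ≤ (nb:ℝ) := by rw [← h2a, ← h2b]; linarith
      exact_mod_cast this
    · have hQC : Convex ℝ (convexHull ℝ (V : Set (ℝ×ℝ))) := convex_convexHull ℝ _
      have hmema : ((t₀ : ℝ), a) ∈ convexHull ℝ (V : Set (ℝ×ℝ)) := by
        have hh : va = (t₀, a) := by rw [← hva1, ← hva2']
        rw [← hh]; exact subset_convexHull ℝ _ hvaV
      have hmemb : ((t₀ : ℝ), b) ∈ convexHull ℝ (V : Set (ℝ×ℝ)) := by
        have hh : vb = (t₀, b) := by rw [← hvb1, ← hvb2']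
        rw [← hh]; exact subset_convexHull ℝ _ hvbV
      have hsup : {y : ℝ | (t₀, y) ∈ convexHull ℝ (V : Set (ℝ×ℝ))} ⊆ Icc a b := by
        intro y hy
        have hface := face_lemma V ℓ c hVle hy ((hline (t₀, y)).mpr rfl)
        rw [← hW] at hface
        have hsub2 : (W : Set (ℝ×ℝ)) ⊆ (Prod.snd) ⁻¹' (Icc a b) := by
          intro v hv
          have hmem : v.2 ∈ W.image Prod.snd := Finset.mem_image_of_mem _ hv
          exact ⟨Finset.min'_le _ _ hmem, Finset.le_max' _ _ hmem⟩
        have hcvx : Convex ℝ ((Prod.snd : ℝ×ℝ → ℝ) ⁻¹' (Icc a b)) :=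
          (convex_Icc a b).linear_preimage (LinearMap.snd ℝ ℝ ℝ)
        exact convexHull_min hsub2 hcvx hface
      have hinf : Icc a b ⊆ {y : ℝ | (t₀, y) ∈ convexHull ℝ (V : Set (ℝ×ℝ))} :=
        ((sec_convex hQC t₀).ordConnected).out hmema hmemb
      have heq : {y : ℝ | (t₀, y) ∈ convexHull ℝ (V : Set (ℝ×ℝ))} = Icc a b :=
        subset_antisymm hsup hinf
      have ea : a = (na:ℝ)/2 := by
        rw [eq_div_iff (by norm_num : (2:ℝ) ≠ 0)]; linarith
      have eb : b = (nb:ℝ)/2 := by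
        rw [eq_div_iff (by norm_num : (2:ℝ) ≠ 0)]; linarith
      rw [heq, ea, eb]

lemma count_pair (T S : Set ℝ) (hTS : ∀ y : ℝ, y ∈ T ↔ y/2 ∈ S)
    (hS : S = ∅ ∨ ∃ p q : ℤ, p ≤ q ∧ S = Icc ((p:ℝ)/2) ((q:ℝ)/2)) :
    {n : ℤ | (n:ℝ) ∈ T}.ncard ≤ 2 * {n : ℤ | (n:ℝ) ∈ S}.ncard + 1 := by
  rcases hS with h | ⟨p, q, hpq, h⟩
  · have : {n : ℤ | (n:ℝ) ∈ T} = ∅ := by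
      rw [Set.eq_empty_iff_forall_notMem]
      intro n hn
      rw [mem_setOf_eq, hTS] at hn
      rw [h] at hn
      exact hn
    rw [this]
    simp
  · have hT : {n : ℤ | (n:ℝ) ∈ T} = ↑(Finset.Icc p q) := by
      ext n
      simp only [mem_setOf_eq, hTS, h, mem_Icc, Finset.coe_Icc]
      rw [div_le_div_iff_of_pos_right, div_le_div_iff_of_pos_right]
      · constructor
        · rintro ⟨h1, h2⟩; exact ⟨by exact_mod_cast h1, by exact_mod_cast h2⟩
        · rintro ⟨h1, h2⟩; exact ⟨by exact_mod_cast h1, by exact_mod_cast h2⟩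
      · norm_num
      · norm_num
    have hSc : {n : ℤ | (n:ℝ) ∈ S} = ↑(Finset.Icc (-((-p)/2)) (q/2)) := by
      ext n
      simp only [mem_setOf_eq, h, mem_Icc, Finset.coe_Icc]
      rw [div_le_iff₀ (by norm_num : (0:ℝ) < 2), le_div_iff₀ (by norm_num : (0:ℝ) < 2)]
      have h1 : ((p:ℝ) ≤ (n:ℝ) * 2) ↔ (p ≤ n * 2) := by exact_mod_cast Iff.rfl
      have h2 : ((n:ℝ) * 2 ≤ (q:ℝ)) ↔ (n * 2 ≤ q) := by exact_mod_cast Iff.rfl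
      rw [h1, h2]
      omega
    rw [hT, hSc, Set.ncard_coe_finset, Set.ncard_coe_finset, Int.card_Icc, Int.card_Icc]
    omega

lemma plane_count (S : Set (ℝ×ℝ)) (t : ℤ) :
    (S ∩ latt ∩ {p : ℝ×ℝ | p.1 = (t:ℝ)}).ncard = {n : ℤ | (n:ℝ) ∈ {y : ℝ | ((t:ℝ), y) ∈ S}}.ncard := by
  have heq : S ∩ latt ∩ {p : ℝ×ℝ | p.1 = (t:ℝ)} =
      (fun n : ℤ => (((t:ℤ):ℝ), (n:ℝ))) '' {n : ℤ | (n:ℝ) ∈ {y : ℝ | ((t:ℝ), y) ∈ S}} := by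
    ext p
    constructor
    · rintro ⟨⟨hpS, m, n, rfl⟩, hp1⟩
      have hm : (m:ℝ) = (t:ℝ) := hp1
      refine ⟨n, ?_, ?_⟩
      · simp only [mem_setOf_eq]
        rw [← hm]
        exact hpS
      · simp only
        rw [Prod.mk.injEq]
        exact ⟨hm.symm, rfl⟩
    · rintro ⟨n, hn, rfl⟩
      exact ⟨⟨hn, t, n, rfl⟩, rfl⟩
  rw [heq, Set.ncard_image_of_injective]
  intro n₁ n₂ hn
  simp only [Prod.mk.injEq, true_and] at hn
  exact_mod_cast hn

lemma vert_openSegment {x₀ t y e : ℝ} (h1 : e < y) (h2 : y < t) :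
    ((x₀ : ℝ), y) ∈ openSegment ℝ ((x₀ : ℝ), t) ((x₀ : ℝ), e) := by
  rw [openSegment_eq_image]
  have hte : (0:ℝ) < t - e := by linarith
  refine ⟨(t - y)/(t - e), ⟨div_pos (by linarith) hte, (div_lt_one hte).2 (by linarith)⟩, ?_⟩
  simp only [Prod.smul_mk, smul_eq_mul, Prod.mk_add_mk, Prod.mk.injEq]
  constructor
  · ring
  · field_simp
    ring

lemma main_ineq (V : Finset (ℝ×ℝ)) (hV : ∀ v ∈ V, (2:ℝ) • v ∈ latt)
    (hsub : convexHull ℝ (V : Set (ℝ×ℝ)) ⊆ Icc (0:ℝ) 1 ×ˢ (univ : Set ℝ))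
    (hint : (interior ((2:ℝ) • convexHull ℝ (V : Set (ℝ×ℝ))) ∩ latt).Nonempty) :
    bcount ((2:ℝ) • convexHull ℝ (V : Set (ℝ×ℝ))) ≤
      2 * bcount (convexHull ℝ (V : Set (ℝ×ℝ))) + 4 := by
  classical
  set Q := convexHull ℝ (V : Set (ℝ×ℝ)) with hQdef
  set Q2 := (2:ℝ) • Q with hQ2def
  have hQcomp : IsCompact Q := V.finite_toSet.isCompact_convexHull ℝ
  have hQcl : IsClosed Q := hQcomp.isClosed
  have hQconv : Convex ℝ Q := convex_convexHull ℝ _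
  have hQ2comp : IsCompact Q2 := by
    rw [hQ2def, ← Set.image_smul]
    exact hQcomp.image (continuous_const_smul _)
  have hQ2cl : IsClosed Q2 := hQ2comp.isClosed
  have hQ2conv : Convex ℝ Q2 := hQconv.smul _
  have hmem2 : ∀ p : ℝ×ℝ, p ∈ Q2 ↔ (p.1/2, p.2/2) ∈ Q := fun p => mem_two_smul Q p
  have hintQ : interior Q ⊆ Ioo (0:ℝ) 1 ×ˢ (univ : Set ℝ) := by
    have := interior_mono hsub
    rwa [interior_prod_eq, interior_Icc, interior_univ] at this
  have hQ2sub : Q2 ⊆ Icc (0:ℝ) 2 ×ˢ (univ : Set ℝ) := by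
    intro p hp
    have h := hsub ((hmem2 p).mp hp)
    rcases h with ⟨h1, _⟩
    rw [mem_Icc] at h1
    exact ⟨by rw [mem_Icc]; constructor <;> linarith [h1.1, h1.2], trivial⟩
  have hintQ2 : interior Q2 ⊆ Ioo (0:ℝ) 2 ×ˢ (univ : Set ℝ) := by
    have := interior_mono hQ2sub
    rwa [interior_prod_eq, interior_Icc, interior_univ] at this
  have hfinQ : (Q ∩ latt).Finite := finite_latt_inter hQcomp.isBounded
  have hfinQ2 : (Q2 ∩ latt).Finite := finite_latt_inter hQ2comp.isBounded
  -- frontier of Q captures all lattice points of Q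
  have hfQ : frontier Q ∩ latt = Q ∩ latt := by
    apply subset_antisymm
    · rintro p ⟨hf, hl⟩
      rw [hQcl.frontier_eq] at hf
      exact ⟨hf.1, hl⟩
    · rintro p ⟨hp, m, n, rfl⟩
      rw [hQcl.frontier_eq]
      refine ⟨⟨hp, ?_⟩, latt_mem m n⟩
      intro hin
      have h := (hintQ hin).1
      rw [mem_Ioo] at h
      have h0 : (0:ℝ) < (m:ℝ) := h.1
      have h1 : ((m:ℝ)) < 1 := h.2
      have : (0:ℤ) < m := by exact_mod_cast h0
      have : m < (1:ℤ) := by exact_mod_cast h1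
      omega
  -- side data
  have hline0 : ∀ p : ℝ×ℝ, (-(LinearMap.fst ℝ ℝ ℝ)) p = (0:ℝ) ↔ p.1 = 0 := by
    intro p; simp [neg_eq_zero]
  have hline1 : ∀ p : ℝ×ℝ, (LinearMap.fst ℝ ℝ ℝ) p = (1:ℝ) ↔ p.1 = 1 := by
    intro p; simp
  have hVQ : ∀ v ∈ V, v ∈ Q := fun v hv => subset_convexHull ℝ _ hv
  have hVstrip : ∀ v ∈ V, v.1 ∈ Icc (0:ℝ) 1 := fun v hv => (hsub (hVQ v hv)).1
  have hVle0 : ∀ v ∈ V, (-(LinearMap.fst ℝ ℝ ℝ)) v ≤ 0 := by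
    intro v hv
    simp only [LinearMap.neg_apply, LinearMap.fst_apply]
    linarith [(hVstrip v hv).1]
  have hVle1 : ∀ v ∈ V, (LinearMap.fst ℝ ℝ ℝ) v ≤ 1 := by
    intro v hv
    simp only [LinearMap.fst_apply]
    exact (hVstrip v hv).2
  have hs0 := side_lemma V hV (-(LinearMap.fst ℝ ℝ ℝ)) 0 0 hline0 hVle0
  have hs1 := side_lemma V hV (LinearMap.fst ℝ ℝ ℝ) 1 1 hline1 hVle1
  rw [← hQdef] at hs0 hs1
  -- relations between sections of Q2 and Q
  have hTS0 : ∀ y : ℝ, y ∈ {y : ℝ | ((0:ℝ), y) ∈ Q2} ↔ y/2 ∈ {y : ℝ | ((0:ℝ), y) ∈ Q} := by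
    intro y
    rw [mem_setOf_eq, mem_setOf_eq, hmem2]
    norm_num
  have hTS2 : ∀ y : ℝ, y ∈ {y : ℝ | ((2:ℝ), y) ∈ Q2} ↔ y/2 ∈ {y : ℝ | ((1:ℝ), y) ∈ Q} := by
    intro y
    rw [mem_setOf_eq, mem_setOf_eq, hmem2]
    norm_num
  have hcount0 := count_pair _ _ hTS0 hs0
  have hcount2 := count_pair _ _ hTS2 hs1
  -- plane counts
  have hpcQ0 := plane_count Q 0
  have hpcQ1 := plane_count Q 1
  have hpcQ20 := plane_count Q2 0
  have hpcQ22 := plane_count Q2 2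
  simp only [Int.cast_zero] at hpcQ0 hpcQ20
  simp only [Int.cast_one] at hpcQ1
  simp only [Int.cast_two] at hpcQ22
  -- bcount Q
  have hbQ : bcount Q = (Q ∩ latt ∩ {p : ℝ×ℝ | p.1 = 0}).ncard
      + (Q ∩ latt ∩ {p : ℝ×ℝ | p.1 = 1}).ncard := by
    rw [bcount, hfQ]
    have hsplit : Q ∩ latt = (Q ∩ latt ∩ {p : ℝ×ℝ | p.1 = 0}) ∪ (Q ∩ latt ∩ {p : ℝ×ℝ | p.1 = 1}) := by
      apply subset_antisymm
      · rintro p ⟨hp, m, n, rfl⟩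
        have h1 : (m:ℝ) ∈ Icc (0:ℝ) 1 := (hsub hp).1
        rw [mem_Icc] at h1
        have h0 : (0:ℤ) ≤ m := by exact_mod_cast h1.1
        have h2 : m ≤ (1:ℤ) := by exact_mod_cast h1.2
        interval_cases m
        · exact Or.inl ⟨⟨hp, latt_mem 0 n⟩, by norm_num⟩
        · exact Or.inr ⟨⟨hp, latt_mem 1 n⟩, by norm_num⟩
      · rintro p (⟨hp, _⟩ | ⟨hp, _⟩) <;> exact hp
    conv_lhs => rw [hsplit]
    apply Set.ncard_union_eq
    · rw [Set.disjoint_left]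
      rintro p ⟨_, h0⟩ ⟨_, h1⟩
      simp only [mem_setOf_eq] at h0 h1
      rw [h0] at h1
      norm_num at h1
    · exact hfinQ.subset inter_subset_left
    · exact hfinQ.subset inter_subset_left
  -- the middle line x = 1 of Q2
  obtain ⟨r, hrint, hrlatt⟩ := hint
  obtain ⟨mr, nr, hreq⟩ := hrlatt
  have hr1 : r.1 = 1 := by
    have h := (hintQ2 hrint).1
    rw [hreq] at h ⊢
    rw [mem_Ioo] at h
    have h0' : (0:ℝ) < (mr:ℝ) := h.1
    have h2' : ((mr:ℝ)) < 2 := h.2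
    have h0 : (0:ℤ) < mr := by exact_mod_cast h0'
    have h2 : mr < (2:ℤ) := by exact_mod_cast h2'
    have : mr = 1 := by omega
    rw [this]
    norm_num
  have hrQ2 : r ∈ Q2 := interior_subset hrint
  set YS : Set ℝ := Prod.snd '' (Q2 ∩ {p : ℝ×ℝ | p.1 = 1}) with hYSdef
  have hYcomp : IsCompact YS := by
    apply IsCompact.image _ continuous_snd
    exact hQ2comp.inter_right (isClosed_eq continuous_fst continuous_const)
  have hYiff : ∀ y : ℝ, y ∈ YS ↔ ((1:ℝ), y) ∈ Q2 := by
    intro y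
    constructor
    · rintro ⟨p, ⟨hp, h1⟩, rfl⟩
      have : ((1:ℝ), p.2) = p := Prod.ext h1.symm rfl
      rwa [this]
    · intro h
      exact ⟨((1:ℝ), y), ⟨h, rfl⟩, rfl⟩
  have hr2Y : r.2 ∈ YS := by
    rw [hYiff]
    have : ((1:ℝ), r.2) = r := Prod.ext hr1.symm rfl
    rwa [this]
  have hYne : YS.Nonempty := ⟨r.2, hr2Y⟩
  have heY : sInf YS ∈ YS := hYcomp.sInf_mem hYne
  have hfY : sSup YS ∈ YS := hYcomp.sSup_mem hYne
  have hB : frontier Q2 ∩ latt ∩ {p : ℝ×ℝ | p.1 = 1} ⊆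
      {((1:ℝ), sInf YS), ((1:ℝ), sSup YS)} := by
    rintro p ⟨⟨hfr, hl⟩, hp1⟩
    simp only [mem_setOf_eq] at hp1
    have hpQ2 : p ∈ Q2 := by
      rw [hQ2cl.frontier_eq] at hfr
      exact hfr.1
    have hnotint : p ∉ interior Q2 := by
      rw [hQ2cl.frontier_eq] at hfr
      exact hfr.2
    have hpform : ((1:ℝ), p.2) = p := Prod.ext hp1.symm rfl
    have hpy : p.2 ∈ YS := by
      rw [hYiff, hpform]
      exact hpQ2
    have hee : sInf YS ≤ p.2 := csInf_le hYcomp.bddBelow hpy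
    have hff : p.2 ≤ sSup YS := le_csSup hYcomp.bddAbove hpy
    by_contra hne
    simp only [mem_insert_iff, mem_singleton_iff] at hne
    push_neg at hne
    have hpe : p.2 ≠ sInf YS := by
      intro h
      exact hne.1 (by rw [← hpform, h])
    have hpf : p.2 ≠ sSup YS := by
      intro h
      exact hne.2 (by rw [← hpform, h])
    have he' : sInf YS < p.2 := lt_of_le_of_ne hee (Ne.symm hpe)
    have hf' : p.2 < sSup YS := lt_of_le_of_ne hff hpf
    have hrintm : ((1:ℝ), r.2) ∈ interior Q2 := by
      have : ((1:ℝ), r.2) = r := Prod.ext hr1.symm rfl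
      rwa [this]
    rcases lt_trichotomy p.2 r.2 with hlt | heq | hgt
    · have hseg := vert_openSegment (x₀ := (1:ℝ)) he' hlt
      have hcl : ((1:ℝ), sInf YS) ∈ closure Q2 := subset_closure ((hYiff _).mp heY)
      have := hQ2conv.openSegment_interior_closure_subset_interior hrintm hcl hseg
      rw [hpform] at this
      exact hnotint this
    · have : p = r := by
        rw [← hpform, heq]
        exact Prod.ext hr1.symm rfl
      rw [this] at hnotint
      exact hnotint hrint
    · have hseg := vert_openSegment (x₀ := (1:ℝ)) hgt hf'
      rw [openSegment_symm] at hseg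
      have hcl : ((1:ℝ), sSup YS) ∈ closure Q2 := subset_closure ((hYiff _).mp hfY)
      have := hQ2conv.openSegment_interior_closure_subset_interior hrintm hcl hseg
      rw [hpform] at this
      exact hnotint this
  have hBcard : (frontier Q2 ∩ latt ∩ {p : ℝ×ℝ | p.1 = 1}).ncard ≤ 2 := by
    refine le_trans (Set.ncard_le_ncard hB (Set.toFinite _)) ?_
    refine le_trans (Set.ncard_insert_le _ _) ?_
    simp
  -- decomposition of the boundary lattice points of Q2
  have hFsub : frontier Q2 ∩ latt ⊆
      ((Q2 ∩ latt ∩ {p : ℝ×ℝ | p.1 = 0}) ∪ (frontier Q2 ∩ latt ∩ {p : ℝ×ℝ | p.1 = 1}))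
        ∪ (Q2 ∩ latt ∩ {p : ℝ×ℝ | p.1 = 2}) := by
    rintro p ⟨hfr, hl⟩
    have hpQ2 : p ∈ Q2 := by
      rw [hQ2cl.frontier_eq] at hfr
      exact hfr.1
    obtain ⟨m, n, hpeq⟩ := hl
    have h1 : (m:ℝ) ∈ Icc (0:ℝ) 2 := by
      have h' := (hQ2sub hpQ2).1
      rw [hpeq] at h'
      exact h'
    rw [mem_Icc] at h1
    have h0 : (0:ℤ) ≤ m := by exact_mod_cast h1.1
    have h2 : m ≤ (2:ℤ) := by exact_mod_cast h1.2
    interval_cases m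
    · exact Or.inl (Or.inl ⟨⟨hpQ2, 0, n, by exact_mod_cast hpeq⟩, by rw [hpeq]; norm_num⟩)
    · exact Or.inl (Or.inr ⟨⟨hfr, 1, n, by exact_mod_cast hpeq⟩, by rw [hpeq]; norm_num⟩)
    · exact Or.inr ⟨⟨hpQ2, 2, n, by exact_mod_cast hpeq⟩, by rw [hpeq]; norm_num⟩
  -- assemble
  have hfinA : ((Q2 ∩ latt ∩ {p : ℝ×ℝ | p.1 = 0})).Finite := hfinQ2.subset inter_subset_left
  have hfinC : ((Q2 ∩ latt ∩ {p : ℝ×ℝ | p.1 = 2})).Finite := hfinQ2.subset inter_subset_left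
  have hfinB : (frontier Q2 ∩ latt ∩ {p : ℝ×ℝ | p.1 = 1}).Finite := by
    apply hfinQ2.subset
    rintro p ⟨⟨hfr, hl⟩, _⟩
    rw [hQ2cl.frontier_eq] at hfr
    exact ⟨hfr.1, hl⟩
  have hstep : bcount Q2 ≤ (Q2 ∩ latt ∩ {p : ℝ×ℝ | p.1 = 0}).ncard
      + (frontier Q2 ∩ latt ∩ {p : ℝ×ℝ | p.1 = 1}).ncard
      + (Q2 ∩ latt ∩ {p : ℝ×ℝ | p.1 = 2}).ncard := by
    rw [bcount]
    refine le_trans (Set.ncard_le_ncard hFsub (((hfinA.union hfinB).union hfinC))) ?_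
    refine le_trans (Set.ncard_union_le _ _) ?_
    have := Set.ncard_union_le (Q2 ∩ latt ∩ {p : ℝ×ℝ | p.1 = 0})
      (frontier Q2 ∩ latt ∩ {p : ℝ×ℝ | p.1 = 1})
    omega
  rw [hpcQ20] at hstep
  rw [hpcQ22] at hstep
  rw [hbQ, hpcQ0, hpcQ1]
  omega


/-- an infinitely growable denominator 2 polygon (i.e. one equivalent to a
subset of the strip `[0,1] × ℝ`) has no interior lattice points, and if `2P` has an
interior lattice point and `P` has a boundary lattice point then `b(2P) ≤ 2·b(P) + 4`. -/
theorem stmt_8 (P : Set (ℝ × ℝ)) (hP : IsDen2 P)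
    (hstrip : ∃ f : ℝ × ℝ → ℝ × ℝ, Unimod f ∧
      f '' P ⊆ Set.Icc (0 : ℝ) 1 ×ˢ (Set.univ : Set ℝ)) :
    icount P = 0 ∧
    ((interior ((2 : ℝ) • P) ∩ latt).Nonempty → (frontier P ∩ latt).Nonempty →
      bcount ((2 : ℝ) • P) ≤ 2 * bcount P + 4) := by
  obtain ⟨⟨V, hV, hPV⟩, _hPint⟩ := hP
  obtain ⟨f, hf, hfsub⟩ := hstrip
  constructor
  · show (interior P ∩ latt).ncard = 0
    have hempty : interior P ∩ latt = ∅ := by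
      rw [Set.eq_empty_iff_forall_notMem]
      rintro p ⟨hpint, hpl⟩
      have h1 : f p ∈ interior (f '' P) := by
        rw [unimod_interior_image hf]
        exact ⟨p, hpint, rfl⟩
      have h2 : interior (f '' P) ⊆ Ioo (0:ℝ) 1 ×ˢ (univ : Set ℝ) := by
        have := interior_mono hfsub
        rwa [interior_prod_eq, interior_Icc, interior_univ] at this
      have h3 := (h2 h1).1
      obtain ⟨m, n, hmn⟩ := unimod_latt hf p hpl
      rw [hmn] at h3
      rw [mem_Ioo] at h3
      have h0 : (0:ℝ) < (m:ℝ) := h3.1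
      have h1' : ((m:ℝ)) < 1 := h3.2
      have i0 : (0:ℤ) < m := by exact_mod_cast h0
      have i1 : m < (1:ℤ) := by exact_mod_cast h1'
      omega
    rw [hempty, Set.ncard_empty]
  · intro hint2 _hbd
    obtain ⟨g, hg, hgS⟩ := unimod_smul2 hf
    have e1 : bcount ((2:ℝ) • (f '' P)) = bcount ((2:ℝ) • P) := by
      rw [hgS P, unimod_bcount hg]
    have e2 : bcount P = bcount (f '' P) := (unimod_bcount hf P).symm
    have hWV : f '' P = convexHull ℝ ((V.image f : Finset (ℝ×ℝ)) : Set (ℝ×ℝ)) := by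
      rw [hPV, unimod_image_convexHull hf, Finset.coe_image]
    have hWlatt : ∀ w ∈ V.image f, (2:ℝ) • w ∈ latt := by
      intro w hw
      obtain ⟨v, hv, rfl⟩ := Finset.mem_image.mp hw
      have hmm : (2:ℝ) • f v ∈ (2:ℝ) • (f '' ({v} : Set (ℝ×ℝ))) :=
        ⟨f v, ⟨v, rfl, rfl⟩, rfl⟩
      rw [hgS ({v} : Set (ℝ×ℝ))] at hmm
      obtain ⟨z, hz, hze⟩ := hmm
      obtain ⟨y, hy, hyz⟩ := hz
      rw [mem_singleton_iff] at hy
      rw [← hze, ← hyz, hy]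
      exact unimod_latt hg _ (hV v hv)
    have hsub' : convexHull ℝ ((V.image f : Finset (ℝ×ℝ)) : Set (ℝ×ℝ)) ⊆
        Icc (0:ℝ) 1 ×ˢ (univ : Set ℝ) := hWV ▸ hfsub
    have hint' : (interior ((2:ℝ) • convexHull ℝ ((V.image f : Finset (ℝ×ℝ)) : Set (ℝ×ℝ)))
        ∩ latt).Nonempty := by
      rw [← hWV, hgS P, unimod_interior_image hg]
      obtain ⟨x, hxint, hxl⟩ := hint2
      exact ⟨g x, ⟨x, hxint, rfl⟩, unimod_latt hg x hxl⟩
    have hmain := main_ineq (V.image f) hWlatt hsub' hint'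
    rw [← hWV] at hmain
    rw [e2, ← e1]
    exact hmain
end

section
/- Let P ⊆ [0,1] × ℝ be a denominator 2 polygon with no lattice points on its boundary (b(P) = 0) such that 2P has at least one interior lattice point. Then 2P has exactly 4 boundary lattice points. -/
open Set Pointwise

lemma latt_finite_of_bounded {s : Set (ℝ × ℝ)} (hs : Bornology.IsBounded s) :
    (s ∩ latt).Finite := by
  obtain ⟨R, hR⟩ := hs.subset_closedBall 0
  have hsub : s ∩ latt ⊆ (fun q : ℤ × ℤ => ((q.1 : ℝ), (q.2 : ℝ))) ''
      (Set.Icc (-⌈R⌉) ⌈R⌉ ×ˢ Set.Icc (-⌈R⌉) ⌈R⌉) := by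
    rintro p ⟨hps, m, n, rfl⟩
    have hd := hR hps
    simp only [Metric.mem_closedBall, Prod.dist_eq, Real.dist_eq, max_le_iff, Prod.fst_zero, Prod.snd_zero, sub_zero] at hd
    obtain ⟨h1, h2⟩ := hd
    rw [abs_le] at h1 h2
    refine ⟨(m, n), ⟨⟨?_, ?_⟩, ?_, ?_⟩, rfl⟩
    · have : (-⌈R⌉ : ℝ) ≤ m := by
        have := Int.le_ceil R
        linarith [h1.1]
      exact_mod_cast this
    · have : (m : ℝ) ≤ ⌈R⌉ := by have := Int.le_ceil R; linarith [h1.2]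
      exact_mod_cast this
    · have : (-⌈R⌉ : ℝ) ≤ n := by have := Int.le_ceil R; linarith [h2.1]
      exact_mod_cast this
    · have : (n : ℝ) ≤ ⌈R⌉ := by have := Int.le_ceil R; linarith [h2.2]
      exact_mod_cast this
  exact (Set.Finite.image _ ((Set.finite_Icc _ _).prod (Set.finite_Icc _ _))).subset hsub

lemma convex_half_le (α β : ℝ) : Convex ℝ {p : ℝ × ℝ | p.2 ≤ α * p.1 + β} := by
  intro x hx y hy a b ha hb hab
  simp only [Set.mem_setOf_eq] at *
  have h1 : (a • x + b • y).1 = a * x.1 + b * y.1 := rfl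
  have h2 : (a • x + b • y).2 = a * x.2 + b * y.2 := rfl
  rw [h1, h2]
  have hb' : b = 1 - a := by linarith
  subst hb'
  nlinarith [mul_le_mul_of_nonneg_left hx ha, mul_le_mul_of_nonneg_left hy hb]

lemma convex_half_ge (α β : ℝ) : Convex ℝ {p : ℝ × ℝ | α * p.1 + β ≤ p.2} := by
  intro x hx y hy a b ha hb hab
  simp only [Set.mem_setOf_eq] at *
  have h1 : (a • x + b • y).1 = a * x.1 + b * y.1 := rfl
  have h2 : (a • x + b • y).2 = a * x.2 + b * y.2 := rfl
  rw [h1, h2]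
  have hb' : b = 1 - a := by linarith
  subst hb'
  nlinarith [mul_le_mul_of_nonneg_left hx ha, mul_le_mul_of_nonneg_left hy hb]

lemma convex_half_xge (a : ℝ) : Convex ℝ {p : ℝ × ℝ | a ≤ p.1} := by
  intro x hx y hy s t hs ht hst
  simp only [Set.mem_setOf_eq] at *
  have h1 : (s • x + t • y).1 = s * x.1 + t * y.1 := rfl
  rw [h1]
  have ht' : t = 1 - s := by linarith
  subst ht'
  nlinarith [mul_le_mul_of_nonneg_left hx hs, mul_le_mul_of_nonneg_left hy ht]

lemma convex_half_xle (a : ℝ) : Convex ℝ {p : ℝ × ℝ | p.1 ≤ a} := by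
  intro x hx y hy s t hs ht hst
  simp only [Set.mem_setOf_eq] at *
  have h1 : (s • x + t • y).1 = s * x.1 + t * y.1 := rfl
  rw [h1]
  have ht' : t = 1 - s := by linarith
  subst ht'
  nlinarith [mul_le_mul_of_nonneg_left hx hs, mul_le_mul_of_nonneg_left hy ht]

set_option maxHeartbeats 1000000 in
/-- a denominator 2 polygon contained in the strip `[0,1] × ℝ` with no
boundary lattice points, whose double has an interior lattice point, has exactly 4
boundary lattice points in its double. -/
theorem stmt_9 (P : Set (ℝ × ℝ)) (hP : IsDen2 P)
    (hsub : P ⊆ Set.Icc (0 : ℝ) 1 ×ˢ (Set.univ : Set ℝ))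
    (hb : bcount P = 0)
    (hi : (interior ((2 : ℝ) • P) ∩ latt).Nonempty) :
    bcount ((2 : ℝ) • P) = 4 := by
  classical
  obtain ⟨⟨V, hV, hPV⟩, hPint⟩ := hP
  set Q : Set (ℝ × ℝ) := (2 : ℝ) • P with hQdef
  set W : Finset (ℝ × ℝ) := V.image (fun v => (2 : ℝ) • v) with hWdef
  have hQW : Q = convexHull ℝ (W : Set (ℝ × ℝ)) := by
    rw [hQdef, hPV, ← convexHull_smul]
    congr 1
    ext p
    simp only [hWdef, Finset.coe_image, Set.mem_image, Set.mem_smul_set, Finset.mem_coe]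
  have hWlatt : ∀ p ∈ W, p ∈ latt := by
    intro p hp
    simp only [hWdef, Finset.mem_image] at hp
    obtain ⟨v, hv, rfl⟩ := hp
    exact hV v hv
  have hWQ : (W : Set (ℝ × ℝ)) ⊆ Q := hQW ▸ subset_convexHull ℝ _
  have hQcpt : IsCompact Q := by rw [hQW]; exact W.finite_toSet.isCompact_convexHull ℝ
  have hQclosed : IsClosed Q := hQcpt.isClosed
  have hQconv : Convex ℝ Q := by rw [hQW]; exact convex_convexHull ℝ _
  have hQsub : ∀ p ∈ Q, p.1 ∈ Set.Icc (0 : ℝ) 2 := by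
    intro p hp
    rw [hQdef, Set.mem_smul_set] at hp
    obtain ⟨q, hq, rfl⟩ := hp
    have h1 := (hsub hq).1
    have h2 : ((2 : ℝ) • q).1 = 2 * q.1 := rfl
    rw [h2]
    constructor
    · nlinarith [h1.1]
    · nlinarith [h1.2]
  have hfrQ : frontier Q = Q \ interior Q := hQclosed.frontier_eq
  have hIoo : ∀ p ∈ interior Q, 0 < p.1 ∧ p.1 < 2 := by
    intro p hp
    have hQ' : Q ⊆ Set.Icc (0 : ℝ) 2 ×ˢ (univ : Set ℝ) := fun q hq => ⟨hQsub q hq, trivial⟩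
    have := interior_mono hQ' hp
    rw [interior_prod_eq, interior_Icc] at this
    exact ⟨this.1.1, this.1.2⟩
  -- no frontier points with both coords even
  have hPcpt : IsCompact P := by rw [hPV]; exact V.finite_toSet.isCompact_convexHull ℝ
  have hPfr : frontier P ∩ latt = ∅ := by
    have hbdd : Bornology.IsBounded (frontier P) :=
      hPcpt.isBounded.subset (frontier_subset_closure.trans hPcpt.isClosed.closure_eq.le)
    exact (Set.ncard_eq_zero (latt_finite_of_bounded hbdd)).1 hb
  have hfrsmul : frontier Q = (2 : ℝ) • frontier P := by
    rw [hQdef]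
    unfold frontier
    rw [closure_smul₀' (G₀ := ℝ) two_ne_zero, interior_smul₀ (G₀ := ℝ) two_ne_zero,
      ← Set.smul_set_sdiff₀ two_ne_zero]
  have hkey : ∀ k n : ℤ, Even k → Even n → (((k : ℝ), (n : ℝ)) ∉ frontier Q) := by
    rintro k n ⟨k', hk'⟩ ⟨n', hn'⟩ hmem
    rw [hfrsmul, Set.mem_smul_set] at hmem
    obtain ⟨q, hq, hqe⟩ := hmem
    have hq1 : q = ((k' : ℝ), (n' : ℝ)) := by
      have e1 : (2 : ℝ) * q.1 = (k : ℝ) := congrArg Prod.fst hqe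
      have e2 : (2 : ℝ) * q.2 = (n : ℝ) := congrArg Prod.snd hqe
      have : q.1 = (k' : ℝ) := by subst hk'; push_cast at e1; linarith
      have h2 : q.2 = (n' : ℝ) := by subst hn'; push_cast at e2; linarith
      exact Prod.ext this h2
    have : ((k' : ℝ), (n' : ℝ)) ∈ frontier P ∩ latt := ⟨hq1 ▸ hq, k', n', rfl⟩
    rw [hPfr] at this
    exact this
  -- the interior lattice point z = (1, zm)
  obtain ⟨z, hzint, hzlatt⟩ := hi
  obtain ⟨zk, zm, rfl⟩ := hzlatt
  have hz1 : (zk : ℝ) = 1 := by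
    have h := hIoo _ hzint
    have h1 : (0 : ℝ) < (zk : ℝ) := h.1
    have h2 : (zk : ℝ) < 2 := h.2
    have : zk = 1 := by
      have e1 : 0 < zk := by exact_mod_cast h1
      have e2 : zk < 2 := by exact_mod_cast h2
      omega
    exact_mod_cast congrArg (fun t : ℤ => (t : ℝ)) this
  rw [show ((zk : ℝ), (zm : ℝ)) = ((1 : ℝ), (zm : ℝ)) by rw [hz1]] at hzint
  have hzQ : ((1 : ℝ), (zm : ℝ)) ∈ Q := interior_subset hzint
  -- a small ball around z inside Q
  obtain ⟨ε, hε, hball⟩ : ∃ ε > 0, Metric.ball ((1 : ℝ), (zm : ℝ)) ε ⊆ Q :=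
    Metric.mem_nhds_iff.1 (mem_interior_iff_mem_nhds.1 hzint)
  have hballmem : ∀ u v : ℝ, |u - 1| < ε → |v - (zm : ℝ)| < ε → (u, v) ∈ Q := by
    intro u v hu hv
    apply hball
    rw [Metric.mem_ball, Prod.dist_eq]
    simp only [Real.dist_eq]
    exact max_lt hu hv
  -- x-coordinates of W points are 0, 1 or 2
  have hx012 : ∀ p ∈ W, p.1 = 0 ∨ p.1 = 1 ∨ p.1 = 2 := by
    intro p hp
    obtain ⟨pm, pn, hpe⟩ := hWlatt p hp
    have h2 := hQsub p (hWQ hp)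
    rw [hpe] at h2 ⊢
    simp only [Set.mem_Icc] at h2
    have e1 : 0 ≤ pm := by exact_mod_cast h2.1
    have e2 : pm ≤ 2 := by exact_mod_cast h2.2
    have : pm = 0 ∨ pm = 1 ∨ pm = 2 := by omega
    rcases this with rfl | rfl | rfl
    · left; norm_num
    · right; left; norm_num
    · right; right; norm_num
  -- W has points with x = 0 and x = 2
  have hW0ex : ∃ w ∈ W, w.1 = 0 := by
    by_contra hcon
    push_neg at hcon
    have hQx : Q ⊆ {p : ℝ × ℝ | 1 ≤ p.1} := by
      rw [hQW]
      apply convexHull_min _ (convex_half_xge 1)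
      intro w hw
      rcases hx012 w hw with h0 | h1 | h2
      · exact absurd h0 (hcon w hw)
      · simp only [Set.mem_setOf_eq, h1, le_refl]
      · simp only [Set.mem_setOf_eq, h2]; norm_num
    have hmem : ((1 - ε / 2 : ℝ), (zm : ℝ)) ∈ Q := by
      apply hballmem
      · rw [show (1 - ε / 2 - 1 : ℝ) = -(ε / 2) by ring, abs_neg, abs_of_pos (by linarith)]
        linarith
      · simp [hε]
    have := hQx hmem
    simp only [Set.mem_setOf_eq] at this
    linarith
  have hW2ex : ∃ w ∈ W, w.1 = 2 := by
    by_contra hcon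
    push_neg at hcon
    have hQx : Q ⊆ {p : ℝ × ℝ | p.1 ≤ 1} := by
      rw [hQW]
      apply convexHull_min _ (convex_half_xle 1)
      intro w hw
      rcases hx012 w hw with h0 | h1 | h2
      · simp only [Set.mem_setOf_eq, h0]; norm_num
      · simp only [Set.mem_setOf_eq, h1, le_refl]
      · exact absurd h2 (hcon w hw)
    have hmem : ((1 + ε / 2 : ℝ), (zm : ℝ)) ∈ Q := by
      apply hballmem
      · rw [show (1 + ε / 2 - 1 : ℝ) = ε / 2 by ring, abs_of_pos (by linarith)]
        linarith
      · simp [hε]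
    have := hQx hmem
    simp only [Set.mem_setOf_eq] at this
    linarith
  obtain ⟨w0, hw0W, hw01⟩ := hW0ex
  obtain ⟨w2, hw2W, hw21⟩ := hW2ex
  have hWne : W.Nonempty := ⟨w0, hw0W⟩
  set W0 : Finset (ℝ × ℝ) := W.filter (fun p => p.1 = (0 : ℝ)) with hW0def
  set W2 : Finset (ℝ × ℝ) := W.filter (fun p => p.1 = (2 : ℝ)) with hW2def
  have hW0ne : W0.Nonempty := ⟨w0, Finset.mem_filter.2 ⟨hw0W, hw01⟩⟩
  have hW2ne : W2.Nonempty := ⟨w2, Finset.mem_filter.2 ⟨hw2W, hw21⟩⟩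
  set A : ℝ := W0.sup' hW0ne (fun p => p.2) with hAdef
  set A' : ℝ := W0.inf' hW0ne (fun p => p.2) with hA'def
  set B : ℝ := W2.sup' hW2ne (fun p => p.2) with hBdef
  set B' : ℝ := W2.inf' hW2ne (fun p => p.2) with hB'def
  -- the four extreme points belong to W
  have hmemw : ∀ E : ℝ, ∀ x : ℝ, (∃ w ∈ W.filter (fun p => p.1 = x), w.2 = E) →
      ((x, E) ∈ W) := by
    rintro E x ⟨w, hw, hw2⟩
    have h1 := (Finset.mem_filter.1 hw).2
    have : w = (x, E) := Prod.ext h1 hw2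
    exact this ▸ (Finset.mem_filter.1 hw).1
  have hAW : ((0 : ℝ), A) ∈ W := by
    obtain ⟨w, hw, he⟩ := Finset.exists_mem_eq_sup' hW0ne (fun p : ℝ × ℝ => p.2)
    exact hmemw A 0 ⟨w, hw, he.symm⟩
  have hA'W : ((0 : ℝ), A') ∈ W := by
    obtain ⟨w, hw, he⟩ := Finset.exists_mem_eq_inf' hW0ne (fun p : ℝ × ℝ => p.2)
    exact hmemw A' 0 ⟨w, hw, he.symm⟩
  have hBW : ((2 : ℝ), B) ∈ W := by
    obtain ⟨w, hw, he⟩ := Finset.exists_mem_eq_sup' hW2ne (fun p : ℝ × ℝ => p.2)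
    exact hmemw B 2 ⟨w, hw, he.symm⟩
  have hB'W : ((2 : ℝ), B') ∈ W := by
    obtain ⟨w, hw, he⟩ := Finset.exists_mem_eq_inf' hW2ne (fun p : ℝ × ℝ => p.2)
    exact hmemw B' 2 ⟨w, hw, he.symm⟩
  -- frontier membership for points with x = 0 or x = 2
  have hfront0 : ∀ y : ℝ, ((0 : ℝ), y) ∈ Q → ((0 : ℝ), y) ∈ frontier Q := by
    intro y hy
    rw [hfrQ]
    refine ⟨hy, fun hint => ?_⟩
    have := (hIoo _ hint).1
    norm_num at this
  have hfront2 : ∀ y : ℝ, ((2 : ℝ), y) ∈ Q → ((2 : ℝ), y) ∈ frontier Q := by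
    intro y hy
    rw [hfrQ]
    refine ⟨hy, fun hint => ?_⟩
    have := (hIoo _ hint).2
    norm_num at this
  -- integrality and oddness of the extreme values
  have hodd0 : ∀ y : ℝ, ((0 : ℝ), y) ∈ W → ∃ n : ℤ, y = (n : ℝ) ∧ Odd n := by
    intro y hyW
    obtain ⟨pm, pn, hpe⟩ := hWlatt _ hyW
    have h1 : (0 : ℝ) = (pm : ℝ) := congrArg Prod.fst hpe
    have h2 : y = (pn : ℝ) := congrArg Prod.snd hpe
    refine ⟨pn, h2, ?_⟩
    rcases Int.even_or_odd pn with he | ho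
    · exfalso
      apply hkey 0 pn (Even.zero) he
      rw [show (((0 : ℤ) : ℝ), (pn : ℝ)) = ((0 : ℝ), y) by rw [← h2]; norm_num]
      exact hfront0 y (hWQ hyW)
    · exact ho
  have hodd2 : ∀ y : ℝ, ((2 : ℝ), y) ∈ W → ∃ n : ℤ, y = (n : ℝ) ∧ Odd n := by
    intro y hyW
    obtain ⟨pm, pn, hpe⟩ := hWlatt _ hyW
    have h2 : y = (pn : ℝ) := congrArg Prod.snd hpe
    refine ⟨pn, h2, ?_⟩
    rcases Int.even_or_odd pn with he | ho
    · exfalso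
      apply hkey 2 pn (by exact ⟨1, rfl⟩) he
      rw [show (((2 : ℤ) : ℝ), (pn : ℝ)) = ((2 : ℝ), y) by rw [← h2]; norm_num]
      exact hfront2 y (hWQ hyW)
    · exact ho
  obtain ⟨a, haA, haodd⟩ := hodd0 A hAW
  obtain ⟨a', haA', ha'odd⟩ := hodd0 A' hA'W
  obtain ⟨b, hbB, hbodd⟩ := hodd2 B hBW
  obtain ⟨b', hbB', hb'odd⟩ := hodd2 B' hB'W
  -- half-plane transfer
  have hhalf_le : ∀ α β : ℝ, (∀ p ∈ W, p.2 ≤ α * p.1 + β) → ∀ q ∈ Q, q.2 ≤ α * q.1 + β := by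
    intro α β h q hq
    rw [hQW] at hq
    exact convexHull_min (fun p hp => h p hp) (convex_half_le α β) hq
  have hhalf_ge : ∀ α β : ℝ, (∀ p ∈ W, α * p.1 + β ≤ p.2) → ∀ q ∈ Q, α * q.1 + β ≤ q.2 := by
    intro α β h q hq
    rw [hQW] at hq
    exact convexHull_min (fun p hp => h p hp) (convex_half_ge α β) hq
  -- maximal second coordinate at x = 0 and x = 2
  have hAmax : ∀ y : ℝ, ((0 : ℝ), y) ∈ Q → y ≤ A := by
    intro y hy
    set γ : ℝ := W.sup' hWne (fun p => p.2 - A) with hγdef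
    have hγ0 : (0 : ℝ) ≤ γ := by
      have h0 : ((0 : ℝ), A).2 - A ≤ γ := Finset.le_sup' (f := fun p : ℝ × ℝ => p.2 - A) hAW
      simp only at h0
      linarith
    have hpw : ∀ p ∈ W, p.2 ≤ γ * p.1 + A := by
      intro p hp
      rcases hx012 p hp with h0 | h1 | h2
      · have hpW0 : p ∈ W0 := Finset.mem_filter.2 ⟨hp, h0⟩
        have := Finset.le_sup' (f := fun p : ℝ × ℝ => p.2) hpW0
        rw [h0]
        simp only [mul_zero, zero_add]
        exact this
      · have := Finset.le_sup' (f := fun p : ℝ × ℝ => p.2 - A) hp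
        rw [h1]
        simp only [mul_one]
        rw [hγdef] at *
        linarith [this]
      · have := Finset.le_sup' (f := fun p : ℝ × ℝ => p.2 - A) hp
        rw [h2]
        rw [hγdef] at *
        linarith [this]
    have := hhalf_le _ _ hpw _ hy
    simpa using this
  have hBmax : ∀ y : ℝ, ((2 : ℝ), y) ∈ Q → y ≤ B := by
    intro y hy
    set γ : ℝ := W.sup' hWne (fun p => p.2 - B) with hγdef
    have hγ0 : (0 : ℝ) ≤ γ := by
      have h0 : ((2 : ℝ), B).2 - B ≤ γ := Finset.le_sup' (f := fun p : ℝ × ℝ => p.2 - B) hBW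
      simp only at h0
      linarith
    have hpw : ∀ p ∈ W, p.2 ≤ (-γ) * p.1 + (B + 2 * γ) := by
      intro p hp
      have hle := Finset.le_sup' (f := fun p : ℝ × ℝ => p.2 - B) hp
      rw [hγdef] at *
      rcases hx012 p hp with h0 | h1 | h2
      · rw [h0]; simp only [mul_zero, zero_add]; linarith [hle]
      · rw [h1]; simp only [mul_one]; linarith [hle]
      · have hpW2 : p ∈ W2 := Finset.mem_filter.2 ⟨hp, h2⟩
        have := Finset.le_sup' (f := fun p : ℝ × ℝ => p.2) hpW2
        rw [h2]
        have hBe : W2.sup' hW2ne (fun p : ℝ × ℝ => p.2) = B := rfl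
        rw [hBe] at this
        linarith [this]
    have := hhalf_le _ _ hpw _ hy
    simp only at this
    linarith [this]
  -- the slice at x = 1
  set S : Set ℝ := {y : ℝ | ((1 : ℝ), y) ∈ Q} with hSdef
  have hSclosed : IsClosed S := by
    have : S = (fun y : ℝ => ((1 : ℝ), y)) ⁻¹' Q := rfl
    rw [this]
    exact hQclosed.preimage (continuous_const.prodMk continuous_id)
  have hSne : S.Nonempty := ⟨(zm : ℝ), hzQ⟩
  obtain ⟨R, hR⟩ := hQcpt.isBounded.subset_closedBall 0
  have hSbddA : BddAbove S := by
    refine ⟨R, fun y hy => ?_⟩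
    have := hR hy
    simp only [Metric.mem_closedBall, Prod.dist_eq, Real.dist_eq, max_le_iff,
      Prod.fst_zero, Prod.snd_zero, sub_zero] at this
    calc y ≤ |y| := le_abs_self y
    _ ≤ R := this.2
  have hSbddB : BddBelow S := by
    refine ⟨-R, fun y hy => ?_⟩
    have := hR hy
    simp only [Metric.mem_closedBall, Prod.dist_eq, Real.dist_eq, max_le_iff,
      Prod.fst_zero, Prod.snd_zero, sub_zero] at this
    have h2 := this.2
    rw [abs_le] at h2
    linarith [h2.1]
  set d : ℝ := sSup S with hddef
  set c : ℝ := sInf S with hcdef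
  have hdS : d ∈ S := hSclosed.csSup_mem hSne hSbddA
  have hcS : c ∈ S := hSclosed.csInf_mem hSne hSbddB
  have hle_d : ∀ y ∈ S, y ≤ d := fun y hy => le_csSup hSbddA hy
  have hc_le : ∀ y ∈ S, c ≤ y := fun y hy => csInf_le hSbddB hy
  have hczm : c < (zm : ℝ) := by
    have hmem : ((zm : ℝ) - ε / 2) ∈ S := by
      apply hballmem
      · simp [hε]
      · rw [show ((zm : ℝ) - ε / 2 - zm) = -(ε / 2) by ring, abs_neg,
          abs_of_pos (by linarith)]
        linarith
    have := hc_le _ hmem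
    linarith
  have hzmd : (zm : ℝ) < d := by
    have hmem : ((zm : ℝ) + ε / 2) ∈ S := by
      apply hballmem
      · simp [hε]
      · rw [show ((zm : ℝ) + ε / 2 - zm) = ε / 2 by ring, abs_of_pos (by linarith)]
        linarith
    have := hle_d _ hmem
    linarith
  -- the x = 1 vertices
  set W1 : Finset (ℝ × ℝ) := W.filter (fun p => p.1 = (1 : ℝ)) with hW1def
  have hW1Q : ∀ p ∈ W1, ((1 : ℝ), p.2) ∈ Q := by
    intro p hp
    have h1 := (Finset.mem_filter.1 hp).2
    have : p = ((1 : ℝ), p.2) := Prod.ext h1 rfl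
    exact this ▸ hWQ (Finset.mem_filter.1 hp).1
  have hW1int : ∀ p ∈ W1, ∃ n : ℤ, p.2 = (n : ℝ) := by
    intro p hp
    obtain ⟨pm, pn, hpe⟩ := hWlatt _ (Finset.mem_filter.1 hp).1
    exact ⟨pn, congrArg Prod.snd hpe⟩
  have hmidAB : ((1 : ℝ), (A + B) / 2) ∈ Q := by
    have hco := hQconv (hWQ hAW) (hWQ hBW) (by norm_num : (0:ℝ) ≤ 1/2)
      (by norm_num : (0:ℝ) ≤ 1/2) (by norm_num)
    have : ((1 : ℝ), (A + B) / 2) =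
        (1/2 : ℝ) • ((0 : ℝ), A) + (1/2 : ℝ) • ((2 : ℝ), B) := by
      apply Prod.ext
      · show (1 : ℝ) = (1/2 : ℝ) * 0 + (1/2 : ℝ) * 2
        norm_num
      · show ((A + B) / 2 : ℝ) = (1/2 : ℝ) * A + (1/2 : ℝ) * B
        ring
    rw [this]
    exact hco
  have hmidA'B' : ((1 : ℝ), (A' + B') / 2) ∈ Q := by
    have hco := hQconv (hWQ hA'W) (hWQ hB'W) (by norm_num : (0:ℝ) ≤ 1/2)
      (by norm_num : (0:ℝ) ≤ 1/2) (by norm_num)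
    have : ((1 : ℝ), (A' + B') / 2) =
        (1/2 : ℝ) • ((0 : ℝ), A') + (1/2 : ℝ) • ((2 : ℝ), B') := by
      apply Prod.ext
      · show (1 : ℝ) = (1/2 : ℝ) * 0 + (1/2 : ℝ) * 2
        norm_num
      · show ((A' + B') / 2 : ℝ) = (1/2 : ℝ) * A' + (1/2 : ℝ) * B'
        ring
    rw [this]
    exact hco
  -- d is an integer
  set F : Finset (ℝ × ℝ) := insert ((1 : ℝ), (A + B) / 2) W1 with hFdef
  have hFne : F.Nonempty := Finset.insert_nonempty _ _
  set M : ℝ := F.sup' hFne (fun p => p.2) with hMdef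
  have hABM : (A + B) / 2 ≤ M := by
    have := Finset.le_sup' (f := fun p : ℝ × ℝ => p.2)
      (Finset.mem_insert_self ((1 : ℝ), (A + B) / 2) W1)
    exact this
  have hMS : M ∈ S := by
    obtain ⟨p, hpF, hpe⟩ := Finset.exists_mem_eq_sup' hFne (fun p : ℝ × ℝ => p.2)
    rcases Finset.mem_insert.1 hpF with h | h
    · rw [hMdef, hpe, h]
      exact hmidAB
    · rw [hMdef, hpe]
      exact hW1Q p h
  have hMint : ∃ n : ℤ, M = (n : ℝ) := by
    obtain ⟨p, hpF, hpe⟩ := Finset.exists_mem_eq_sup' hFne (fun p : ℝ × ℝ => p.2)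
    rcases Finset.mem_insert.1 hpF with h | h
    · obtain ⟨s, hs⟩ := haodd
      obtain ⟨t, ht⟩ := hbodd
      refine ⟨s + t + 1, ?_⟩
      rw [hMdef, hpe, h]
      show ((A + B) / 2 : ℝ) = ((s + t + 1 : ℤ) : ℝ)
      rw [haA, hbB, hs, ht]
      push_cast
      ring
    · obtain ⟨n, hn⟩ := hW1int p h
      exact ⟨n, by rw [hMdef, hpe, hn]⟩
  have hdM : d = M := by
    have h1 : M ≤ d := hle_d _ hMS
    have h2 : d ≤ M := by
      have hpw : ∀ p ∈ W, p.2 ≤ ((B - A)/2) * p.1 + (M - (B - A)/2) := by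
        intro p hp
        rcases hx012 p hp with h0 | h1 | h2
        · have hpW0 : p ∈ W0 := Finset.mem_filter.2 ⟨hp, h0⟩
          have := Finset.le_sup' (f := fun p : ℝ × ℝ => p.2) hpW0
          rw [h0]
          have hAe : W0.sup' hW0ne (fun p : ℝ × ℝ => p.2) = A := rfl
          rw [hAe] at this
          linarith [hABM]
        · have hpF : p ∈ F := Finset.mem_insert_of_mem (Finset.mem_filter.2
            ⟨hp, h1⟩)
          have := Finset.le_sup' (f := fun p : ℝ × ℝ => p.2) hpF
          have hMe : F.sup' hFne (fun p : ℝ × ℝ => p.2) = M := rfl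
          rw [hMe] at this
          rw [h1]
          linarith
        · have hpW2 : p ∈ W2 := Finset.mem_filter.2 ⟨hp, h2⟩
          have := Finset.le_sup' (f := fun p : ℝ × ℝ => p.2) hpW2
          have hBe : W2.sup' hW2ne (fun p : ℝ × ℝ => p.2) = B := rfl
          rw [hBe] at this
          rw [h2]
          linarith [hABM]
      have := hhalf_le _ _ hpw _ hdS
      simp only at this
      linarith
    linarith
  -- c is an integer
  set F' : Finset (ℝ × ℝ) := insert ((1 : ℝ), (A' + B') / 2) W1 with hF'def
  have hF'ne : F'.Nonempty := Finset.insert_nonempty _ _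
  set M' : ℝ := F'.inf' hF'ne (fun p => p.2) with hM'def
  have hABM' : M' ≤ (A' + B') / 2 := by
    have := Finset.inf'_le (f := fun p : ℝ × ℝ => p.2)
      (Finset.mem_insert_self ((1 : ℝ), (A' + B') / 2) W1)
    exact this
  have hM'S : M' ∈ S := by
    obtain ⟨p, hpF, hpe⟩ := Finset.exists_mem_eq_inf' hF'ne (fun p : ℝ × ℝ => p.2)
    rcases Finset.mem_insert.1 hpF with h | h
    · rw [hM'def, hpe, h]
      exact hmidA'B'
    · rw [hM'def, hpe]
      exact hW1Q p h
  have hM'int : ∃ n : ℤ, M' = (n : ℝ) := by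
    obtain ⟨p, hpF, hpe⟩ := Finset.exists_mem_eq_inf' hF'ne (fun p : ℝ × ℝ => p.2)
    rcases Finset.mem_insert.1 hpF with h | h
    · obtain ⟨s, hs⟩ := ha'odd
      obtain ⟨t, ht⟩ := hb'odd
      refine ⟨s + t + 1, ?_⟩
      rw [hM'def, hpe, h]
      show ((A' + B') / 2 : ℝ) = ((s + t + 1 : ℤ) : ℝ)
      rw [haA', hbB', hs, ht]
      push_cast
      ring
    · obtain ⟨n, hn⟩ := hW1int p h
      exact ⟨n, by rw [hM'def, hpe, hn]⟩
  have hcM' : c = M' := by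
    have h1 : c ≤ M' := hc_le _ hM'S
    have h2 : M' ≤ c := by
      have hpw : ∀ p ∈ W, ((B' - A')/2) * p.1 + (M' - (B' - A')/2) ≤ p.2 := by
        intro p hp
        rcases hx012 p hp with h0 | h1 | h2
        · have hpW0 : p ∈ W0 := Finset.mem_filter.2 ⟨hp, h0⟩
          have := Finset.inf'_le (f := fun p : ℝ × ℝ => p.2) hpW0
          have hAe : W0.inf' hW0ne (fun p : ℝ × ℝ => p.2) = A' := rfl
          rw [hAe] at this
          rw [h0]
          linarith [hABM']
        · have hpF : p ∈ F' := Finset.mem_insert_of_mem (Finset.mem_filter.2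
            ⟨hp, h1⟩)
          have := Finset.inf'_le (f := fun p : ℝ × ℝ => p.2) hpF
          have hMe : F'.inf' hF'ne (fun p : ℝ × ℝ => p.2) = M' := rfl
          rw [hMe] at this
          rw [h1]
          linarith
        · have hpW2 : p ∈ W2 := Finset.mem_filter.2 ⟨hp, h2⟩
          have := Finset.inf'_le (f := fun p : ℝ × ℝ => p.2) hpW2
          have hBe : W2.inf' hW2ne (fun p : ℝ × ℝ => p.2) = B' := rfl
          rw [hBe] at this
          rw [h2]
          linarith [hABM']
      have := hhalf_ge _ _ hpw _ hcS
      simp only at this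
      linarith
    linarith
  obtain ⟨kd, hkd⟩ : ∃ n : ℤ, d = (n : ℝ) := hdM ▸ hMint
  obtain ⟨kc, hkc⟩ : ∃ n : ℤ, c = (n : ℝ) := hcM' ▸ hM'int
  have hcd : c < d := lt_trans hczm hzmd
  -- the four points are on the frontier
  have hfr0A : ((0 : ℝ), A) ∈ frontier Q := hfront0 A (hWQ hAW)
  have hfr2B : ((2 : ℝ), B) ∈ frontier Q := hfront2 B (hWQ hBW)
  have hfr1d : ((1 : ℝ), d) ∈ frontier Q := by
    rw [hfrQ]
    refine ⟨hdS, fun hint => ?_⟩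
    obtain ⟨ε', hε', hball'⟩ := Metric.mem_nhds_iff.1 (mem_interior_iff_mem_nhds.1 hint)
    have hmem : ((1 : ℝ), d + ε' / 2) ∈ Q := by
      apply hball'
      rw [Metric.mem_ball, Prod.dist_eq]
      refine max_lt (by simp [hε']) ?_
      rw [Real.dist_eq, show d + ε' / 2 - d = ε' / 2 by ring, abs_of_pos (by linarith)]
      linarith
    have := hle_d _ hmem
    linarith
  have hfr1c : ((1 : ℝ), c) ∈ frontier Q := by
    rw [hfrQ]
    refine ⟨hcS, fun hint => ?_⟩
    obtain ⟨ε', hε', hball'⟩ := Metric.mem_nhds_iff.1 (mem_interior_iff_mem_nhds.1 hint)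
    have hmem : ((1 : ℝ), c - ε' / 2) ∈ Q := by
      apply hball'
      rw [Metric.mem_ball, Prod.dist_eq]
      refine max_lt (by simp [hε']) ?_
      rw [Real.dist_eq, show c - ε' / 2 - c = -(ε' / 2) by ring, abs_neg,
        abs_of_pos (by linarith)]
      linarith
    have := hc_le _ hmem
    linarith
  -- classification of frontier lattice points
  have hclass : frontier Q ∩ latt =
      {((0 : ℝ), A), ((2 : ℝ), B), ((1 : ℝ), c), ((1 : ℝ), d)} := by
    apply Set.Subset.antisymm
    · rintro p ⟨hpf, pk, pn, rfl⟩
      have hpQ : ((pk : ℝ), (pn : ℝ)) ∈ Q := by rw [hfrQ] at hpf; exact hpf.1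
      have hk : pk = 0 ∨ pk = 1 ∨ pk = 2 := by
        have h := hQsub _ hpQ
        simp only [Set.mem_Icc] at h
        have e1 : (0 : ℤ) ≤ pk := by exact_mod_cast h.1
        have e2 : pk ≤ 2 := by exact_mod_cast h.2
        omega
      simp only [Set.mem_insert_iff, Set.mem_singleton_iff]
      rcases hk with rfl | rfl | rfl
      · -- x = 0 : the point must be (0, A)
        have hodd : Odd pn := by
          rcases Int.even_or_odd pn with he | ho
          · exact absurd hpf (hkey 0 pn Even.zero he)
          · exact ho
        have hpQ' : ((0 : ℝ), (pn : ℝ)) ∈ Q := by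
          have : (((0 : ℤ) : ℝ), (pn : ℝ)) = ((0 : ℝ), (pn : ℝ)) := by norm_num
          rwa [this] at hpQ
        have hle : (pn : ℝ) ≤ A := hAmax _ hpQ'
        have hlea : pn ≤ a := by rw [haA] at hle; exact_mod_cast hle
        rcases lt_or_eq_of_le hlea with hlt | heq
        · exfalso
          obtain ⟨s, hs⟩ := hodd
          have hev : Even (pn + 1) := ⟨s + 1, by omega⟩
          have h2Q : ((0 : ℝ), A) ∈ Q := hWQ hAW
          have hltR : (pn : ℝ) < (a : ℝ) := by exact_mod_cast hlt
          have hleR : (pn : ℝ) + 1 ≤ (a : ℝ) := by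
            have h' : pn + 1 ≤ a := by omega
            exact_mod_cast h'
          have hden : (0 : ℝ) < (a : ℝ) - pn := by linarith
          set θ : ℝ := ((a : ℝ) - ((pn : ℝ) + 1)) / ((a : ℝ) - pn) with hθdef
          have hθ0 : 0 ≤ θ := div_nonneg (by linarith) hden.le
          have hθle : θ ≤ 1 := by
            rw [hθdef, div_le_one hden]
            linarith
          have hθ1 : 0 ≤ 1 - θ := by linarith
          have hco := hQconv hpQ' h2Q hθ0 hθ1 (by ring)
          have heq2 : θ • ((0 : ℝ), (pn : ℝ)) + (1 - θ) • ((0 : ℝ), A) =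
              ((0 : ℝ), (((pn + 1 : ℤ)) : ℝ)) := by
            apply Prod.ext
            · show θ * 0 + (1 - θ) * 0 = 0
              ring
            · show θ * (pn : ℝ) + (1 - θ) * A = (((pn + 1 : ℤ)) : ℝ)
              rw [haA, hθdef]
              push_cast
              field_simp
              ring
          rw [heq2] at hco
          have hfrpt := hfront0 _ hco
          apply hkey 0 (pn + 1) Even.zero hev
          have hcast : (((0 : ℤ) : ℝ), ((pn + 1 : ℤ) : ℝ)) =
              ((0 : ℝ), ((pn + 1 : ℤ) : ℝ)) := by norm_num
          rwa [hcast]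
        · left
          rw [Prod.ext_iff]
          exact ⟨by norm_num, by show (pn : ℝ) = A; rw [haA, heq]⟩
      · -- x = 1 : the point must be (1, c) or (1, d)
        have hpQ' : ((1 : ℝ), (pn : ℝ)) ∈ Q := by
          have : (((1 : ℤ) : ℝ), (pn : ℝ)) = ((1 : ℝ), (pn : ℝ)) := by norm_num
          rwa [this] at hpQ
        have hpnS : (pn : ℝ) ∈ S := hpQ'
        have hnotint' : ((1 : ℝ), (pn : ℝ)) ∉ interior Q := by
          rw [hfrQ] at hpf
          have h2 := hpf.2
          have : (((1 : ℤ) : ℝ), (pn : ℝ)) = ((1 : ℝ), (pn : ℝ)) := by norm_num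
          rwa [this] at h2
        have hc1 : c ≤ (pn : ℝ) := hc_le _ hpnS
        have hd1 : (pn : ℝ) ≤ d := hle_d _ hpnS
        rcases eq_or_lt_of_le hc1 with heqc | hltc
        · right; right; left
          exact Prod.ext (by norm_num) heqc.symm
        rcases eq_or_lt_of_le hd1 with heqd | hltd
        · right; right; right
          exact Prod.ext (by norm_num) heqd
        exfalso
        apply hnotint'
        rcases lt_trichotomy ((pn : ℝ)) ((zm : ℝ)) with hl | he | hg
        · have hseg := hQconv.openSegment_interior_self_subset_interior hzint hcS
          apply hseg
          have hden : (0 : ℝ) < (zm : ℝ) - c := by linarith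
          refine ⟨((pn : ℝ) - c) / ((zm : ℝ) - c), ((zm : ℝ) - pn) / ((zm : ℝ) - c),
            div_pos (by linarith) hden, div_pos (by linarith) hden, ?_, ?_⟩
          · field_simp; ring
          · rw [Prod.smul_mk, Prod.smul_mk, Prod.mk_add_mk, Prod.mk.injEq]
            constructor
            · show ((pn : ℝ) - c) / ((zm : ℝ) - c) * 1 +
                ((zm : ℝ) - pn) / ((zm : ℝ) - c) * 1 = 1
              field_simp
              ring
            · show ((pn : ℝ) - c) / ((zm : ℝ) - c) * (zm : ℝ) +
                ((zm : ℝ) - pn) / ((zm : ℝ) - c) * c = (pn : ℝ)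
              field_simp
              ring
        · rw [he]
          exact hzint
        · have hseg := hQconv.openSegment_interior_self_subset_interior hzint hdS
          apply hseg
          have hden : (0 : ℝ) < d - (zm : ℝ) := by linarith
          refine ⟨(d - (pn : ℝ)) / (d - (zm : ℝ)), ((pn : ℝ) - zm) / (d - (zm : ℝ)),
            div_pos (by linarith) hden, div_pos (by linarith) hden, ?_, ?_⟩
          · field_simp; ring
          · rw [Prod.smul_mk, Prod.smul_mk, Prod.mk_add_mk, Prod.mk.injEq]
            constructor
            · show (d - (pn : ℝ)) / (d - (zm : ℝ)) * 1 +
                ((pn : ℝ) - zm) / (d - (zm : ℝ)) * 1 = 1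
              field_simp
              ring
            · show (d - (pn : ℝ)) / (d - (zm : ℝ)) * (zm : ℝ) +
                ((pn : ℝ) - zm) / (d - (zm : ℝ)) * d = (pn : ℝ)
              field_simp
              ring
      · -- x = 2 : the point must be (2, B)
        have hodd : Odd pn := by
          rcases Int.even_or_odd pn with he | ho
          · exact absurd hpf (hkey 2 pn ⟨1, rfl⟩ he)
          · exact ho
        have hpQ' : ((2 : ℝ), (pn : ℝ)) ∈ Q := by
          have : (((2 : ℤ) : ℝ), (pn : ℝ)) = ((2 : ℝ), (pn : ℝ)) := by norm_num
          rwa [this] at hpQ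
        have hle : (pn : ℝ) ≤ B := hBmax _ hpQ'
        have hleb : pn ≤ b := by rw [hbB] at hle; exact_mod_cast hle
        rcases lt_or_eq_of_le hleb with hlt | heq
        · exfalso
          obtain ⟨s, hs⟩ := hodd
          have hev : Even (pn + 1) := ⟨s + 1, by omega⟩
          have h2Q : ((2 : ℝ), B) ∈ Q := hWQ hBW
          have hltR : (pn : ℝ) < (b : ℝ) := by exact_mod_cast hlt
          have hleR : (pn : ℝ) + 1 ≤ (b : ℝ) := by
            have h' : pn + 1 ≤ b := by omega
            exact_mod_cast h'
          have hden : (0 : ℝ) < (b : ℝ) - pn := by linarith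
          set θ : ℝ := ((b : ℝ) - ((pn : ℝ) + 1)) / ((b : ℝ) - pn) with hθdef
          have hθ0 : 0 ≤ θ := div_nonneg (by linarith) hden.le
          have hθle : θ ≤ 1 := by
            rw [hθdef, div_le_one hden]
            linarith
          have hθ1 : 0 ≤ 1 - θ := by linarith
          have hco := hQconv hpQ' h2Q hθ0 hθ1 (by ring)
          have heq2 : θ • ((2 : ℝ), (pn : ℝ)) + (1 - θ) • ((2 : ℝ), B) =
              ((2 : ℝ), (((pn + 1 : ℤ)) : ℝ)) := by
            apply Prod.ext
            · show θ * 2 + (1 - θ) * 2 = 2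
              ring
            · show θ * (pn : ℝ) + (1 - θ) * B = (((pn + 1 : ℤ)) : ℝ)
              rw [hbB, hθdef]
              push_cast
              field_simp
              ring
          rw [heq2] at hco
          have hfrpt := hfront2 _ hco
          apply hkey 2 (pn + 1) ⟨1, rfl⟩ hev
          have hcast : (((2 : ℤ) : ℝ), ((pn + 1 : ℤ) : ℝ)) =
              ((2 : ℝ), ((pn + 1 : ℤ) : ℝ)) := by norm_num
          rwa [hcast]
        · right; left
          rw [Prod.ext_iff]
          exact ⟨by norm_num, by show (pn : ℝ) = B; rw [hbB, heq]⟩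
    · intro p hp
      simp only [Set.mem_insert_iff, Set.mem_singleton_iff] at hp
      rcases hp with rfl | rfl | rfl | rfl
      · exact ⟨hfr0A, 0, a, by rw [haA]; norm_num⟩
      · exact ⟨hfr2B, 2, b, by rw [hbB]; norm_num⟩
      · exact ⟨hfr1c, 1, kc, by rw [hkc]; norm_num⟩
      · exact ⟨hfr1d, 1, kd, by rw [hkd]; norm_num⟩
  -- conclusion
  show bcount Q = 4
  unfold bcount
  rw [hclass]
  rw [Set.ncard_insert_of_notMem ?hh1 (Set.toFinite _),
      Set.ncard_insert_of_notMem ?hh2 (Set.toFinite _),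
      Set.ncard_insert_of_notMem ?hh3 (Set.toFinite _),
      Set.ncard_singleton]
  case hh1 => norm_num [Prod.ext_iff]
  case hh2 => norm_num [Prod.ext_iff]
  case hh3 =>
    simp only [Set.mem_singleton_iff, Prod.ext_iff, not_and]
    intro _
    exact ne_of_lt hcd
end

section
/- For every integer i ≥ 1, the triangle P = conv((0,1/2), (1,1/2), (1/2,(i+2)/2)) is a denominator 2 polygon with b(P) = 0, i(P) = 0, b(2P) = 4 and i(2P) = i. -/
open Set Pointwise

/-- Closed triangle by half-plane description. -/
def hpS (u w k : ℝ) : Set (ℝ × ℝ) :=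
  {p | u ≤ p.2 ∧ p.2 ≤ u + k * p.1 ∧ p.2 ≤ u + k * (2 * w - p.1)}

def hpO (u w k : ℝ) : Set (ℝ × ℝ) :=
  {p | u < p.2 ∧ p.2 < u + k * p.1 ∧ p.2 < u + k * (2 * w - p.1)}

lemma convex_hpS (u w k : ℝ) : Convex ℝ (hpS u w k) := by
  intro x hx y hy a b ha hb hab
  obtain ⟨h1, h2, h3⟩ := hx
  obtain ⟨h4, h5, h6⟩ := hy
  have hb1 : b = 1 - a := by linarith
  subst hb1
  refine ⟨?_, ?_, ?_⟩ <;>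
    simp only [Prod.snd_add, Prod.fst_add, Prod.smul_snd, Prod.smul_fst, smul_eq_mul] <;>
    nlinarith [mul_le_mul_of_nonneg_left h1 ha, mul_le_mul_of_nonneg_left h2 ha,
      mul_le_mul_of_nonneg_left h3 ha, mul_le_mul_of_nonneg_left h4 hb,
      mul_le_mul_of_nonneg_left h5 hb, mul_le_mul_of_nonneg_left h6 hb]

lemma hull_eq (u w k : ℝ) (hw : 0 < w) (hk : 0 < k) :
    convexHull ℝ {((0 : ℝ), u), ((2 * w : ℝ), u), ((w : ℝ), u + k * w)} = hpS u w k := by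
  apply Subset.antisymm
  · apply convexHull_min _ (convex_hpS u w k)
    rintro p (rfl | rfl | rfl) <;> refine ⟨?_, ?_, ?_⟩ <;> simp [hpS] <;> nlinarith
  · rintro p ⟨h1, h2, h3⟩
    set c : ℝ := (p.2 - u) / (k * w) with hc
    set b : ℝ := (p.1 - c * w) / (2 * w) with hb
    set a : ℝ := 1 - b - c with ha
    have hkw : k * w ≠ 0 := by positivity
    have hcw : c * w = (p.2 - u) / k := by rw [hc]; field_simp
    have hc0 : 0 ≤ c := div_nonneg (by linarith) (by positivity)
    have hcw' : (p.2 - u) / k ≤ p.1 := by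
      rw [div_le_iff₀ hk]; nlinarith
    have hcw'' : (p.2 - u) / k ≤ 2 * w - p.1 := by
      rw [div_le_iff₀ hk]; nlinarith
    have hb0 : 0 ≤ b := div_nonneg (by rw [hcw]; linarith) (by positivity)
    have hbc : b ≤ 1 - c := by
      rw [hb, div_le_iff₀ (by positivity : (0:ℝ) < 2 * w)]
      nlinarith [hcw, hcw'']
    have ha0 : 0 ≤ a := by simp only [ha]; linarith
    have hsum : a + b + c = 1 := by simp [ha]; ring
    have hmem := Finset.centerMass_mem_convexHull (Finset.univ : Finset (Fin 3))
      (w := ![a, b, c]) (z := ![((0 : ℝ), u), ((2 * w : ℝ), u), ((w : ℝ), u + k * w)])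
      (s := {((0 : ℝ), u), ((2 * w : ℝ), u), ((w : ℝ), u + k * w)})
      (by intro j _; fin_cases j <;> simpa) (by simp [Fin.sum_univ_three]; linarith)
      (by intro j _; fin_cases j <;> simp)
    have hcm : Finset.centerMass (Finset.univ : Finset (Fin 3)) ![a, b, c]
        ![((0 : ℝ), u), ((2 * w : ℝ), u), ((w : ℝ), u + k * w)] = p := by
      rw [Finset.centerMass]
      simp only [Fin.sum_univ_three, Matrix.cons_val_zero, Matrix.cons_val_one, Matrix.head_cons,
        Matrix.cons_val_two, Matrix.tail_cons]
      rw [show a + b + c = 1 from hsum, inv_one, one_smul]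
      have hbw : b * (2 * w) = p.1 - c * w := by
        rw [hb, div_mul_cancel₀]; positivity
      have hckw : c * (k * w) = p.2 - u := by
        rw [hc, div_mul_cancel₀]; exact hkw
      apply Prod.ext
      · simp only [Prod.smul_mk, smul_eq_mul, Prod.mk_add_mk, Prod.fst_add, Prod.snd_add]
        linear_combination hbw
      · simp only [Prod.smul_mk, smul_eq_mul, Prod.mk_add_mk, Prod.fst_add, Prod.snd_add]
        linear_combination hckw + u * hsum
    rwa [hcm] at hmem

lemma isOpen_hpO (u w k : ℝ) : IsOpen (hpO u w k) := by
  have : hpO u w k = {p : ℝ × ℝ | u < p.2} ∩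
      ({p : ℝ × ℝ | p.2 < u + k * p.1} ∩ {p : ℝ × ℝ | p.2 < u + k * (2 * w - p.1)}) := by
    ext p; simp [hpO, and_assoc]
  rw [this]
  exact (isOpen_lt continuous_const continuous_snd).inter
    ((isOpen_lt continuous_snd (by fun_prop)).inter (isOpen_lt continuous_snd (by fun_prop)))

lemma interior_hpS (u w k : ℝ) : interior (hpS u w k) = hpO u w k := by
  apply Subset.antisymm
  · intro p hp
    rw [mem_interior_iff_mem_nhds, Metric.mem_nhds_iff] at hp
    obtain ⟨ε, hε, hball⟩ := hp
    have hd : ∀ t : ℝ, |t| < ε →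
        u ≤ p.2 + t ∧ p.2 + t ≤ u + k * p.1 ∧ p.2 + t ≤ u + k * (2 * w - p.1) := by
      intro t ht
      have hmem : ((p.1, p.2 + t) : ℝ × ℝ) ∈ Metric.ball p ε := by
        have hdist : dist ((p.1, p.2 + t) : ℝ × ℝ) p = |t| := by
          rw [Prod.dist_eq]
          simp only [dist_self, Real.dist_eq, add_sub_cancel_left]
          exact max_eq_right (abs_nonneg t)
        rw [Metric.mem_ball, hdist]; exact ht
      exact hball hmem
    obtain ⟨a1, a2, a3⟩ := hd (-(ε / 2)) (by rw [abs_neg, abs_of_pos (by linarith)]; linarith)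
    obtain ⟨b1, b2, b3⟩ := hd (ε / 2) (by rw [abs_of_pos (by linarith)]; linarith)
    exact ⟨by linarith, by linarith, by linarith⟩
  · exact interior_maximal (fun p hp => ⟨le_of_lt hp.1, le_of_lt hp.2.1, le_of_lt hp.2.2⟩)
      (isOpen_hpO u w k)

lemma isClosed_hpS (u w k : ℝ) (hw : 0 < w) (hk : 0 < k) : IsClosed (hpS u w k) := by
  rw [← hull_eq u w k hw hk]
  exact ((Set.toFinite _).isCompact_convexHull ℝ).isClosed

/-- the triangle `conv((0,1/2),(1,1/2),(1/2,(i+2)/2))` is a denominator 2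
polygon with `b(P) = 0`, `i(P) = 0`, `b(2P) = 4` and `i(2P) = i`, for every integer
`i ≥ 1`. -/
theorem stmt_10 (i : ℤ) (hi : 1 ≤ i) (P : Set (ℝ × ℝ))
    (hP : P = convexHull ℝ
      {((0 : ℝ), 1 / 2), ((1 : ℝ), 1 / 2), ((1 / 2 : ℝ), ((i : ℝ) + 2) / 2)}) :
    IsDen2 P ∧ bcount P = 0 ∧ icount P = 0 ∧
      bcount ((2 : ℝ) • P) = 4 ∧ (icount ((2 : ℝ) • P) : ℤ) = i := by
  classical
  have hi1 : (1 : ℝ) ≤ (i : ℝ) := by exact_mod_cast hi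
  set k : ℝ := (i : ℝ) + 1 with hkdef
  have hk : (0 : ℝ) < k := by linarith
  have hk2 : (2 : ℝ) ≤ k := by linarith
  -- rewrite P and 2 • P as half-plane sets
  have hset : ({((0 : ℝ), 1 / 2), ((1 : ℝ), 1 / 2), ((1 / 2 : ℝ), ((i : ℝ) + 2) / 2)} :
      Set (ℝ × ℝ)) =
      {((0 : ℝ), (1 / 2 : ℝ)), ((2 * (1 / 2 : ℝ) : ℝ), (1 / 2 : ℝ)),
        (((1 / 2 : ℝ) : ℝ), 1 / 2 + k * (1 / 2))} := by
    have e2 : ((1 : ℝ), (1 / 2 : ℝ)) = ((2 * (1 / 2 : ℝ) : ℝ), (1 / 2 : ℝ)) := by norm_num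
    have e3 : ((1 / 2 : ℝ), ((i : ℝ) + 2) / 2) = (((1 / 2 : ℝ) : ℝ), 1 / 2 + k * (1 / 2)) := by
      rw [Prod.mk.injEq]; exact ⟨rfl, by rw [hkdef]; ring⟩
    rw [e2, e3]
  have hP1 : P = hpS (1 / 2) (1 / 2) k := by
    rw [hP, hset, hull_eq _ _ _ (by norm_num) hk]
  have hset2 : (2 : ℝ) • ({((0 : ℝ), 1 / 2), ((1 : ℝ), 1 / 2),
      ((1 / 2 : ℝ), ((i : ℝ) + 2) / 2)} : Set (ℝ × ℝ)) =
      {((0 : ℝ), (1 : ℝ)), ((2 * (1 : ℝ) : ℝ), (1 : ℝ)), (((1 : ℝ) : ℝ), 1 + k * 1)} := by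
    rw [Set.smul_set_insert, Set.smul_set_insert, Set.smul_set_singleton]
    have e1 : (2 : ℝ) • ((0 : ℝ), (1 / 2 : ℝ)) = ((0 : ℝ), (1 : ℝ)) := by
      rw [Prod.smul_mk, Prod.mk.injEq]; norm_num
    have e2 : (2 : ℝ) • ((1 : ℝ), (1 / 2 : ℝ)) = ((2 * (1 : ℝ) : ℝ), (1 : ℝ)) := by
      rw [Prod.smul_mk, Prod.mk.injEq]; norm_num
    have e3 : (2 : ℝ) • ((1 / 2 : ℝ), ((i : ℝ) + 2) / 2) = (((1 : ℝ) : ℝ), 1 + k * 1) := by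
      rw [Prod.smul_mk, Prod.mk.injEq]
      constructor
      · norm_num
      · rw [hkdef]; simp [smul_eq_mul]; ring
    rw [e1, e2, e3]
  have h2P : (2 : ℝ) • P = hpS 1 1 k := by
    rw [hP, ← convexHull_smul, hset2, hull_eq _ _ _ one_pos hk]
  -- no lattice point lies in P at all
  have hPlatt : ∀ p : ℝ × ℝ, p ∈ hpS (1 / 2) (1 / 2) k → p ∉ latt := by
    rintro p hpmem ⟨m, n, rfl⟩
    obtain ⟨h1, h2, h3⟩ := hpmem
    dsimp only at h1 h2 h3
    have hn1 : (1 : ℝ) ≤ (n : ℝ) := by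
      have h0 : (0 : ℤ) < n := by exact_mod_cast lt_of_lt_of_le (by norm_num : (0:ℝ) < 1/2) h1
      exact_mod_cast h0
    have hm1 : (1 : ℝ) ≤ (m : ℝ) := by
      have h0 : (0 : ℝ) < (m : ℝ) := by nlinarith
      have h0' : (0 : ℤ) < m := by exact_mod_cast h0
      exact_mod_cast h0'
    nlinarith
  have hPclosed : IsClosed P := by rw [hP1]; exact isClosed_hpS _ _ _ (by norm_num) hk
  refine ⟨⟨⟨{((0 : ℝ), 1 / 2), ((1 : ℝ), 1 / 2), ((1 / 2 : ℝ), ((i : ℝ) + 2) / 2)}, ?_, ?_⟩, ?_⟩,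
    ?_, ?_, ?_, ?_⟩
  · -- vertices are half-lattice points
    intro v hv
    simp only [Finset.mem_insert, Finset.mem_singleton] at hv
    rcases hv with rfl | rfl | rfl
    · exact ⟨0, 1, by rw [Prod.smul_mk, Prod.mk.injEq]; norm_num⟩
    · exact ⟨2, 1, by rw [Prod.smul_mk, Prod.mk.injEq]; norm_num⟩
    · refine ⟨1, i + 2, ?_⟩
      rw [Prod.smul_mk, Prod.mk.injEq]
      constructor
      · norm_num
      · push_cast; simp [smul_eq_mul]; ring
  · rw [hP]; congr 1; simp
  · -- nonempty interior
    rw [hP1, interior_hpS]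
    refine ⟨((1 : ℝ) / 2, (1 : ℝ)), ?_, ?_, ?_⟩ <;> dsimp only <;> nlinarith
  · -- bcount P = 0
    have : frontier P ∩ latt = ∅ := by
      rw [Set.eq_empty_iff_forall_notMem]
      rintro p ⟨hf, hl⟩
      exact hPlatt p (hP1 ▸ hPclosed.frontier_subset hf) hl
    simp [bcount, this]
  · -- icount P = 0
    have : interior P ∩ latt = ∅ := by
      rw [Set.eq_empty_iff_forall_notMem]
      rintro p ⟨hf, hl⟩
      exact hPlatt p (hP1 ▸ interior_subset hf) hl
    simp [icount, this]
  · -- bcount (2P) = 4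
    have hfr : frontier ((2 : ℝ) • P) ∩ latt =
        {((0 : ℝ), (1 : ℝ)), ((2 : ℝ), (1 : ℝ)), ((1 : ℝ), (1 : ℝ)), ((1 : ℝ), (i : ℝ) + 2)} := by
      rw [h2P, (isClosed_hpS 1 1 k one_pos hk).frontier_eq, interior_hpS]
      ext p
      constructor
      · rintro ⟨⟨⟨h1, h2, h3⟩, hns⟩, m, n, rfl⟩
        dsimp only at h1 h2 h3
        have hm0 : (0 : ℤ) ≤ m := by
          by_contra hcon
          push_neg at hcon
          have hm1' : m ≤ -1 := by omega
          have : (m : ℝ) ≤ -1 := by exact_mod_cast hm1'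
          nlinarith [mul_le_mul_of_nonneg_left this (le_of_lt hk)]
        have hm2 : m ≤ 2 := by
          by_contra hcon
          push_neg at hcon
          have : (2 : ℝ) - (m : ℝ) ≤ -1 := by
            have : (3 : ℝ) ≤ (m : ℝ) := by exact_mod_cast hcon
            linarith
          nlinarith [mul_le_mul_of_nonneg_left this (le_of_lt hk)]
        interval_cases m
        · -- m = 0 : point (0,1)
          have hn : n = 1 := by
            have : (n : ℝ) = 1 := by push_cast at h1 h2 ⊢; linarith [mul_zero k]; 
            exact_mod_cast this
          subst hn
          simp
        · -- m = 1
          have hn1 : (1 : ℝ) ≤ (n : ℝ) := by exact_mod_cast h1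
          rcases eq_or_lt_of_le hn1 with heq | hlt
          · have hn : n = 1 := by exact_mod_cast heq.symm
            subst hn
            simp
          · have hne : (n : ℝ) = 1 + k := by
              by_contra hne
              have h4 : (n : ℝ) < 1 + k := by
                push_cast at h2
                have : (n : ℝ) ≤ 1 + k := by linarith [h2]
                exact lt_of_le_of_ne this hne
              exact hns ⟨hlt, by push_cast; linarith, by push_cast; linarith⟩
            have hn : n = i + 2 := by
              have : (n : ℝ) = (i : ℝ) + 2 := by rw [hne, hkdef]; ring
              exact_mod_cast this
            subst hn
            right; right; right
            rw [Set.mem_singleton_iff, Prod.mk.injEq]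
            refine ⟨by norm_num, by push_cast; ring⟩
        · -- m = 2 : point (2,1)
          have hn : n = 1 := by
            have : (n : ℝ) = 1 := by push_cast at h1 h3 ⊢; nlinarith
            exact_mod_cast this
          subst hn
          simp
      · intro hp
        simp only [Set.mem_insert_iff, Set.mem_singleton_iff] at hp
        rcases hp with rfl | rfl | rfl | rfl
        · exact ⟨⟨⟨le_refl _, by dsimp only; nlinarith, by dsimp only; nlinarith⟩,
            fun h => absurd h.1 (lt_irrefl _)⟩, 0, 1, by norm_num⟩
        · exact ⟨⟨⟨le_refl _, by dsimp only; nlinarith, by dsimp only; nlinarith⟩,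
            fun h => absurd h.1 (lt_irrefl _)⟩, 2, 1, by norm_num⟩
        · exact ⟨⟨⟨le_refl _, by dsimp only; nlinarith, by dsimp only; nlinarith⟩,
            fun h => absurd h.1 (lt_irrefl _)⟩, 1, 1, by norm_num⟩
        · refine ⟨⟨⟨by dsimp only; linarith, by dsimp only; nlinarith,
            by dsimp only; nlinarith⟩, fun h => ?_⟩, 1, i + 2, by norm_num⟩
          have := h.2.2
          dsimp only at this
          rw [hkdef] at this
          nlinarith
    have hne1 : ((i : ℝ) + 2) ≠ 1 := by intro h; linarith
    rw [bcount, hfr]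
    rw [Set.ncard_insert_of_notMem (by simp [Prod.ext_iff]),
      Set.ncard_insert_of_notMem (by simp [Prod.ext_iff]),
      Set.ncard_insert_of_notMem (by simp [Prod.ext_iff]; intro h; exact absurd h.symm hne1),
      Set.ncard_singleton]
  · -- icount (2P) = i
    have hinj : Function.Injective (fun t : ℤ => (((1 : ℝ), (t : ℝ)) : ℝ × ℝ)) := by
      intro a b h
      dsimp only at h
      rw [Prod.mk.injEq] at h
      exact_mod_cast h.2
    have hint : interior ((2 : ℝ) • P) ∩ latt =
        (fun t : ℤ => (((1 : ℝ), (t : ℝ)) : ℝ × ℝ)) '' ↑(Finset.Icc (2 : ℤ) (i + 1)) := by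
      rw [h2P, interior_hpS]
      ext p
      constructor
      · rintro ⟨⟨h1, h2, h3⟩, m, n, rfl⟩
        dsimp only at h1 h2 h3
        have hn2 : (2 : ℝ) ≤ (n : ℝ) := by
          have : (1 : ℤ) < n := by exact_mod_cast h1
          exact_mod_cast this
        have hm1 : m = 1 := by
          have hml : (1 : ℤ) ≤ m := by
            by_contra hcon
            push_neg at hcon
            have hm0' : m ≤ 0 := by omega
            have : (m : ℝ) ≤ 0 := by exact_mod_cast hm0'
            nlinarith [mul_le_mul_of_nonneg_left this (le_of_lt hk)]
          have hmr : m ≤ 1 := by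
            by_contra hcon
            push_neg at hcon
            have : (2 : ℝ) - (m : ℝ) ≤ 0 := by
              have : (2 : ℝ) ≤ (m : ℝ) := by exact_mod_cast hcon
              linarith
            nlinarith [mul_le_mul_of_nonneg_left this (le_of_lt hk)]
          omega
        subst hm1
        have hnle : n ≤ i + 1 := by
          have : (n : ℝ) < (i : ℝ) + 2 := by
            push_cast at h2
            rw [hkdef] at h2
            linarith
          have : n < i + 2 := by exact_mod_cast this
          omega
        have hnge : 2 ≤ n := by exact_mod_cast hn2
        exact ⟨n, by simp [Finset.mem_Icc]; exact ⟨hnge, hnle⟩, by norm_num⟩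
      · rintro ⟨t, ht, rfl⟩
        simp only [Finset.coe_Icc, Set.mem_Icc] at ht
        have ht2 : (2 : ℝ) ≤ (t : ℝ) := by exact_mod_cast ht.1
        have hti : (t : ℝ) ≤ (i : ℝ) + 1 := by exact_mod_cast ht.2
        refine ⟨⟨by dsimp only; linarith, by dsimp only; rw [hkdef]; nlinarith,
          by dsimp only; rw [hkdef]; nlinarith⟩, 1, t, by norm_num⟩
    rw [icount, hint, Set.ncard_image_of_injective _ hinj, Set.ncard_coe_finset, Int.card_Icc]
    have : i + 1 + 1 - 2 = i := by ring
    rw [this, Int.toNat_of_nonneg (by linarith)]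
end

section
/- For every integer i ≥ 1, the triangle P = conv((0,0), (1,1/2), (1/2,(i+1)/2)) is a denominator 2 polygon with b(P) = 1, i(P) = 0, b(2P) = 3 and i(2P) = i. -/
open Set Pointwise

namespace Stmt11Aux

def Hs (a b c : ℝ) : Set (ℝ × ℝ) := {p | a * p.1 + b * p.2 ≤ c}

lemma mem_Hs {a b c : ℝ} {p : ℝ × ℝ} : p ∈ Hs a b c ↔ a * p.1 + b * p.2 ≤ c := Iff.rfl

lemma convex_Hs (a b c : ℝ) : Convex ℝ (Hs a b c) := by
  apply convex_halfSpace_le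
  constructor
  · intro p q; simp only [Prod.fst_add, Prod.snd_add]; ring
  · intro t p; simp only [Prod.smul_fst, Prod.smul_snd, smul_eq_mul]; ring

lemma isClosed_Hs (a b c : ℝ) : IsClosed (Hs a b c) :=
  isClosed_le (by fun_prop) continuous_const

lemma interior_Hs (a b c : ℝ) (h : a ≠ 0 ∨ b ≠ 0) :
    interior (Hs a b c) = {p : ℝ × ℝ | a * p.1 + b * p.2 < c} := by
  let f : (ℝ × ℝ) →L[ℝ] ℝ :=
    a • ContinuousLinearMap.fst ℝ ℝ ℝ + b • ContinuousLinearMap.snd ℝ ℝ ℝ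
  have hf : ∀ p : ℝ × ℝ, f p = a * p.1 + b * p.2 := fun p => by
    simp [f, smul_eq_mul]
  have hsurj : Function.Surjective f := by
    intro y
    rcases h with h | h
    · exact ⟨(y / a, 0), by rw [hf]; field_simp; ring⟩
    · exact ⟨(0, y / b), by rw [hf]; field_simp; ring⟩
  have h1 : Hs a b c = f ⁻¹' Iic c := by ext p; simp [Hs, hf]
  have h2 : {p : ℝ × ℝ | a * p.1 + b * p.2 < c} = f ⁻¹' Iio c := by ext p; simp [hf]
  rw [h1, f.interior_preimage hsurj, interior_Iic, h2]

lemma smul_Hs (a b c : ℝ) : (2:ℝ) • Hs a b c = Hs a b (2*c) := by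
  ext p
  constructor
  · rintro ⟨q, hq, rfl⟩
    simp only [Hs, mem_setOf_eq, Prod.smul_fst, Prod.smul_snd, smul_eq_mul] at *
    nlinarith
  · intro hp
    refine ⟨(p.1/2, p.2/2), ?_, ?_⟩
    · simp only [Hs, mem_setOf_eq] at *; nlinarith
    · apply Prod.ext <;> simp [Prod.smul_fst, Prod.smul_snd] <;> ring

lemma hull_eq (r : ℝ) (hr : 1 ≤ r) :
    convexHull ℝ {((0:ℝ),(0:ℝ)), ((1:ℝ), 1/2), ((1/2:ℝ), (r+1)/2)} =
      Hs 1 (-2) 0 ∩ Hs (-(r+1)) 1 0 ∩ Hs r 1 (r + 1/2) := by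
  apply le_antisymm
  · apply convexHull_min
    · rintro p (rfl | rfl | rfl) <;>
        refine ⟨⟨?_, ?_⟩, ?_⟩ <;> simp only [mem_Hs] <;> norm_num <;> nlinarith
    · exact ((convex_Hs _ _ _).inter (convex_Hs _ _ _)).inter (convex_Hs _ _ _)
  · rintro p ⟨⟨h1, h2⟩, h3⟩
    simp only [Hs, mem_setOf_eq] at h1 h2 h3
    have hd : (0:ℝ) < 2*r+1 := by linarith
    have hwa : (0:ℝ) ≤ 1 - (2*(r+1)*p.1 - 2*p.2)/(2*r+1) - (4*p.2 - 2*p.1)/(2*r+1) := by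
      rw [sub_sub, ← add_div, sub_nonneg, div_le_one hd]
      nlinarith
    have hwb : (0:ℝ) ≤ (2*(r+1)*p.1 - 2*p.2)/(2*r+1) := by
      apply div_nonneg _ (le_of_lt hd); nlinarith
    have hwc : (0:ℝ) ≤ (4*p.2 - 2*p.1)/(2*r+1) := by
      apply div_nonneg _ (le_of_lt hd); nlinarith
    have hsum : ∑ j : Fin 3, ![1 - (2*(r+1)*p.1 - 2*p.2)/(2*r+1) - (4*p.2 - 2*p.1)/(2*r+1),
        (2*(r+1)*p.1 - 2*p.2)/(2*r+1), (4*p.2 - 2*p.1)/(2*r+1)] j = 1 := by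
      simp [Fin.sum_univ_three]; ring
    have hmem := Finset.centerMass_mem_convexHull (Finset.univ : Finset (Fin 3))
        (w := ![1 - (2*(r+1)*p.1 - 2*p.2)/(2*r+1) - (4*p.2 - 2*p.1)/(2*r+1),
          (2*(r+1)*p.1 - 2*p.2)/(2*r+1), (4*p.2 - 2*p.1)/(2*r+1)])
        (z := ![((0:ℝ),(0:ℝ)), ((1:ℝ), 1/2), ((1/2:ℝ), (r+1)/2)])
        (s := {((0:ℝ),(0:ℝ)), ((1:ℝ), 1/2), ((1/2:ℝ), (r+1)/2)})
        ?_ (by rw [hsum]; norm_num) ?_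
    · rw [Finset.centerMass_eq_of_sum_1 _ _ hsum, Fin.sum_univ_three] at hmem
      simp only [Matrix.cons_val_zero, Matrix.cons_val_one, Matrix.head_cons,
        Matrix.cons_val_two, Matrix.tail_cons] at hmem
      have key : (1 - (2*(r+1)*p.1 - 2*p.2)/(2*r+1) - (4*p.2 - 2*p.1)/(2*r+1)) •
            ((0:ℝ),(0:ℝ)) + ((2*(r+1)*p.1 - 2*p.2)/(2*r+1)) • ((1:ℝ), (1:ℝ)/2) +
            ((4*p.2 - 2*p.1)/(2*r+1)) • ((1:ℝ)/2, (r+1)/2) = p := by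
        apply Prod.ext <;>
          simp only [Prod.fst_add, Prod.snd_add, Prod.smul_fst, Prod.smul_snd,
            smul_eq_mul] <;> field_simp <;> ring
      rwa [key] at hmem
    · intro j _
      fin_cases j <;> simp only [Matrix.cons_val_zero, Matrix.cons_val_one, Matrix.head_cons,
        Matrix.cons_val_two, Matrix.tail_cons] <;> [exact hwa; exact hwb; exact hwc]
    · intro j _
      fin_cases j <;> simp


def SC (r c : ℝ) : Set (ℝ × ℝ) := Hs 1 (-2) 0 ∩ Hs (-(r+1)) 1 0 ∩ Hs r 1 c

def SI (r c : ℝ) : Set (ℝ × ℝ) :=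
  {p | 1 * p.1 + (-2) * p.2 < 0 ∧ (-(r+1)) * p.1 + 1 * p.2 < 0 ∧ r * p.1 + 1 * p.2 < c}

lemma lattP (i : ℤ) (hi : 1 ≤ i) :
    SC (i:ℝ) ((i:ℝ) + 1/2) ∩ latt = {((0:ℝ),(0:ℝ))} := by
  ext p
  simp only [SC, Hs, latt, mem_inter_iff, mem_setOf_eq, mem_singleton_iff]
  constructor
  · rintro ⟨⟨⟨h1, h2⟩, h3⟩, m, n, rfl⟩
    simp only at h1 h2 h3
    have g1 : m ≤ 2*n := by
      have : (m:ℝ) ≤ ((2*n : ℤ):ℝ) := by push_cast; nlinarith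
      exact_mod_cast this
    have g2 : n ≤ (i+1)*m := by
      have : (n:ℝ) ≤ (((i+1)*m : ℤ):ℝ) := by push_cast; nlinarith
      exact_mod_cast this
    have g3 : i*m + n ≤ i := by
      have h : ((i*m + n : ℤ):ℝ) < ((i+1 : ℤ):ℝ) := by push_cast; nlinarith
      exact Int.lt_add_one_iff.mp (by exact_mod_cast h)
    have hm0 : 0 ≤ m := by
      by_contra hc
      push_neg at hc
      nlinarith [mul_nonneg (by linarith : (0:ℤ) ≤ 2*i - 2) (by linarith : (0:ℤ) ≤ -m)]
    have hm : m = 0 := by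
      by_contra hc
      have h1m : 1 ≤ m := by omega
      have hn1 : 1 ≤ n := by omega
      nlinarith [mul_nonneg (by linarith : (0:ℤ) ≤ i) (by linarith : (0:ℤ) ≤ m - 1)]
    have hn : n = 0 := by
      rw [hm] at g1 g2
      simp only [mul_zero] at g2
      omega
    rw [hm, hn]; norm_num
  · rintro rfl
    refine ⟨⟨⟨by norm_num, by norm_num⟩, ?_⟩, 0, 0, by norm_num⟩
    have : (1:ℝ) ≤ (i:ℝ) := by exact_mod_cast hi
    norm_num; linarith

lemma latt2P_int (i : ℤ) (hi : 1 ≤ i) :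
    SI (i:ℝ) (2*(i:ℝ)+1) ∩ latt = (fun n : ℤ => ((1:ℝ), (n:ℝ))) '' (Set.Icc 1 i) := by
  ext p
  simp only [SI, latt, mem_inter_iff, mem_setOf_eq, mem_image, Set.mem_Icc]
  constructor
  · rintro ⟨⟨h1, h2, h3⟩, m, n, rfl⟩
    simp only at h1 h2 h3
    have g1 : m < 2*n := by
      have : (m:ℝ) < ((2*n : ℤ):ℝ) := by push_cast; nlinarith
      exact_mod_cast this
    have g2 : n < (i+1)*m := by
      have : (n:ℝ) < (((i+1)*m : ℤ):ℝ) := by push_cast; nlinarith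
      exact_mod_cast this
    have g3 : i*m + n ≤ 2*i := by
      have h : ((i*m + n : ℤ):ℝ) < ((2*i+1 : ℤ):ℝ) := by push_cast; nlinarith
      exact Int.lt_add_one_iff.mp (by exact_mod_cast h)
    have hm1 : 1 ≤ m := by
      by_contra hc
      push_neg at hc
      nlinarith [mul_nonneg (by linarith : (0:ℤ) ≤ 2*i - 2) (by linarith : (0:ℤ) ≤ -m)]
    have hm : m = 1 := by
      by_contra hc
      have h2m : 2 ≤ m := by omega
      have hn1 : 1 ≤ n := by omega
      nlinarith [mul_nonneg (by linarith : (0:ℤ) ≤ i) (by linarith : (0:ℤ) ≤ m - 2)]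
    refine ⟨n, ⟨by omega, ?_⟩, ?_⟩
    · rw [hm] at g2; omega
    · rw [hm]; norm_num
  · rintro ⟨n, ⟨hn1, hn2⟩, rfl⟩
    have hn1' : (1:ℝ) ≤ (n:ℝ) := by exact_mod_cast hn1
    have hn2' : ((n:ℝ)) ≤ (i:ℝ) := by exact_mod_cast hn2
    have hi' : (1:ℝ) ≤ (i:ℝ) := by exact_mod_cast hi
    exact ⟨⟨by norm_num; linarith, by norm_num; linarith, by norm_num; linarith⟩,
      1, n, by norm_num⟩

lemma latt2P_front (i : ℤ) (hi : 1 ≤ i) :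
    (SC (i:ℝ) (2*(i:ℝ)+1) \ SI (i:ℝ) (2*(i:ℝ)+1)) ∩ latt =
      {((0:ℝ),(0:ℝ)), ((2:ℝ),(1:ℝ)), ((1:ℝ),(i:ℝ)+1)} := by
  have hi' : (1:ℝ) ≤ (i:ℝ) := by exact_mod_cast hi
  ext p
  simp only [SC, SI, Hs, latt, mem_inter_iff, mem_diff, mem_setOf_eq, mem_insert_iff,
    mem_singleton_iff]
  constructor
  · rintro ⟨⟨⟨⟨h1, h2⟩, h3⟩, hnot⟩, m, n, rfl⟩
    simp only at h1 h2 h3 hnot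
    have g1 : m ≤ 2*n := by
      have : (m:ℝ) ≤ ((2*n : ℤ):ℝ) := by push_cast; nlinarith
      exact_mod_cast this
    have g2 : n ≤ (i+1)*m := by
      have : (n:ℝ) ≤ (((i+1)*m : ℤ):ℝ) := by push_cast; nlinarith
      exact_mod_cast this
    have g3 : i*m + n ≤ 2*i+1 := by
      have h : ((i*m + n : ℤ):ℝ) ≤ ((2*i+1 : ℤ):ℝ) := by push_cast; nlinarith
      exact_mod_cast h
    have hd : 2*n ≤ m ∨ (i+1)*m ≤ n ∨ 2*i+1 ≤ i*m + n := by
      by_contra hc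
      push_neg at hc
      obtain ⟨c1, c2, c3⟩ := hc
      refine hnot ⟨?_, ?_, ?_⟩
      · have : ((2*n:ℤ):ℝ) > (m:ℝ) := by exact_mod_cast c1
        push_cast at this; nlinarith
      · have : (((i+1)*m:ℤ):ℝ) > (n:ℝ) := by exact_mod_cast c2
        push_cast at this; nlinarith
      · have : ((i*m+n:ℤ):ℝ) < ((2*i+1:ℤ):ℝ) := by exact_mod_cast c3
        push_cast at this; nlinarith
    have hm0 : 0 ≤ m := by
      by_contra hc
      push_neg at hc
      nlinarith [mul_nonneg (by linarith : (0:ℤ) ≤ 2*i - 2) (by linarith : (0:ℤ) ≤ -m)]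
    have hm2 : m ≤ 2 := by
      by_contra hc
      push_neg at hc
      nlinarith [mul_nonneg (by linarith : (0:ℤ) ≤ 2*i+1) (by linarith : (0:ℤ) ≤ m - 3)]
    have key : (m = 0 ∧ n = 0) ∨ (m = 2 ∧ n = 1) ∨ (m = 1 ∧ n = i+1) := by
      interval_cases m <;> omega
    rcases key with ⟨hm, hn⟩ | ⟨hm, hn⟩ | ⟨hm, hn⟩
    · left; rw [hm, hn]; norm_num
    · right; left; rw [hm, hn]; norm_num
    · right; right; rw [hm, hn]; push_cast; norm_num
  · rintro (rfl | rfl | rfl)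
    · exact ⟨⟨⟨⟨by norm_num, by norm_num⟩, by norm_num; linarith⟩,
        by rintro ⟨hh1, hh2, hh3⟩; norm_num at hh1⟩, 0, 0, by norm_num⟩
    · exact ⟨⟨⟨⟨by norm_num, by norm_num; linarith⟩, by norm_num; linarith⟩,
        by rintro ⟨hh1, hh2, hh3⟩; norm_num at hh3; linarith⟩, 2, 1, by norm_num⟩
    · exact ⟨⟨⟨⟨by norm_num; linarith, by norm_num⟩, by norm_num; linarith⟩,
        by rintro ⟨hh1, hh2, hh3⟩; norm_num at hh2⟩, 1, i+1, by push_cast; norm_num⟩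


lemma isClosed_SC (r c : ℝ) : IsClosed (SC r c) :=
  ((isClosed_Hs _ _ _).inter (isClosed_Hs _ _ _)).inter (isClosed_Hs _ _ _)

lemma interior_SC (r c : ℝ) : interior (SC r c) = SI r c := by
  rw [SC, interior_inter, interior_inter, interior_Hs _ _ _ (Or.inl one_ne_zero),
    interior_Hs _ _ _ (Or.inr one_ne_zero), interior_Hs _ _ _ (Or.inr one_ne_zero)]
  ext p
  simp only [SI, mem_inter_iff, mem_setOf_eq]
  tauto

lemma frontier_SC (r c : ℝ) : frontier (SC r c) = SC r c \ SI r c := by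
  rw [frontier, (isClosed_SC r c).closure_eq, interior_SC]

lemma smul_SC (r : ℝ) : (2:ℝ) • SC r (r + 1/2) = SC r (2*r+1) := by
  have e1 : (2:ℝ) * 0 = 0 := by norm_num
  have e2 : (2:ℝ) * (r + 1/2) = 2*r+1 := by ring
  rw [SC, SC, smul_set_inter₀ (two_ne_zero), smul_set_inter₀ (two_ne_zero),
    smul_Hs, smul_Hs, smul_Hs, e1, e2]

lemma hull_eq' (r : ℝ) (hr : 1 ≤ r) :
    convexHull ℝ {((0:ℝ),(0:ℝ)), ((1:ℝ), 1/2), ((1/2:ℝ), (r+1)/2)} = SC r (r + 1/2) :=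
  hull_eq r hr

end Stmt11Aux

open Stmt11Aux in
/-- the triangle `conv((0,0),(1,1/2),(1/2,(i+1)/2))` is a denominator 2
polygon with `b(P) = 1`, `i(P) = 0`, `b(2P) = 3` and `i(2P) = i`, for every integer
`i ≥ 1`. -/
theorem stmt_11 (i : ℤ) (hi : 1 ≤ i) (P : Set (ℝ × ℝ))
    (hP : P = convexHull ℝ
      {((0 : ℝ), (0 : ℝ)), ((1 : ℝ), 1 / 2), ((1 / 2 : ℝ), ((i : ℝ) + 1) / 2)}) :
    IsDen2 P ∧ bcount P = 1 ∧ icount P = 0 ∧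
      bcount ((2 : ℝ) • P) = 3 ∧ (icount ((2 : ℝ) • P) : ℤ) = i := by
  have hr : (1:ℝ) ≤ (i:ℝ) := by exact_mod_cast hi
  have hPH : P = SC (i:ℝ) ((i:ℝ) + 1/2) := by
    rw [hP, hull_eq' (i:ℝ) hr]
  have h2P : (2:ℝ) • P = SC (i:ℝ) (2*(i:ℝ)+1) := by
    rw [hPH, smul_SC]
  refine ⟨⟨⟨{((0 : ℝ), (0 : ℝ)), ((1 : ℝ), 1 / 2), ((1 / 2 : ℝ), ((i : ℝ) + 1) / 2)},
      ?_, ?_⟩, ?_⟩, ?_, ?_, ?_, ?_⟩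
  · intro v hv
    simp only [Finset.mem_insert, Finset.mem_singleton] at hv
    rcases hv with rfl | rfl | rfl
    · exact ⟨0, 0, by apply Prod.ext <;> simp⟩
    · exact ⟨2, 1, by apply Prod.ext <;> simp [Prod.smul_fst, Prod.smul_snd] <;> norm_num⟩
    · exact ⟨1, i + 1, by
        apply Prod.ext <;> simp [Prod.smul_fst, Prod.smul_snd] <;> push_cast <;> ring⟩
  · rw [hP]; congr 1; simp
  · refine ⟨((3:ℝ)/4, (1:ℝ)/2), ?_⟩
    rw [hPH, interior_SC]
    refine ⟨by norm_num, by norm_num; linarith, by norm_num; linarith⟩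
  · rw [bcount, hPH, frontier_SC]
    have hsub : (SC (i:ℝ) ((i:ℝ) + 1/2) \ SI (i:ℝ) ((i:ℝ) + 1/2)) ∩ latt
        = {((0:ℝ),(0:ℝ))} := by
      apply Subset.antisymm
      · intro p hp
        have : p ∈ SC (i:ℝ) ((i:ℝ) + 1/2) ∩ latt := ⟨hp.1.1, hp.2⟩
        rw [lattP i hi] at this
        exact this
      · rintro p rfl
        have h0 : ((0:ℝ),(0:ℝ)) ∈ SC (i:ℝ) ((i:ℝ) + 1/2) ∩ latt := by
          rw [lattP i hi]; rfl
        refine ⟨⟨h0.1, ?_⟩, h0.2⟩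
        rintro ⟨hh1, _, _⟩
        norm_num at hh1
    rw [hsub, Set.ncard_singleton]
  · rw [icount, hPH, interior_SC]
    have hsub : SI (i:ℝ) ((i:ℝ) + 1/2) ∩ latt = ∅ := by
      rw [Set.eq_empty_iff_forall_notMem]
      rintro p ⟨hp, hl⟩
      have : p ∈ SC (i:ℝ) ((i:ℝ) + 1/2) ∩ latt :=
        ⟨⟨⟨le_of_lt hp.1, le_of_lt hp.2.1⟩, le_of_lt hp.2.2⟩, hl⟩
      rw [lattP i hi] at this
      rw [this] at hp
      obtain ⟨hh1, _, _⟩ := hp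
      norm_num at hh1
    rw [hsub, Set.ncard_empty]
  · rw [bcount, h2P, frontier_SC, latt2P_front i hi]
    rw [Set.ncard_insert_of_notMem, Set.ncard_insert_of_notMem, Set.ncard_singleton]
    · simp only [mem_singleton_iff, Prod.mk.injEq, not_and]
      intro h; norm_num at h
    · simp only [mem_insert_iff, mem_singleton_iff, Prod.mk.injEq, not_or, not_and]
      exact ⟨fun h => by norm_num at h, fun h => by norm_num at h⟩
  · rw [icount, h2P, interior_SC, latt2P_int i hi]
    rw [Set.ncard_image_of_injective _ (fun a b h => by simpa using h)]
    rw [← Finset.coe_Icc, Set.ncard_coe_finset, Int.card_Icc]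
    simp only [add_sub_cancel_right]
    exact Int.toNat_of_nonneg (by linarith)
end

section
/- For every integer b₁ ≥ 0 and every integer b₂ ≥ max(3, 2b₁), there exists a denominator 2 polygon P contained (up to affine unimodular equivalence) in the strip [0,1] × ℝ with b(P) = b₁, i(P) = 0, b(2P) = b₂ and i(2P) = 0. Explicitly, conv((0,1/2),(1/2,0),(1/2,(b₂−2)/2)) works for b₁ = 0 and conv((0,0),(0,b₁−1),(1/2,0),(1/2,(b₂−2b₁)/2)) works for b₁ ≥ 1. -/
open Set Pointwise

private lemma hull_le {V : Set (ℝ×ℝ)} {α β d : ℝ} (h : ∀ v ∈ V, α*v.1+β*v.2 ≤ d) :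
    ∀ p ∈ convexHull ℝ V, α*p.1+β*p.2 ≤ d := by
  have hlin : IsLinearMap ℝ (fun p : ℝ×ℝ => α*p.1+β*p.2) := by
    constructor
    · intro p q; simp; ring
    · intro c p; simp; ring
  exact fun p hp => convexHull_min h (convex_halfSpace_le hlin d) hp

private lemma vseg {a y c : ℝ} (h0 : 0 ≤ y) (hc : y ≤ c) :
    (a, y) ∈ segment ℝ (a, 0) (a, c) := by
  have hy : y ∈ Icc (0:ℝ) c := ⟨h0, hc⟩
  rw [← segment_eq_Icc (le_trans h0 hc)] at hy
  obtain ⟨s, t, hs, ht, hst, hy⟩ := hy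
  refine ⟨s, t, hs, ht, hst, ?_⟩
  simp only [Prod.smul_mk, smul_eq_mul, Prod.mk_add_mk, Prod.mk.injEq]
  refine ⟨by rw [← add_mul, hst, one_mul], by simpa using hy⟩

private lemma interior_strip {P : Set (ℝ×ℝ)} {a : ℝ}
    (h : ∀ p ∈ P, 0 ≤ p.1 ∧ p.1 ≤ a) :
    ∀ p ∈ interior P, 0 < p.1 ∧ p.1 < a := by
  intro p hp
  obtain ⟨ε, hε, hball⟩ := Metric.isOpen_iff.1 isOpen_interior p hp
  have hmem : ∀ δ : ℝ, |δ| < ε → (p.1 + δ, p.2) ∈ P := by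
    intro δ hδ
    refine interior_subset (hball ?_)
    rw [Metric.mem_ball, Prod.dist_eq]
    simpa [Real.dist_eq, max_eq_left (abs_nonneg δ)] using hδ
  have h1 := (h _ (hmem (-(ε/2)) (by rw [abs_neg, abs_of_nonneg] <;> linarith))).1
  have h2 := (h _ (hmem (ε/2) (by rw [abs_of_nonneg] <;> linarith))).2
  simp only at h1 h2
  constructor <;> linarith

private lemma span_top (A u v : ℝ×ℝ) (h : u.1*v.2 - u.2*v.1 ≠ 0) :
    affineSpan ℝ {A, A+u, A+v} = ⊤ := by
  rw [eq_top_iff]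
  rintro p -
  have hA : A ∈ affineSpan ℝ {A, A+u, A+v} := subset_affineSpan _ _ (by simp)
  have hu : u ∈ (affineSpan ℝ {A, A+u, A+v}).direction := by
    have := AffineSubspace.vsub_mem_direction (subset_affineSpan ℝ _
      (show A+u ∈ ({A, A+u, A+v} : Set (ℝ×ℝ)) by simp)) hA
    simpa using this
  have hv : v ∈ (affineSpan ℝ {A, A+u, A+v}).direction := by
    have := AffineSubspace.vsub_mem_direction (subset_affineSpan ℝ _
      (show A+v ∈ ({A, A+u, A+v} : Set (ℝ×ℝ)) by simp)) hA
    simpa using this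
  have key : p = ((((p.1-A.1)*v.2 - (p.2-A.2)*v.1)/(u.1*v.2 - u.2*v.1)) • u
      + ((u.1*(p.2-A.2) - u.2*(p.1-A.1))/(u.1*v.2 - u.2*v.1)) • v) +ᵥ A := by
    apply Prod.ext <;>
      simp only [vadd_eq_add, Prod.fst_add, Prod.snd_add, Prod.smul_fst, Prod.smul_snd,
        smul_eq_mul] <;>
    · rw [div_mul_eq_mul_div, div_mul_eq_mul_div, ← add_div, div_add' _ _ _ h, eq_div_iff h]
      ring
  rw [key]
  exact AffineSubspace.vadd_mem_of_mem_direction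
    (Submodule.add_mem _ (Submodule.smul_mem _ _ hu) (Submodule.smul_mem _ _ hv)) hA

private lemma case0 (b2 : ℕ) (hb2 : 3 ≤ b2) :
    ∃ P : Set (ℝ × ℝ), IsDen2 P ∧
      P ⊆ Set.Icc (0 : ℝ) 1 ×ˢ (Set.univ : Set ℝ) ∧
      bcount P = 0 ∧ icount P = 0 ∧
      bcount ((2 : ℝ) • P) = b2 ∧ icount ((2 : ℝ) • P) = 0 ∧
      P = convexHull ℝ
          {((0 : ℝ), 1 / 2), ((1 / 2 : ℝ), (0 : ℝ)), ((1 / 2 : ℝ), ((b2 : ℝ) - 2) / 2)} := by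
  have hb2R : (3:ℝ) ≤ (b2:ℝ) := by exact_mod_cast hb2
  refine ⟨convexHull ℝ {((0 : ℝ), 1 / 2), ((1 / 2 : ℝ), (0 : ℝ)),
    ((1 / 2 : ℝ), ((b2 : ℝ) - 2) / 2)}, ?_⟩
  set V : Set (ℝ×ℝ) :=
    {((0 : ℝ), 1 / 2), ((1 / 2 : ℝ), (0 : ℝ)), ((1 / 2 : ℝ), ((b2 : ℝ) - 2) / 2)} with hV
  have hVfin : V.Finite := (finite_singleton _).insert _ |>.insert _
  have hPc : IsClosed (convexHull ℝ V) := (hVfin.isCompact_convexHull ℝ).isClosed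
  have elemV : ∀ v ∈ V, v = ((0:ℝ), 1/2) ∨ v = ((1/2:ℝ), (0:ℝ)) ∨
      v = ((1/2:ℝ), ((b2:ℝ)-2)/2) := by
    intro v hv; simpa [hV] using hv
  have bd1 : ∀ p ∈ convexHull ℝ V, (-1)*p.1 + 0*p.2 ≤ 0 := by
    refine hull_le ?_; intro v hv
    rcases elemV v hv with rfl | rfl | rfl <;> norm_num
  have bd2 : ∀ p ∈ convexHull ℝ V, 1*p.1 + 0*p.2 ≤ 1/2 := by
    refine hull_le ?_; intro v hv
    rcases elemV v hv with rfl | rfl | rfl <;> norm_num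
  have bd3 : ∀ p ∈ convexHull ℝ V, (-1)*p.1 + (-1)*p.2 ≤ -(1/2) := by
    refine hull_le ?_; intro v hv
    rcases elemV v hv with rfl | rfl | rfl <;> · norm_num; try linarith
  have bd4 : ∀ p ∈ convexHull ℝ V, (-((b2:ℝ)-3))*p.1 + 1*p.2 ≤ 1/2 := by
    refine hull_le ?_; intro v hv
    rcases elemV v hv with rfl | rfl | rfl <;> · norm_num; try nlinarith
  have hstrip : ∀ p ∈ convexHull ℝ V, 0 ≤ p.1 ∧ p.1 ≤ 1/2 := by
    intro p hp; have := bd1 p hp; have := bd2 p hp; constructor <;> linarith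
  have hPlatt : convexHull ℝ V ∩ latt = ∅ := by
    ext p
    simp only [mem_inter_iff, mem_empty_iff_false, iff_false, not_and]
    rintro hp ⟨m, n, rfl⟩
    obtain ⟨hm0, hm1⟩ := hstrip _ hp
    simp only at hm0 hm1
    have hm : m = 0 := by
      have : (m:ℝ) < 1 := lt_of_le_of_lt hm1 (by norm_num)
      have h1 : m < 1 := by exact_mod_cast this
      have h2 : 0 ≤ m := by exact_mod_cast hm0
      omega
    subst hm
    have h3 := bd3 _ hp
    have h4 := bd4 _ hp
    simp only at h3 h4
    have : (2*n : ℝ) = 1 := by push_cast at h3 h4 ⊢; linarith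
    have : (2*n : ℤ) = 1 := by exact_mod_cast this
    omega
  have hPint : interior (convexHull ℝ V) ∩ latt = ∅ := by
    ext p
    simp only [mem_inter_iff, mem_empty_iff_false, iff_false, not_and]
    rintro hp ⟨m, n, rfl⟩
    obtain ⟨hm0, hm1⟩ := interior_strip hstrip _ hp
    simp only at hm0 hm1
    have h1 : (0:ℤ) < m := by exact_mod_cast hm0
    have : (m:ℝ) < 1 := lt_of_lt_of_le hm1 (by norm_num)
    have h2 : m < 1 := by exact_mod_cast this
    omega
  -- description of the dilation
  have hQ : (2:ℝ) • convexHull ℝ V =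
      convexHull ℝ {((0:ℝ),(1:ℝ)), ((1:ℝ),(0:ℝ)), ((1:ℝ),(b2:ℝ)-2)} := by
    rw [← convexHull_smul]
    congr 1
    rw [hV, smul_set_insert, smul_set_insert, smul_set_singleton]
    norm_num [Prod.smul_mk, Prod.ext_iff]
    ring_nf
  set W : Set (ℝ×ℝ) := {((0:ℝ),(1:ℝ)), ((1:ℝ),(0:ℝ)), ((1:ℝ),(b2:ℝ)-2)} with hW
  have hWfin : W.Finite := (finite_singleton _).insert _ |>.insert _
  have hQc : IsClosed ((2:ℝ) • convexHull ℝ V) := by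
    rw [hQ]; exact (hWfin.isCompact_convexHull ℝ).isClosed
  have elemW : ∀ v ∈ W, v = ((0:ℝ),(1:ℝ)) ∨ v = ((1:ℝ),(0:ℝ)) ∨
      v = ((1:ℝ),(b2:ℝ)-2) := by
    intro v hv; simpa [hW] using hv
  have qbd1 : ∀ p ∈ (2:ℝ) • convexHull ℝ V, (-1)*p.1 + 0*p.2 ≤ 0 := by
    rw [hQ]; refine hull_le ?_
    intro v hv; rcases elemW v hv with rfl | rfl | rfl <;> norm_num
  have qbd2 : ∀ p ∈ (2:ℝ) • convexHull ℝ V, 1*p.1 + 0*p.2 ≤ 1 := by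
    rw [hQ]; refine hull_le ?_
    intro v hv; rcases elemW v hv with rfl | rfl | rfl <;> norm_num
  have qbd3 : ∀ p ∈ (2:ℝ) • convexHull ℝ V, (-1)*p.1 + (-1)*p.2 ≤ -1 := by
    rw [hQ]; refine hull_le ?_
    intro v hv; rcases elemW v hv with rfl | rfl | rfl <;> · norm_num; try linarith
  have qbd4 : ∀ p ∈ (2:ℝ) • convexHull ℝ V, (-((b2:ℝ)-3))*p.1 + 1*p.2 ≤ 1 := by
    rw [hQ]; refine hull_le ?_
    intro v hv; rcases elemW v hv with rfl | rfl | rfl <;> · norm_num; try nlinarith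
  have hqstrip : ∀ p ∈ (2:ℝ) • convexHull ℝ V, 0 ≤ p.1 ∧ p.1 ≤ 1 := by
    intro p hp; have := qbd1 p hp; have := qbd2 p hp; constructor <;> linarith
  have hQint : interior ((2:ℝ) • convexHull ℝ V) ∩ latt = ∅ := by
    ext p
    simp only [mem_inter_iff, mem_empty_iff_false, iff_false, not_and]
    rintro hp ⟨m, n, rfl⟩
    obtain ⟨hm0, hm1⟩ := interior_strip hqstrip _ hp
    simp only at hm0 hm1
    have h1 : (0:ℤ) < m := by exact_mod_cast hm0
    have h2 : m < 1 := by exact_mod_cast hm1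
    omega
  have hfr : frontier ((2:ℝ) • convexHull ℝ V) ∩ latt =
      ↑(insert ((0:ℝ),(1:ℝ)) ((Finset.range (b2-1)).image fun k : ℕ => ((1:ℝ),(k:ℝ)))) := by
    ext p
    simp only [mem_inter_iff, Finset.coe_insert, Finset.coe_image, Finset.coe_range,
      mem_insert_iff, mem_image, mem_Iio]
    constructor
    · rintro ⟨hpf, m, n, rfl⟩
      have hp : ((m:ℝ),(n:ℝ)) ∈ (2:ℝ) • convexHull ℝ V := by
        rw [← hQc.closure_eq]; exact frontier_subset_closure hpf
      obtain ⟨hm0, hm1⟩ := hqstrip _ hp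
      simp only at hm0 hm1
      have h1 : (0:ℤ) ≤ m := by exact_mod_cast hm0
      have h2 : m ≤ 1 := by exact_mod_cast hm1
      have h3 := qbd3 _ hp
      have h4 := qbd4 _ hp
      simp only at h3 h4
      interval_cases m
      · left
        have hn1 : (1:ℝ) ≤ n := by push_cast at h3; linarith
        have hn2 : (n:ℝ) ≤ 1 := by push_cast at h4; linarith
        have : n = 1 := by exact_mod_cast le_antisymm hn2 hn1
        subst this; norm_num
      · right
        have hn1 : (0:ℝ) ≤ n := by push_cast at h3; linarith
        have hn1' : (0:ℤ) ≤ n := by exact_mod_cast hn1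
        have hn2' : n ≤ (b2:ℤ)-2 := by
          have : (n:ℝ) ≤ (((b2:ℤ)-2 : ℤ) : ℝ) := by push_cast at h4 ⊢; linarith
          exact_mod_cast this
        have hlt : n.toNat < b2 - 1 := by omega
        refine ⟨n.toNat, hlt, ?_⟩
        have hcast : ((n.toNat : ℕ):ℝ) = (n:ℝ) := by
          exact_mod_cast congrArg (Int.cast : ℤ → ℝ) (Int.toNat_of_nonneg hn1')
        simp only [Prod.mk.injEq]
        exact ⟨by norm_num, hcast⟩
    · intro hp
      have hpQ : p ∈ (2:ℝ) • convexHull ℝ V ∧ p ∈ latt ∧ (p.1 = 0 ∨ p.1 = 1) := by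
        rcases hp with rfl | ⟨k, hk, rfl⟩
        · refine ⟨?_, ⟨0, 1, by norm_num⟩, by norm_num⟩
          rw [hQ]; exact subset_convexHull ℝ W (by rw [hW]; simp)
        · refine ⟨?_, ⟨1, k, by norm_num⟩, by norm_num⟩
          rw [hQ]
          have hseg : segment ℝ ((1:ℝ),(0:ℝ)) ((1:ℝ),(b2:ℝ)-2) ⊆ convexHull ℝ W := by
            apply (convex_convexHull ℝ W).segment_subset <;>
              exact subset_convexHull ℝ W (by rw [hW]; simp)
          refine hseg (vseg (Nat.cast_nonneg k) ?_)
          have hk' : k ≤ b2 - 2 := by omega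
          have := (Nat.cast_le (α := ℝ)).2 hk'
          rwa [Nat.cast_sub (by omega)] at this
      obtain ⟨h1, h2, h3⟩ := hpQ
      refine ⟨?_, h2⟩
      rw [hQc.frontier_eq]
      refine ⟨h1, fun hin => ?_⟩
      obtain ⟨ha, hb⟩ := interior_strip hqstrip _ hin
      rcases h3 with h | h <;> rw [h] at ha hb <;> linarith
  refine ⟨⟨⟨{((0 : ℝ), 1 / 2), ((1 / 2 : ℝ), (0 : ℝ)), ((1 / 2 : ℝ), ((b2 : ℝ) - 2) / 2)},
      ?_, by simp [hV]⟩, ?_⟩, ?_, ?_, ?_, ?_, ?_, rfl⟩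
  · -- doubled vertices are lattice points
    intro v hv
    simp only [Finset.mem_insert, Finset.mem_singleton] at hv
    rcases hv with rfl | rfl | rfl
    · exact ⟨0, 1, by norm_num [Prod.smul_mk, Prod.ext_iff]⟩
    · exact ⟨1, 0, by norm_num [Prod.smul_mk, Prod.ext_iff]⟩
    · exact ⟨1, (b2:ℤ)-2, by push_cast; norm_num [Prod.smul_mk, Prod.ext_iff]; ring⟩
  · -- interior nonempty
    have e2 : ((0:ℝ),(1/2:ℝ)) + ((1/2:ℝ),-(1/2:ℝ)) = ((1/2:ℝ),(0:ℝ)) := by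
      norm_num [Prod.mk_add_mk]
    have e3 : ((0:ℝ),(1/2:ℝ)) + ((1/2:ℝ),((b2:ℝ)-3)/2) = ((1/2:ℝ),((b2:ℝ)-2)/2) := by
      rw [Prod.mk_add_mk]; norm_num; ring
    have hsp := span_top ((0:ℝ),(1/2:ℝ)) ((1/2:ℝ),-(1/2:ℝ)) ((1/2:ℝ),((b2:ℝ)-3)/2)
      (by simp only; nlinarith)
    rw [e2, e3] at hsp
    exact interior_convexHull_nonempty_iff_affineSpan_eq_top.2 hsp
  · -- strip
    intro p hp
    obtain ⟨h0, h1⟩ := hstrip p hp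
    exact ⟨⟨h0, by linarith⟩, trivial⟩
  · -- bcount P = 0
    have : frontier (convexHull ℝ V) ∩ latt = ∅ := by
      have hsub : frontier (convexHull ℝ V) ⊆ convexHull ℝ V := hPc.frontier_subset
      rw [← subset_empty_iff, ← hPlatt]
      exact inter_subset_inter_left _ hsub
    rw [bcount, this, ncard_empty]
  · rw [icount, hPint, ncard_empty]
  · -- bcount 2P = b2
    have hinj : Function.Injective (fun k : ℕ => ((1:ℝ),(k:ℝ))) := by
      intro a b h
      have h2 := congrArg Prod.snd h
      simp only at h2
      exact_mod_cast h2
    have hnm : ((0:ℝ),(1:ℝ)) ∉ (Finset.range (b2-1)).image (fun k : ℕ => ((1:ℝ),(k:ℝ))) := by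
      intro hmem
      simp only [Finset.mem_image, Finset.mem_range, Prod.mk.injEq] at hmem
      obtain ⟨k, -, h, -⟩ := hmem
      norm_num at h
    rw [bcount, hfr, ncard_coe_finset, Finset.card_insert_of_notMem hnm,
      Finset.card_image_of_injective _ hinj, Finset.card_range]
    omega
  · rw [icount, hQint, ncard_empty]

set_option maxHeartbeats 1000000 in
private lemma case1 (b1 b2 : ℕ) (hb1 : 1 ≤ b1) (hb2 : 3 ≤ b2) (hbb : 2*b1 ≤ b2) :
    ∃ P : Set (ℝ × ℝ), IsDen2 P ∧
      P ⊆ Set.Icc (0 : ℝ) 1 ×ˢ (Set.univ : Set ℝ) ∧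
      bcount P = b1 ∧ icount P = 0 ∧
      bcount ((2 : ℝ) • P) = b2 ∧ icount ((2 : ℝ) • P) = 0 ∧
      P = convexHull ℝ
          {((0 : ℝ), (0 : ℝ)), ((0 : ℝ), (b1 : ℝ) - 1), ((1 / 2 : ℝ), (0 : ℝ)),
           ((1 / 2 : ℝ), ((b2 : ℝ) - 2 * (b1 : ℝ)) / 2)} := by
  have hb1R : (1:ℝ) ≤ (b1:ℝ) := by exact_mod_cast hb1
  have hb2R : (3:ℝ) ≤ (b2:ℝ) := by exact_mod_cast hb2
  have hbbR : 2*(b1:ℝ) ≤ (b2:ℝ) := by exact_mod_cast hbb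
  refine ⟨convexHull ℝ {((0 : ℝ), (0 : ℝ)), ((0 : ℝ), (b1 : ℝ) - 1), ((1 / 2 : ℝ), (0 : ℝ)),
           ((1 / 2 : ℝ), ((b2 : ℝ) - 2 * (b1 : ℝ)) / 2)}, ?_⟩
  set V : Set (ℝ×ℝ) := {((0 : ℝ), (0 : ℝ)), ((0 : ℝ), (b1 : ℝ) - 1), ((1 / 2 : ℝ), (0 : ℝ)),
           ((1 / 2 : ℝ), ((b2 : ℝ) - 2 * (b1 : ℝ)) / 2)} with hV
  have hVfin : V.Finite := (finite_singleton _).insert _ |>.insert _ |>.insert _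
  have hPc : IsClosed (convexHull ℝ V) := (hVfin.isCompact_convexHull ℝ).isClosed
  have elemV : ∀ v ∈ V, v = ((0:ℝ),(0:ℝ)) ∨ v = ((0:ℝ),(b1:ℝ)-1) ∨ v = ((1/2:ℝ),(0:ℝ)) ∨
      v = ((1/2:ℝ),((b2:ℝ)-2*(b1:ℝ))/2) := by
    intro v hv; simpa [hV] using hv
  have bd1 : ∀ p ∈ convexHull ℝ V, (-1)*p.1 + 0*p.2 ≤ 0 := by
    refine hull_le ?_; intro v hv
    rcases elemV v hv with rfl | rfl | rfl | rfl <;> norm_num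
  have bd2 : ∀ p ∈ convexHull ℝ V, 1*p.1 + 0*p.2 ≤ 1/2 := by
    refine hull_le ?_; intro v hv
    rcases elemV v hv with rfl | rfl | rfl | rfl <;> norm_num
  have bd3 : ∀ p ∈ convexHull ℝ V, 0*p.1 + (-1)*p.2 ≤ 0 := by
    refine hull_le ?_; intro v hv
    rcases elemV v hv with rfl | rfl | rfl | rfl <;> · norm_num; try linarith
  have bd4 : ∀ p ∈ convexHull ℝ V, (-((b2:ℝ)-4*(b1:ℝ)+2))*p.1 + 1*p.2 ≤ (b1:ℝ)-1 := by
    refine hull_le ?_; intro v hv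
    rcases elemV v hv with rfl | rfl | rfl | rfl <;> · norm_num; try nlinarith
  have hstrip : ∀ p ∈ convexHull ℝ V, 0 ≤ p.1 ∧ p.1 ≤ 1/2 := by
    intro p hp; have := bd1 p hp; have := bd2 p hp; constructor <;> linarith
  have hPint : interior (convexHull ℝ V) ∩ latt = ∅ := by
    ext p
    simp only [mem_inter_iff, mem_empty_iff_false, iff_false, not_and]
    rintro hp ⟨m, n, rfl⟩
    obtain ⟨hm0, hm1⟩ := interior_strip hstrip _ hp
    simp only at hm0 hm1
    have h1 : (0:ℤ) < m := by exact_mod_cast hm0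
    have : (m:ℝ) < 1 := lt_of_lt_of_le hm1 (by norm_num)
    have h2 : m < 1 := by exact_mod_cast this
    omega
  have hfrP : frontier (convexHull ℝ V) ∩ latt =
      ↑((Finset.range b1).image fun k : ℕ => ((0:ℝ),(k:ℝ))) := by
    ext p
    simp only [mem_inter_iff, Finset.coe_image, Finset.coe_range, mem_image, mem_Iio]
    constructor
    · rintro ⟨hpf, m, n, rfl⟩
      have hp : ((m:ℝ),(n:ℝ)) ∈ convexHull ℝ V := hPc.frontier_subset hpf
      obtain ⟨hm0, hm1⟩ := hstrip _ hp
      simp only at hm0 hm1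
      have h1 : (0:ℤ) ≤ m := by exact_mod_cast hm0
      have hm : m = 0 := by
        have : (m:ℝ) < 1 := lt_of_le_of_lt hm1 (by norm_num)
        have h2 : m < 1 := by exact_mod_cast this
        omega
      subst hm
      have h3 := bd3 _ hp
      have h4 := bd4 _ hp
      simp only at h3 h4
      have hn1 : (0:ℝ) ≤ n := by push_cast at h3; linarith
      have hn1' : (0:ℤ) ≤ n := by exact_mod_cast hn1
      have hn2' : n ≤ (b1:ℤ)-1 := by
        have : (n:ℝ) ≤ (((b1:ℤ)-1 : ℤ) : ℝ) := by push_cast at h4 ⊢; linarith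
        exact_mod_cast this
      have hlt : n.toNat < b1 := by omega
      refine ⟨n.toNat, hlt, ?_⟩
      have hcast : ((n.toNat : ℕ):ℝ) = (n:ℝ) := by
        exact_mod_cast congrArg (Int.cast : ℤ → ℝ) (Int.toNat_of_nonneg hn1')
      simp only [Prod.mk.injEq]
      exact ⟨by norm_num, hcast⟩
    · rintro ⟨k, hk, rfl⟩
      have hkR : (k:ℝ) ≤ (b1:ℝ) - 1 := by
        have hk' : k ≤ b1 - 1 := by omega
        have := (Nat.cast_le (α := ℝ)).2 hk'
        rw [Nat.cast_sub (by omega)] at this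
        push_cast at this ⊢
        linarith
      have hpP : ((0:ℝ),(k:ℝ)) ∈ convexHull ℝ V := by
        have hseg : segment ℝ ((0:ℝ),(0:ℝ)) ((0:ℝ),(b1:ℝ)-1) ⊆ convexHull ℝ V := by
          apply (convex_convexHull ℝ V).segment_subset <;>
            exact subset_convexHull ℝ V (by rw [hV]; simp)
        exact hseg (vseg (Nat.cast_nonneg k) hkR)
      refine ⟨?_, ⟨0, k, by norm_num⟩⟩
      rw [hPc.frontier_eq]
      refine ⟨hpP, fun hin => ?_⟩
      obtain ⟨ha, hb⟩ := interior_strip hstrip _ hin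
      simp only at ha
      linarith
  -- dilation
  have hQ : (2:ℝ) • convexHull ℝ V = convexHull ℝ
      {((0:ℝ),(0:ℝ)), ((0:ℝ),2*(b1:ℝ)-2), ((1:ℝ),(0:ℝ)), ((1:ℝ),(b2:ℝ)-2*(b1:ℝ))} := by
    rw [← convexHull_smul]
    congr 1
    rw [hV, smul_set_insert, smul_set_insert, smul_set_insert, smul_set_singleton]
    norm_num [Prod.smul_mk, Prod.ext_iff]
    ring_nf
  set W : Set (ℝ×ℝ) :=
    {((0:ℝ),(0:ℝ)), ((0:ℝ),2*(b1:ℝ)-2), ((1:ℝ),(0:ℝ)), ((1:ℝ),(b2:ℝ)-2*(b1:ℝ))} with hW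
  have hWfin : W.Finite := (finite_singleton _).insert _ |>.insert _ |>.insert _
  have hQc : IsClosed ((2:ℝ) • convexHull ℝ V) := by
    rw [hQ]; exact (hWfin.isCompact_convexHull ℝ).isClosed
  have elemW : ∀ v ∈ W, v = ((0:ℝ),(0:ℝ)) ∨ v = ((0:ℝ),2*(b1:ℝ)-2) ∨ v = ((1:ℝ),(0:ℝ)) ∨
      v = ((1:ℝ),(b2:ℝ)-2*(b1:ℝ)) := by
    intro v hv; simpa [hW] using hv
  have qbd1 : ∀ p ∈ (2:ℝ) • convexHull ℝ V, (-1)*p.1 + 0*p.2 ≤ 0 := by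
    rw [hQ]; refine hull_le ?_
    intro v hv; rcases elemW v hv with rfl | rfl | rfl | rfl <;> norm_num
  have qbd2 : ∀ p ∈ (2:ℝ) • convexHull ℝ V, 1*p.1 + 0*p.2 ≤ 1 := by
    rw [hQ]; refine hull_le ?_
    intro v hv; rcases elemW v hv with rfl | rfl | rfl | rfl <;> norm_num
  have qbd3 : ∀ p ∈ (2:ℝ) • convexHull ℝ V, 0*p.1 + (-1)*p.2 ≤ 0 := by
    rw [hQ]; refine hull_le ?_
    intro v hv; rcases elemW v hv with rfl | rfl | rfl | rfl <;> · norm_num; try linarith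
  have qbd4 : ∀ p ∈ (2:ℝ) • convexHull ℝ V,
      (-((b2:ℝ)-4*(b1:ℝ)+2))*p.1 + 1*p.2 ≤ 2*(b1:ℝ)-2 := by
    rw [hQ]; refine hull_le ?_
    intro v hv; rcases elemW v hv with rfl | rfl | rfl | rfl <;> · norm_num; try nlinarith
  have hqstrip : ∀ p ∈ (2:ℝ) • convexHull ℝ V, 0 ≤ p.1 ∧ p.1 ≤ 1 := by
    intro p hp; have := qbd1 p hp; have := qbd2 p hp; constructor <;> linarith
  have hQint : interior ((2:ℝ) • convexHull ℝ V) ∩ latt = ∅ := by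
    ext p
    simp only [mem_inter_iff, mem_empty_iff_false, iff_false, not_and]
    rintro hp ⟨m, n, rfl⟩
    obtain ⟨hm0, hm1⟩ := interior_strip hqstrip _ hp
    simp only at hm0 hm1
    have h1 : (0:ℤ) < m := by exact_mod_cast hm0
    have h2 : m < 1 := by exact_mod_cast hm1
    omega
  have hfr : frontier ((2:ℝ) • convexHull ℝ V) ∩ latt =
      ↑(((Finset.range (2*b1-1)).image fun k : ℕ => ((0:ℝ),(k:ℝ))) ∪
        ((Finset.range (b2-2*b1+1)).image fun k : ℕ => ((1:ℝ),(k:ℝ)))) := by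
    ext p
    simp only [mem_inter_iff, Finset.coe_union, Finset.coe_image, Finset.coe_range,
      mem_union, mem_image, mem_Iio]
    constructor
    · rintro ⟨hpf, m, n, rfl⟩
      have hp : ((m:ℝ),(n:ℝ)) ∈ (2:ℝ) • convexHull ℝ V := hQc.frontier_subset hpf
      obtain ⟨hm0, hm1⟩ := hqstrip _ hp
      simp only at hm0 hm1
      have h1 : (0:ℤ) ≤ m := by exact_mod_cast hm0
      have h2 : m ≤ 1 := by exact_mod_cast hm1
      have h3 := qbd3 _ hp
      have h4 := qbd4 _ hp
      simp only at h3 h4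
      have hn1 : (0:ℝ) ≤ n := by push_cast at h3; linarith
      have hn1' : (0:ℤ) ≤ n := by exact_mod_cast hn1
      interval_cases m
      · left
        have hn2' : n ≤ 2*(b1:ℤ)-2 := by
          have : (n:ℝ) ≤ ((2*(b1:ℤ)-2 : ℤ) : ℝ) := by push_cast at h4 ⊢; linarith
          exact_mod_cast this
        have hlt : n.toNat < 2*b1-1 := by omega
        refine ⟨n.toNat, hlt, ?_⟩
        have hcast : ((n.toNat : ℕ):ℝ) = (n:ℝ) := by
          exact_mod_cast congrArg (Int.cast : ℤ → ℝ) (Int.toNat_of_nonneg hn1')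
        simp only [Prod.mk.injEq]
        exact ⟨by norm_num, hcast⟩
      · right
        have hn2' : n ≤ (b2:ℤ)-2*(b1:ℤ) := by
          have : (n:ℝ) ≤ (((b2:ℤ)-2*(b1:ℤ) : ℤ) : ℝ) := by push_cast at h4 ⊢; linarith
          exact_mod_cast this
        have hlt : n.toNat < b2-2*b1+1 := by omega
        refine ⟨n.toNat, hlt, ?_⟩
        have hcast : ((n.toNat : ℕ):ℝ) = (n:ℝ) := by
          exact_mod_cast congrArg (Int.cast : ℤ → ℝ) (Int.toNat_of_nonneg hn1')
        simp only [Prod.mk.injEq]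
        exact ⟨by norm_num, hcast⟩
    · intro hp
      have hpQ : p ∈ (2:ℝ) • convexHull ℝ V ∧ p ∈ latt ∧ (p.1 = 0 ∨ p.1 = 1) := by
        rcases hp with ⟨k, hk, rfl⟩ | ⟨k, hk, rfl⟩
        · refine ⟨?_, ⟨0, k, by norm_num⟩, by norm_num⟩
          rw [hQ]
          have hseg : segment ℝ ((0:ℝ),(0:ℝ)) ((0:ℝ),2*(b1:ℝ)-2) ⊆ convexHull ℝ W := by
            apply (convex_convexHull ℝ W).segment_subset <;>
              exact subset_convexHull ℝ W (by rw [hW]; simp)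
          refine hseg (vseg (Nat.cast_nonneg k) ?_)
          have hk' : k ≤ 2*b1 - 2 := by omega
          have := (Nat.cast_le (α := ℝ)).2 hk'
          rw [Nat.cast_sub (by omega)] at this
          push_cast at this ⊢
          linarith
        · refine ⟨?_, ⟨1, k, by norm_num⟩, by norm_num⟩
          rw [hQ]
          have hseg : segment ℝ ((1:ℝ),(0:ℝ)) ((1:ℝ),(b2:ℝ)-2*(b1:ℝ)) ⊆ convexHull ℝ W := by
            apply (convex_convexHull ℝ W).segment_subset <;>
              exact subset_convexHull ℝ W (by rw [hW]; simp)
          refine hseg (vseg (Nat.cast_nonneg k) ?_)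
          have hk' : k ≤ b2 - 2*b1 := by omega
          have := (Nat.cast_le (α := ℝ)).2 hk'
          rw [Nat.cast_sub (by omega)] at this
          push_cast at this ⊢
          linarith
      obtain ⟨h1, h2, h3⟩ := hpQ
      refine ⟨?_, h2⟩
      rw [hQc.frontier_eq]
      refine ⟨h1, fun hin => ?_⟩
      obtain ⟨ha, hb⟩ := interior_strip hqstrip _ hin
      rcases h3 with h | h <;> rw [h] at ha hb <;> linarith
  refine ⟨⟨⟨{((0 : ℝ), (0 : ℝ)), ((0 : ℝ), (b1 : ℝ) - 1), ((1 / 2 : ℝ), (0 : ℝ)),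
      ((1 / 2 : ℝ), ((b2 : ℝ) - 2 * (b1 : ℝ)) / 2)}, ?_, by simp [hV]⟩, ?_⟩,
      ?_, ?_, ?_, ?_, ?_, rfl⟩
  · intro v hv
    simp only [Finset.mem_insert, Finset.mem_singleton] at hv
    rcases hv with rfl | rfl | rfl | rfl
    · exact ⟨0, 0, by norm_num [Prod.smul_mk, Prod.ext_iff]⟩
    · exact ⟨0, 2*(b1:ℤ)-2, by push_cast; norm_num [Prod.smul_mk, Prod.ext_iff]; ring⟩
    · exact ⟨1, 0, by norm_num [Prod.smul_mk, Prod.ext_iff]⟩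
    · exact ⟨1, (b2:ℤ)-2*(b1:ℤ), by push_cast; norm_num [Prod.smul_mk, Prod.ext_iff]; ring⟩
  · -- interior nonempty
    by_cases hd : 2*b1 < b2
    · have hdR : 2*(b1:ℝ) < (b2:ℝ) := by exact_mod_cast hd
      have e2 : ((0:ℝ),(0:ℝ)) + ((1/2:ℝ),(0:ℝ)) = ((1/2:ℝ),(0:ℝ)) := by
        norm_num [Prod.mk_add_mk]
      have e3 : ((0:ℝ),(0:ℝ)) + ((1/2:ℝ),((b2:ℝ)-2*(b1:ℝ))/2) =
          ((1/2:ℝ),((b2:ℝ)-2*(b1:ℝ))/2) := by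
        norm_num [Prod.mk_add_mk]
      have hsp := span_top ((0:ℝ),(0:ℝ)) ((1/2:ℝ),(0:ℝ)) ((1/2:ℝ),((b2:ℝ)-2*(b1:ℝ))/2)
        (by simp only; nlinarith)
      rw [e2, e3] at hsp
      have hsub : ({((0:ℝ),(0:ℝ)), ((1/2:ℝ),(0:ℝ)), ((1/2:ℝ),((b2:ℝ)-2*(b1:ℝ))/2)} : Set (ℝ×ℝ))
          ⊆ V := by rw [hV]; intro x hx; simp at hx ⊢; tauto
      have hne := interior_convexHull_nonempty_iff_affineSpan_eq_top.2 hsp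
      exact hne.mono (interior_mono (convexHull_mono hsub))
    · have hb1' : 2 ≤ b1 := by omega
      have hb1R' : (2:ℝ) ≤ (b1:ℝ) := by exact_mod_cast hb1'
      have e2 : ((0:ℝ),(0:ℝ)) + ((0:ℝ),(b1:ℝ)-1) = ((0:ℝ),(b1:ℝ)-1) := by
        norm_num [Prod.mk_add_mk]
      have e3 : ((0:ℝ),(0:ℝ)) + ((1/2:ℝ),(0:ℝ)) = ((1/2:ℝ),(0:ℝ)) := by
        norm_num [Prod.mk_add_mk]
      have hsp := span_top ((0:ℝ),(0:ℝ)) ((0:ℝ),(b1:ℝ)-1) ((1/2:ℝ),(0:ℝ))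
        (by simp only; nlinarith)
      rw [e2, e3] at hsp
      have hsub : ({((0:ℝ),(0:ℝ)), ((0:ℝ),(b1:ℝ)-1), ((1/2:ℝ),(0:ℝ))} : Set (ℝ×ℝ))
          ⊆ V := by rw [hV]; intro x hx; simp at hx ⊢; tauto
      have hne := interior_convexHull_nonempty_iff_affineSpan_eq_top.2 hsp
      exact hne.mono (interior_mono (convexHull_mono hsub))
  · intro p hp
    obtain ⟨h0, h1⟩ := hstrip p hp
    exact ⟨⟨h0, by linarith⟩, trivial⟩
  · -- bcount P = b1
    have hinj0 : Function.Injective (fun k : ℕ => ((0:ℝ),(k:ℝ))) := by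
      intro a b h
      have h2 := congrArg Prod.snd h
      simp only at h2
      exact_mod_cast h2
    rw [bcount, hfrP, ncard_coe_finset, Finset.card_image_of_injective _ hinj0,
      Finset.card_range]
  · rw [icount, hPint, ncard_empty]
  · -- bcount 2P = b2
    have hinj0 : Function.Injective (fun k : ℕ => ((0:ℝ),(k:ℝ))) := by
      intro a b h
      have h2 := congrArg Prod.snd h
      simp only at h2
      exact_mod_cast h2
    have hinj1 : Function.Injective (fun k : ℕ => ((1:ℝ),(k:ℝ))) := by
      intro a b h
      have h2 := congrArg Prod.snd h
      simp only at h2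
      exact_mod_cast h2
    have hdisj : Disjoint ((Finset.range (2*b1-1)).image fun k : ℕ => ((0:ℝ),(k:ℝ)))
        ((Finset.range (b2-2*b1+1)).image fun k : ℕ => ((1:ℝ),(k:ℝ))) := by
      rw [Finset.disjoint_left]
      intro a ha hb
      simp only [Finset.mem_image, Finset.mem_range] at ha hb
      obtain ⟨k, -, rfl⟩ := ha
      obtain ⟨j, -, hj⟩ := hb
      have := congrArg Prod.fst hj
      simp only at this
      norm_num at this
    rw [bcount, hfr, ncard_coe_finset, Finset.card_union_of_disjoint hdisj,
      Finset.card_image_of_injective _ hinj0, Finset.card_image_of_injective _ hinj1,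
      Finset.card_range, Finset.card_range]
    omega
  · rw [icount, hQint, ncard_empty]

/-- for all integers `b₁ ≥ 0` and `b₂ ≥ max(3, 2b₁)` there is a
denominator 2 polygon `P` contained in the strip `[0,1] × ℝ` with `b(P) = b₁`,
`i(P) = 0`, `b(2P) = b₂` and `i(2P) = 0`; explicitly one may take
`conv((0,1/2),(1/2,0),(1/2,(b₂−2)/2))` when `b₁ = 0` and
`conv((0,0),(0,b₁−1),(1/2,0),(1/2,(b₂−2b₁)/2))` when `b₁ ≥ 1`. -/
theorem stmt_12 (b1 b2 : ℕ) (hb : max 3 (2 * b1) ≤ b2) :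
    ∃ P : Set (ℝ × ℝ), IsDen2 P ∧
      P ⊆ Set.Icc (0 : ℝ) 1 ×ˢ (Set.univ : Set ℝ) ∧
      bcount P = b1 ∧ icount P = 0 ∧
      bcount ((2 : ℝ) • P) = b2 ∧ icount ((2 : ℝ) • P) = 0 ∧
      ((b1 = 0 ∧ P = convexHull ℝ
          {((0 : ℝ), 1 / 2), ((1 / 2 : ℝ), (0 : ℝ)), ((1 / 2 : ℝ), ((b2 : ℝ) - 2) / 2)}) ∨
       (1 ≤ b1 ∧ P = convexHull ℝ
          {((0 : ℝ), (0 : ℝ)), ((0 : ℝ), (b1 : ℝ) - 1), ((1 / 2 : ℝ), (0 : ℝ)),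
           ((1 / 2 : ℝ), ((b2 : ℝ) - 2 * (b1 : ℝ)) / 2)})) := by
  rcases Nat.eq_zero_or_pos b1 with rfl | hb1
  · have hb2 : 3 ≤ b2 := le_trans (le_max_left _ _) hb
    obtain ⟨P, h1, h2, h3, h4, h5, h6, h7⟩ := case0 b2 hb2
    exact ⟨P, h1, h2, h3, h4, h5, h6, Or.inl ⟨rfl, h7⟩⟩
  · have hb2 : 3 ≤ b2 := le_trans (le_max_left _ _) hb
    have hbb : 2*b1 ≤ b2 := le_trans (le_max_right _ _) hb
    obtain ⟨P, h1, h2, h3, h4, h5, h6, h7⟩ := case1 b1 b2 hb1 hb2 hbb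
    exact ⟨P, h1, h2, h3, h4, h5, h6, Or.inr ⟨hb1, h7⟩⟩
end

section
/- Let P be a polytope in L_ℝ with vertices in a lattice L, and suppose P is infinitely growable with respect to a full-rank sublattice K ⊆ L (i.e. there is an infinite strictly increasing chain P = P₀ ⊊ P₁ ⊊ P₂ ⊊ … of L-polytopes all with |Pᵢ ∩ K| = |P ∩ K|). Then P contains no point of K in its interior. -/
open Set

private lemma stmt13_lat_finite (d : ℕ) (κ : Module.Basis (Fin d) ℝ (Fin d → ℝ))
    {S : Set (Fin d → ℝ)} (hS : Bornology.IsBounded S) :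
    (S ∩ (Submodule.span ℤ (Set.range κ) : Set (Fin d → ℝ))).Finite := by
  haveI : DiscreteTopology ((Submodule.span ℤ (Set.range κ) : Set (Fin d → ℝ))) :=
    inferInstanceAs (DiscreteTopology (Submodule.span ℤ (Set.range κ)))
  have hc : IsClosed ((Submodule.span ℤ (Set.range κ) : Set (Fin d → ℝ))) :=
    AddSubgroup.isClosed_of_discrete (H := (Submodule.span ℤ (Set.range κ)).toAddSubgroup)
  exact Metric.finite_isBounded_inter_isClosed DiscreteTopology.isDiscrete hS hc

private lemma stmt13_strictMono_add (ψ : ℕ → ℕ) (h : StrictMono ψ) (N m : ℕ) :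
    ψ N + m ≤ ψ (N + m) := by
  induction m with
  | zero => simp
  | succ k ih =>
    have h2 : ψ (N + k) < ψ (N + k + 1) := h (Nat.lt_succ_self _)
    have h3 : N + (k + 1) = N + k + 1 := rfl
    rw [h3]; omega

/-- let `L` be a rank-`d` lattice in `ℝ^d` (generated by an ℝ-basis `ℓ`)
and `K ⊆ L` a full-rank sublattice (generated by an ℝ-basis `κ`).  If an `L`-polytope
`P` is infinitely growable, i.e. there is an infinite strictly increasing chain of
`L`-polytopes starting at `P` all containing the same number of points of `K`, then
`P` contains no point of `K` in its interior. -/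
theorem stmt_13 (d : ℕ) (ℓ κ : Module.Basis (Fin d) ℝ (Fin d → ℝ))
    (L K : AddSubgroup (Fin d → ℝ))
    (hL : L = AddSubgroup.closure (Set.range ℓ))
    (hK : K = AddSubgroup.closure (Set.range κ))
    (hKL : K ≤ L)
    (V : Finset (Fin d → ℝ)) (hV : (V : Set (Fin d → ℝ)) ⊆ (L : Set (Fin d → ℝ)))
    (P : Set (Fin d → ℝ)) (hPdef : P = convexHull ℝ (V : Set (Fin d → ℝ)))
    (Pseq : ℕ → Set (Fin d → ℝ))
    (h0 : Pseq 0 = P)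
    (hpoly : ∀ i, ∃ W : Finset (Fin d → ℝ),
      (W : Set (Fin d → ℝ)) ⊆ (L : Set (Fin d → ℝ)) ∧ Pseq i = convexHull ℝ (W : Set (Fin d → ℝ)))
    (hmono : ∀ i, Pseq i ⊂ Pseq (i + 1))
    (hcard : ∀ i, (Pseq i ∩ (K : Set (Fin d → ℝ))).ncard = (P ∩ (K : Set (Fin d → ℝ))).ncard) :
    interior P ∩ (K : Set (Fin d → ℝ)) = ∅ := by
  classical
  by_contra hne
  obtain ⟨x, hxint, hxK⟩ : ∃ x, x ∈ interior P ∧ x ∈ (K : Set (Fin d → ℝ)) := by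
    rcases Set.nonempty_iff_ne_empty.mpr hne with ⟨x, hx1, hx2⟩
    exact ⟨x, hx1, hx2⟩
  -- basic setup
  set U : Set (Fin d → ℝ) := ⋃ i, Pseq i with hU
  have hPsm : StrictMono Pseq := strictMono_nat_of_lt_succ hmono
  have hmono' : ∀ i j, i ≤ j → Pseq i ⊆ Pseq j := fun i j hij => (hPsm.monotone hij)
  have hsubU : ∀ i, Pseq i ⊆ U := fun i => Set.subset_iUnion Pseq i
  have hPU : P ⊆ U := h0 ▸ hsubU 0
  have hxP : x ∈ P := interior_subset hxint
  have hxU : x ∈ U := hPU hxP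
  have hUconv : Convex ℝ U := by
    intro a ha b hb s t hs ht hst
    rcases Set.mem_iUnion.mp ha with ⟨i, hi⟩
    rcases Set.mem_iUnion.mp hb with ⟨j, hj⟩
    have hconvij : Convex ℝ (Pseq (max i j)) := by
      obtain ⟨W, -, hW⟩ := hpoly (max i j); rw [hW]; exact convex_convexHull ℝ _
    exact hsubU (max i j)
      (hconvij (hmono' i _ (le_max_left i j) hi) (hmono' j _ (le_max_right i j) hj) hs ht hst)
  have hKset : (K : Set (Fin d → ℝ)) = (Submodule.span ℤ (Set.range κ) : Set (Fin d → ℝ)) := by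
    rw [hK, ← Submodule.span_int_eq_addSubgroupClosure]; rfl
  have hLset : (L : Set (Fin d → ℝ)) = (Submodule.span ℤ (Set.range ℓ) : Set (Fin d → ℝ)) := by
    rw [hL, ← Submodule.span_int_eq_addSubgroupClosure]; rfl
  -- each Pseq i is bounded
  have hbound : ∀ i, Bornology.IsBounded (Pseq i) := by
    intro i
    obtain ⟨W, -, hW⟩ := hpoly i
    rw [hW]
    exact isBounded_convexHull.mpr W.finite_toSet.isBounded
  -- the chain has constant intersection with K
  have hPK : ∀ i, Pseq i ∩ (K : Set (Fin d → ℝ)) = P ∩ (K : Set (Fin d → ℝ)) := by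
    intro i
    have hfin : (Pseq i ∩ (K : Set (Fin d → ℝ))).Finite := by
      rw [hKset]; exact stmt13_lat_finite d κ (hbound i)
    have hsub : P ∩ (K : Set (Fin d → ℝ)) ⊆ Pseq i ∩ (K : Set (Fin d → ℝ)) :=
      Set.inter_subset_inter_left _ (h0 ▸ hmono' 0 i (Nat.zero_le i))
    exact (Set.eq_of_subset_of_ncard_le hsub (le_of_eq (hcard i)) hfin).symm
  -- every point of U ∩ K lies in P
  have hUK : ∀ w, w ∈ U → w ∈ (K : Set (Fin d → ℝ)) → w ∈ P := by
    intro w hwU hwK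
    rcases Set.mem_iUnion.mp hwU with ⟨i, hi⟩
    have : w ∈ Pseq i ∩ (K : Set (Fin d → ℝ)) := ⟨hi, hwK⟩
    rw [hPK i] at this
    exact this.1
  -- U is unbounded
  have hUnb : ¬ Bornology.IsBounded U := by
    intro hb
    have hFfin : (U ∩ (Submodule.span ℤ (Set.range ℓ) : Set (Fin d → ℝ))).Finite :=
      stmt13_lat_finite d ℓ hb
    have hrange : Set.range Pseq ⊆
        (fun A : Set (Fin d → ℝ) => convexHull ℝ A) ''
          {A | A ⊆ U ∩ (Submodule.span ℤ (Set.range ℓ) : Set (Fin d → ℝ))} := by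
      rintro - ⟨i, rfl⟩
      obtain ⟨W, hWL, hW⟩ := hpoly i
      refine ⟨(W : Set (Fin d → ℝ)), ?_, hW.symm⟩
      intro w hw
      exact ⟨hsubU i (hW ▸ subset_convexHull ℝ _ hw), hLset ▸ hWL hw⟩
    have hfin2 : (Set.range Pseq).Finite :=
      ((hFfin.finite_subsets).image _).subset hrange
    exact (Set.infinite_range_of_injective hPsm.injective) hfin2
  -- a ball around x inside P
  obtain ⟨ε, hε, hball⟩ : ∃ ε > 0, Metric.ball x ε ⊆ P :=
    Metric.mem_nhds_iff.mp (mem_interior_iff_mem_nhds.mp hxint)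
  -- a radius bound for P
  obtain ⟨R, hR⟩ := ((hbound 0).subset_closedBall 0)
  rw [h0] at hR
  -- points of U far away from x
  have hy : ∀ n : ℕ, ∃ y ∈ U, (n : ℝ) ≤ ‖y - x‖ := by
    intro n
    by_contra h
    push_neg at h
    exact hUnb ((Metric.isBounded_ball (x := x) (r := n)).subset
      (fun y hy => by rw [Metric.mem_ball, dist_eq_norm]; exact h y hy))
  choose y hyU hyn using hy
  set u : ℕ → (Fin d → ℝ) := fun n => ‖y n - x‖⁻¹ • (y n - x) with hu
  have hunorm : ∀ n, 1 ≤ n → ‖u n‖ = 1 := by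
    intro n hn
    have hpos : (0 : ℝ) < ‖y n - x‖ := lt_of_lt_of_le (by exact_mod_cast hn) (hyn n)
    rw [hu]
    simp only [norm_smul, norm_inv, norm_norm]
    field_simp
  have humem : ∀ n, u n ∈ Metric.closedBall (0 : Fin d → ℝ) 1 := by
    intro n
    rw [Metric.mem_closedBall, dist_zero_right]
    rcases eq_or_ne (y n) x with h | h
    · simp [hu, h]
    · have hpos : (0 : ℝ) < ‖y n - x‖ := by
        rw [norm_pos_iff]; exact sub_ne_zero_of_ne h
      rw [hu]; simp only [norm_smul, norm_inv, norm_norm]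
      rw [inv_mul_cancel₀ (ne_of_gt hpos)]
  obtain ⟨v, -, φ, hφ, hlim⟩ :=
    tendsto_subseq_of_bounded (Metric.isBounded_closedBall (x := (0 : Fin d → ℝ)) (r := 1)) humem
  have hvnorm : ‖v‖ = 1 := by
    have h1 : Filter.Tendsto (fun k => ‖u (φ k)‖) Filter.atTop (nhds ‖v‖) :=
      ((continuous_norm.tendsto v).comp hlim)
    have h2 : ∀ᶠ k in Filter.atTop, ‖u (φ k)‖ = 1 := by
      filter_upwards [Filter.eventually_ge_atTop 1] with k hk
      exact hunorm (φ k) (le_trans hk (hφ.le_apply))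
    exact tendsto_nhds_unique (h1.congr' h2) tendsto_const_nhds
  -- pigeonhole in the fundamental domain of κ to find a lattice point near t • v
  set r : ℕ → (Fin d → ℝ) := fun q => ZSpan.fract κ ((q : ℝ) • v) with hr
  have hrmem : ∀ q, r q ∈ ZSpan.fundamentalDomain κ := fun q =>
    ZSpan.fract_mem_fundamentalDomain κ _
  obtain ⟨p, -, ψ, hψ, hlim2⟩ :=
    tendsto_subseq_of_bounded (ZSpan.fundamentalDomain_isBounded κ) hrmem
  obtain ⟨t₀, ht₀⟩ := exists_nat_ge (|R| + ‖x‖ + ε + 1)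
  have ht₀1 : (1 : ℝ) ≤ t₀ := by
    have h1 : (0 : ℝ) ≤ |R| := abs_nonneg R
    have h2 : (0 : ℝ) ≤ ‖x‖ := norm_nonneg x
    linarith
  obtain ⟨N, hN⟩ := (Metric.tendsto_atTop.mp hlim2 (ε / 8) (by positivity))
  set q₁ := ψ N with hq₁
  set q₂ := ψ (N + t₀) with hq₂
  have hq12 : q₁ + t₀ ≤ q₂ := stmt13_strictMono_add ψ hψ N t₀
  set t : ℕ := q₂ - q₁ with htdef
  have httt : (t : ℝ) = (q₂ : ℝ) - (q₁ : ℝ) := by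
    rw [htdef]; exact_mod_cast Nat.cast_sub (by omega)
  have htt₀ : (t₀ : ℝ) ≤ (t : ℝ) := by
    rw [httt]
    have hc : (q₁ : ℝ) + (t₀ : ℝ) ≤ (q₂ : ℝ) := by exact_mod_cast hq12
    linarith
  have htpos : (0 : ℝ) < t := lt_of_lt_of_le (lt_of_lt_of_le one_pos ht₀1) htt₀
  set z : Fin d → ℝ :=
    ((q₂ : ℝ) • v - r q₂) - ((q₁ : ℝ) • v - r q₁) with hz
  have hzmem : z ∈ Submodule.span ℤ (Set.range κ) := by
    have hmem : ∀ q : ℕ, (q : ℝ) • v - r q ∈ Submodule.span ℤ (Set.range κ) := by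
      intro q
      rw [hr]
      simp only
      rw [ZSpan.fract_apply, sub_sub_cancel]
      exact (ZSpan.floor κ ((q : ℝ) • v)).2
    exact sub_mem (hmem q₂) (hmem q₁)
  have hzK : z ∈ (K : Set (Fin d → ℝ)) := by rw [hKset]; exact hzmem
  have hztv : ‖(t : ℝ) • v - z‖ < ε / 4 := by
    have he : (t : ℝ) • v - z = r q₂ - r q₁ := by
      rw [httt, hz]; module
    rw [he]
    have h1 : dist (r q₂) p < ε / 8 := by
      have := hN (N + t₀) (Nat.le_add_right N t₀); exact this
    have h2 : dist (r q₁) p < ε / 8 := hN N le_rfl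
    calc ‖r q₂ - r q₁‖ = dist (r q₂) (r q₁) := (dist_eq_norm _ _).symm
      _ ≤ dist (r q₂) p + dist p (r q₁) := dist_triangle _ _ _
      _ < ε / 8 + ε / 8 := by rw [dist_comm p (r q₁)]; exact add_lt_add h1 h2
      _ = ε / 4 := by ring
  -- find a suitable direction index
  obtain ⟨k, hk1, hk2⟩ : ∃ k, ‖u (φ k) - v‖ < ε / (8 * t) ∧ 2 * (t : ℝ) + 1 ≤ φ k := by
    obtain ⟨N₁, hN₁⟩ := Metric.tendsto_atTop.mp hlim (ε / (8 * t)) (div_pos hε (by linarith))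
    obtain ⟨m, hm⟩ := exists_nat_ge (2 * (t : ℝ) + 1)
    refine ⟨max N₁ m, ?_, ?_⟩
    · have := hN₁ (max N₁ m) (le_max_left _ _)
      rwa [dist_eq_norm] at this
    · calc 2 * (t : ℝ) + 1 ≤ m := hm
        _ ≤ max N₁ m := by exact_mod_cast le_max_right N₁ m
        _ ≤ φ (max N₁ m) := by exact_mod_cast hφ.le_apply
  set n := φ k with hn
  set s : ℝ := ‖y n - x‖ with hs
  have hsge : 2 * (t : ℝ) + 1 ≤ s := le_trans hk2 (hyn n)
  have hspos : (0 : ℝ) < s := by linarith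
  -- the two auxiliary points
  set y' : Fin d → ℝ := x + (2 * (t : ℝ)) • u n with hy'
  set p' : Fin d → ℝ := x + ((2 : ℝ) • z - (2 * (t : ℝ)) • u n) with hp'
  have hy'U : y' ∈ U := by
    have hlam : (0 : ℝ) ≤ 2 * (t : ℝ) / s := by positivity
    have hlam1 : 2 * (t : ℝ) / s ≤ 1 := by
      rw [div_le_one hspos]; linarith
    have heq : y' = (1 - 2 * (t : ℝ) / s) • x + (2 * (t : ℝ) / s) • y n := by
      rw [hy', hu]
      simp only
      rw [smul_smul]
      have : 2 * (t : ℝ) * ‖y n - x‖⁻¹ = 2 * (t : ℝ) / s := by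
        rw [hs]; ring
      rw [this]
      have hd : (2 * (t : ℝ) / s) • (y n - x) = (2 * (t : ℝ) / s) • y n - (2 * (t : ℝ) / s) • x :=
        smul_sub _ _ _
      rw [hd]; module
    rw [heq]
    exact hUconv hxU (hyU n) (by linarith) hlam (by ring)
  have hp'P : p' ∈ P := by
    apply hball
    rw [Metric.mem_ball, dist_eq_norm, hp', add_sub_cancel_left]
    have h1 : (2 : ℝ) • z - (2 * (t : ℝ)) • u n = (2 : ℝ) • (z - (t : ℝ) • u n) := by module
    rw [h1, norm_smul]
    simp only [Real.norm_ofNat]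
    have h2 : ‖z - (t : ℝ) • u n‖ ≤ ‖z - (t : ℝ) • v‖ + (t : ℝ) * ‖v - u n‖ := by
      calc ‖z - (t : ℝ) • u n‖ = ‖(z - (t : ℝ) • v) + (t : ℝ) • (v - u n)‖ := by
            congr 1; module
        _ ≤ ‖z - (t : ℝ) • v‖ + ‖(t : ℝ) • (v - u n)‖ := norm_add_le _ _
        _ = ‖z - (t : ℝ) • v‖ + (t : ℝ) * ‖v - u n‖ := by
            rw [norm_smul, Real.norm_eq_abs, abs_of_pos htpos]
    have h3 : ‖z - (t : ℝ) • v‖ < ε / 4 := by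
      rw [← norm_neg]; simpa [neg_sub] using hztv
    have h4 : (t : ℝ) * ‖v - u n‖ < ε / 8 := by
      have h5 : ‖v - u n‖ < ε / (8 * t) := by rw [← norm_neg, neg_sub]; exact hk1
      calc (t : ℝ) * ‖v - u n‖ < (t : ℝ) * (ε / (8 * t)) :=
            mul_lt_mul_of_pos_left h5 htpos
        _ = ε / 8 := by field_simp
    calc (2 : ℝ) * ‖z - (t : ℝ) • u n‖ ≤ 2 * (‖z - (t : ℝ) • v‖ + (t : ℝ) * ‖v - u n‖) := by
          linarith
      _ < 2 * (ε / 4 + ε / 8) := by linarith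
      _ < ε := by linarith
  -- the contradiction point
  set w : Fin d → ℝ := x + z with hw
  have hwU : w ∈ U := by
    have heq : w = (1 / 2 : ℝ) • p' + (1 / 2 : ℝ) • y' := by
      rw [hw, hp', hy']; module
    rw [heq]
    exact hUconv (hPU hp'P) hy'U (by norm_num) (by norm_num) (by norm_num)
  have hwK : w ∈ (K : Set (Fin d → ℝ)) := by
    rw [hw]
    exact K.add_mem hxK hzK
  have hwP : w ∈ P := hUK w hwU hwK
  have hwball : ‖w‖ ≤ |R| := by
    have := hR hwP
    rw [Metric.mem_closedBall, dist_zero_right] at this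
    exact le_trans this (le_abs_self R)
  have hzlarge : (t : ℝ) - ε / 4 ≤ ‖z‖ := by
    have h1 : ‖(t : ℝ) • v‖ - ‖(t : ℝ) • v - z‖ ≤ ‖z‖ := by
      have := norm_sub_norm_le ((t : ℝ) • v) ((t : ℝ) • v - z)
      simpa using this
    have h2 : ‖(t : ℝ) • v‖ = (t : ℝ) := by
      rw [norm_smul, Real.norm_eq_abs, abs_of_pos htpos, hvnorm, mul_one]
    linarith
  have : (t : ℝ) - ε / 4 - ‖x‖ ≤ ‖w‖ := by
    have h1 : ‖z‖ - ‖x‖ ≤ ‖w‖ := by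
      have := norm_sub_norm_le z (-x)
      rw [hw]
      have h2 : x + z = z - (-x) := by module
      rw [h2]
      simpa using this
    linarith
  linarith
end
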